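/- arXiv:2512.12346 — 6 statements merged into one kernel-verified Lean document; each statement's English description precedes it below -/
import Mathlib

section
/- As formal power series, ∑_{n≥0} q^{3n} (q^{n+1}; q)_∞ [(ω q^{n+1}; q)_∞ + (ω^{-1} q^{n+1}; q)_∞] = 2 − q − 2q² + ∑_{n≥2} (−1)^n χ₃(n−1) q^{T(n)+1}, where ω = e^{2πi/3}, T(n) = n(n+1)/2, and χ₃(k) = 2 if 3 | k and −1 otherwise. -/
open PowerSeries

noncomputable instance : TopologicalSpace (PowerSeries ℂ) :=
  inferInstanceAs (TopologicalSpace ((Unit →₀ ℕ) → ℂ))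

/-- The formal variable `q`. -/
noncomputable def q : PowerSeries ℂ := PowerSeries.X

/-- Finite q-Pochhammer symbol `(a; b)_n = ∏_{i=0}^{n-1} (1 - a bⁱ)`. -/
noncomputable def poch (a b : PowerSeries ℂ) (n : ℕ) : PowerSeries ℂ :=
  ∏ i ∈ Finset.range n, (1 - a * b ^ i)

/-- Infinite q-Pochhammer symbol `(a; b)_∞ = ∏_{i≥0} (1 - a bⁱ)`. -/
noncomputable def pochInf (a b : PowerSeries ℂ) : PowerSeries ℂ :=
  ∏' i : ℕ, (1 - a * b ^ i)

/-- `χ₃(k) = 2` if `3 ∣ k`, and `-1` otherwise. -/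
noncomputable def chi3 (k : ℕ) : ℂ := if 3 ∣ k then 2 else -1

namespace Aux

instance : T2Space (PowerSeries ℂ) := inferInstanceAs (T2Space ((Unit →₀ ℕ) → ℂ))

theorem tendsto_iff_coeff {ι : Type*} {l : Filter ι} {F : ι → PowerSeries ℂ} {L : PowerSeries ℂ} :
    Filter.Tendsto F l (nhds L) ↔
      ∀ d : ℕ, Filter.Tendsto (fun i => coeff d (F i)) l (nhds (coeff d L)) := by
  rw [show (nhds L : Filter (PowerSeries ℂ)) = @nhds ((Unit →₀ ℕ) → ℂ) _ L from rfl]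
  refine Iff.trans (tendsto_pi_nhds (Y := ι) (A := fun _ : Unit →₀ ℕ => ℂ) (f := F) (g := L) (u := l)) ?_
  constructor
  · intro h d
    exact h (Finsupp.single () d)
  · intro h d
    have := h (d ())
    have hd : d = Finsupp.single () (d ()) := Finsupp.unique_single d
    rw [hd]
    exact this

end Aux

namespace Aux2
open Aux Finset

instance : IsTopologicalAddGroup (PowerSeries ℂ) :=
  inferInstanceAs (IsTopologicalAddGroup ((Unit →₀ ℕ) → ℂ))

/-- Lemma A: eventual-constancy HasSum criterion. -/
theorem hasSum_ofOrd (f : ℕ → PowerSeries ℂ) (h : ∀ e n : ℕ, e < n → coeff e (f n) = 0) :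
    HasSum f (PowerSeries.mk fun e => ∑ n ∈ Finset.range (e + 1), coeff e (f n)) := by
  rw [HasSum, tendsto_iff_coeff]
  intro d
  rw [coeff_mk]
  apply Filter.Tendsto.congr' (f₁ := fun _ => ∑ n ∈ Finset.range (d + 1), coeff d (f n))
  · filter_upwards [Filter.eventually_ge_atTop (Finset.range (d + 1))] with s hs
    simp only [map_sum]
    refine Finset.sum_subset hs ?_
    intro n _ hn
    exact h d n (by simpa using hn)
  · exact tendsto_const_nhds

theorem summable_ofOrd {f : ℕ → PowerSeries ℂ} (h : ∀ e n : ℕ, e < n → coeff e (f n) = 0) :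
    Summable f := ⟨_, hasSum_ofOrd f h⟩

theorem coeff_tsum {f : ℕ → PowerSeries ℂ} (h : ∀ e n : ℕ, e < n → coeff e (f n) = 0)
    (e : ℕ) : coeff e (∑' n, f n) = ∑ n ∈ Finset.range (e + 1), coeff e (f n) := by
  rw [(hasSum_ofOrd f h).tsum_eq, coeff_mk]

/-- Continuity of multiplication by a fixed power series. -/
theorem continuous_mulLeft (A : PowerSeries ℂ) : Continuous (fun x : PowerSeries ℂ => A * x) := by
  refine continuous_pi fun d => ?_
  have key : (fun x : PowerSeries ℂ => (A * x) d) =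
      fun x : PowerSeries ℂ => ∑ p ∈ Finset.HasAntidiagonal.antidiagonal (d ()),
        coeff p.1 A * x (Finsupp.single () p.2) := by
    funext x
    have h1 : (A * x) d = coeff (d ()) (A * x) := by
      conv_lhs => rw [Finsupp.unique_single d]
      rfl
    rw [h1, PowerSeries.coeff_mul]
    rfl
  rw [key]
  exact continuous_finset_sum _ fun p _ => continuous_const.mul (continuous_apply (Finsupp.single () p.2))

theorem hasSum_mulLeft {f : ℕ → PowerSeries ℂ} {S : PowerSeries ℂ} (A : PowerSeries ℂ)
    (h : HasSum f S) : HasSum (fun n => A * f n) (A * S) :=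
  h.map (AddMonoidHom.mulLeft A) (continuous_mulLeft A)

/-- Telescoping sums vanish. -/
theorem hasSum_telescope {t : ℕ → PowerSeries ℂ} (h : ∀ e n : ℕ, e < n → coeff e (t n) = 0)
    (h0 : t 0 = 0) : HasSum (fun m => t (m + 1) - t m) 0 := by
  have hu : ∀ e n : ℕ, e < n → coeff e (t (n + 1) - t n) = 0 := by
    intro e n hn
    rw [map_sub, h e (n + 1) (by omega), h e n hn, sub_zero]
  have := hasSum_ofOrd _ hu
  convert this using 1
  ext e
  rw [coeff_mk, map_zero]
  have : ∀ n ∈ Finset.range (e + 1), coeff e (t (n+1) - t n) =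
      coeff e (t (n+1)) - coeff e (t n) := fun n _ => map_sub _ _ _
  rw [Finset.sum_congr rfl this, Finset.sum_range_sub (fun n => coeff e (t n)),
    h e (e + 1) (by omega), h0, map_zero, sub_zero]

end Aux2

namespace Aux3
open Aux Aux2 Finset

/-- `y` agrees with `1` in coefficients `≤ d`. -/
def CongOne (d : ℕ) (y : PowerSeries ℂ) : Prop :=
  ∀ k ≤ d, coeff k y = coeff k (1 : PowerSeries ℂ)

theorem coeff_mul_qpow (b : PowerSeries ℂ) (i k : ℕ) :
    coeff k (b * q ^ i) = if i ≤ k then coeff (k - i) b else 0 :=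
  PowerSeries.coeff_mul_X_pow' b i k

theorem coeff_mul_congOne {d : ℕ} {x y : PowerSeries ℂ} (hy : CongOne d y) :
    coeff d (x * y) = coeff d x := by
  rw [PowerSeries.coeff_mul]
  rw [Finset.sum_eq_single (d, 0)]
  · rw [hy 0 (Nat.zero_le d), PowerSeries.coeff_one, if_pos rfl, mul_one]
  · rintro ⟨i, j⟩ hmem hne
    rw [Finset.HasAntidiagonal.mem_antidiagonal] at hmem
    have hj : j ≠ 0 := by rintro rfl; exact hne (by simp [← hmem])
    have : coeff j y = 0 := by
      rw [hy j (by omega), PowerSeries.coeff_one, if_neg hj]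
    rw [this, mul_zero]
  · intro h
    exact absurd (Finset.HasAntidiagonal.mem_antidiagonal.2 (by omega)) h

theorem congOne_mul {d : ℕ} {x y : PowerSeries ℂ} (hx : CongOne d x) (hy : CongOne d y) :
    CongOne d (x * y) := by
  intro k hk
  have : CongOne k y := fun k' hk' => hy k' (le_trans hk' hk)
  rw [coeff_mul_congOne this, hx k hk]

theorem congOne_one_sub {d i : ℕ} {b : PowerSeries ℂ} (h : ∀ k ≤ d, coeff k (b * q ^ i) = 0) :
    CongOne d (1 - b * q ^ i) := by
  intro k hk
  rw [map_sub, h k hk, sub_zero]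

theorem congOne_prod {d : ℕ} {s : Finset ℕ} {g : ℕ → PowerSeries ℂ}
    (h : ∀ i ∈ s, CongOne d (g i)) : CongOne d (∏ i ∈ s, g i) := by
  induction s using Finset.cons_induction with
  | empty => intro k _; rfl
  | cons i s his ih =>
    rw [Finset.prod_cons]
    exact congOne_mul (h i (Finset.mem_cons_self i s))
      (ih fun j hj => h j (Finset.mem_cons_of_mem hj))

theorem hasProd_pochInf {b : PowerSeries ℂ} (hb : constantCoeff b = 0) :
    HasProd (fun i => 1 - b * q ^ i)
      (PowerSeries.mk fun e => coeff e (poch b q (e + 1))) := by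
  rw [HasProd, tendsto_iff_coeff]
  intro d
  rw [coeff_mk]
  apply Filter.Tendsto.congr' (f₁ := fun _ => coeff d (poch b q (d + 1)))
  · filter_upwards [Filter.eventually_ge_atTop (Finset.range (d + 1))] with s hs
    rw [← Finset.prod_sdiff hs]
    rw [mul_comm]
    rw [coeff_mul_congOne]
    · rfl
    · apply congOne_prod
      intro i hi
      have hid : d ≤ i := by
        rcases Finset.mem_sdiff.1 hi with ⟨-, h2⟩
        simp only [Finset.mem_range] at h2; omega
      apply congOne_one_sub
      intro k hk
      rw [coeff_mul_qpow]
      split_ifs with hik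
      · have : k = i := by omega
        subst this
        simp only [Nat.sub_self]
        rw [PowerSeries.coeff_zero_eq_constantCoeff, hb]
      · rfl
  · exact tendsto_const_nhds

theorem coeff_pochInf {b : PowerSeries ℂ} (hb : constantCoeff b = 0) (e : ℕ) :
    coeff e (pochInf b q) = coeff e (poch b q (e + 1)) := by
  rw [show pochInf b q = PowerSeries.mk fun e => coeff e (poch b q (e + 1)) from
    (hasProd_pochInf hb).tprod_eq, coeff_mk]

theorem coeff_poch_ext {b : PowerSeries ℂ} (hb : constantCoeff b = 0) {e K K' : ℕ}
    (h1 : e ≤ K) (h2 : K ≤ K') : coeff e (poch b q K) = coeff e (poch b q K') := by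
  obtain ⟨t, rfl⟩ := Nat.exists_eq_add_of_le h2
  induction t with
  | zero => rfl
  | succ t ih =>
    have hco : CongOne e (1 - b * q ^ (K + t)) := by
      apply congOne_one_sub
      intro k hk
      rw [coeff_mul_qpow]
      split_ifs with hik
      · have : k = K + t := by omega
        subst this
        simp only [Nat.sub_self]
        rw [PowerSeries.coeff_zero_eq_constantCoeff, hb]
      · rfl
    have hstep : poch b q (K + (t + 1)) = poch b q (K + t) * (1 - b * q ^ (K + t)) :=
      Finset.prod_range_succ _ _
    rw [hstep, coeff_mul_congOne hco, ih (by omega)]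

theorem coeff_pochInf' {b : PowerSeries ℂ} (hb : constantCoeff b = 0) {e K : ℕ} (h : e ≤ K) :
    coeff e (pochInf b q) = coeff e (poch b q K) := by
  rw [coeff_pochInf hb]
  rcases le_total (e + 1) K with h' | h'
  · exact coeff_poch_ext hb (by omega) h'
  · exact (coeff_poch_ext hb h h').symm

theorem coeff_mul_congr {e : ℕ} {x x' y y' : PowerSeries ℂ}
    (hx : ∀ k ≤ e, coeff k x = coeff k x') (hy : ∀ k ≤ e, coeff k y = coeff k y') :
    coeff e (x * y) = coeff e (x' * y') := by
  rw [PowerSeries.coeff_mul, PowerSeries.coeff_mul]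
  apply Finset.sum_congr rfl
  rintro ⟨i, j⟩ hmem
  rw [Finset.HasAntidiagonal.mem_antidiagonal] at hmem
  rw [hx i (by omega), hy j (by omega)]

/-- Peeling the first factor of an infinite Pochhammer product. -/
theorem pochInf_peel {b : PowerSeries ℂ} (hb : constantCoeff b = 0) :
    pochInf b q = (1 - b) * pochInf (b * q) q := by
  have hbq : constantCoeff (b * q) = 0 := by
    rw [map_mul, show constantCoeff q = 0 from PowerSeries.constantCoeff_X, mul_zero]
  ext e
  rw [coeff_pochInf hb]
  rw [coeff_mul_congr (x' := 1 - b) (y' := poch (b * q) q e) (fun k _ => rfl)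
    (fun k hk => coeff_pochInf' hbq (le_trans hk (le_refl e)))]
  congr 1
  have : poch b q (e + 1) = (∏ i ∈ Finset.range e, (1 - b * q ^ (i + 1))) * (1 - b * q ^ 0) :=
    Finset.prod_range_succ' _ _
  rw [this, pow_zero, mul_one, mul_comm]
  congr 1
  apply Finset.prod_congr rfl
  intro i _
  rw [pow_succ]
  ring

end Aux3

namespace Main
open Aux Aux2 Aux3 Finset PowerSeries

/-- Triangular numbers. -/
def Tn (m : ℕ) : ℕ := m * (m + 1) / 2

theorem Tn_succ (m : ℕ) : Tn (m + 1) = Tn m + (m + 1) := by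
  have h : (m + 1) * (m + 1 + 1) = m * (m + 1) + 2 * (m + 1) := by ring
  unfold Tn; omega

theorem Tn_ge (m : ℕ) : m ≤ Tn m := by
  induction m with
  | zero => simp [Tn]
  | succ m ih => rw [Tn_succ]; omega

theorem ccq (n : ℕ) : constantCoeff (q ^ (n + 1)) = 0 := by
  rw [show (q : PowerSeries ℂ) = X from rfl, map_pow, PowerSeries.constantCoeff_X]
  exact zero_pow (Nat.succ_ne_zero n)

theorem ccCq (a : ℂ) (n : ℕ) : constantCoeff (C a * q ^ (n + 1)) = 0 := by
  rw [map_mul, ccq, mul_zero]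

theorem ordq {e K : ℕ} (x : PowerSeries ℂ) (h : e < K) : coeff e (q ^ K * x) = 0 := by
  rw [mul_comm, coeff_mul_qpow, if_neg (by omega)]

/-- `D_n = (q^{n+1};q)_∞ (a q^{n+1};q)_∞`. -/
noncomputable def Dn (a : ℂ) (n : ℕ) : PowerSeries ℂ :=
  pochInf (q ^ (n + 1)) q * pochInf (C a * q ^ (n + 1)) q

noncomputable def fS (a : ℂ) (N n : ℕ) : PowerSeries ℂ := q ^ (N * n) * Dn a n

noncomputable def SN (a : ℂ) (N : ℕ) : PowerSeries ℂ := ∑' n, fS a N n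

noncomputable def fH (a : ℂ) (K m : ℕ) : PowerSeries ℂ :=
  C ((-1) ^ m * a ^ m) * (q ^ (Tn m) * poch (q ^ (m + 1)) q K)

noncomputable def Shat (a : ℂ) (K : ℕ) : PowerSeries ℂ := ∑' m, fH a K m

theorem qpow_succ (n : ℕ) : (q : PowerSeries ℂ) ^ (n + 1) * q = q ^ (n + 2) := by
  rw [← pow_succ]

theorem Drel (a : ℂ) (n : ℕ) :
    Dn a n = ((1 - q ^ (n + 1)) * (1 - C a * q ^ (n + 1))) * Dn a (n + 1) := by
  unfold Dn
  rw [pochInf_peel (ccq n), pochInf_peel (ccCq a n)]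
  rw [qpow_succ, mul_assoc (C a), qpow_succ]
  ring

theorem ordfS (a : ℂ) (N : ℕ) : ∀ e n : ℕ, e < n → coeff e (fS a (N + 1) n) = 0 := by
  intro e n h
  exact ordq _ (by nlinarith)

theorem ordfH (a : ℂ) (K : ℕ) : ∀ e n : ℕ, e < n → coeff e (fH a K n) = 0 := by
  intro e n h
  unfold fH
  rw [PowerSeries.coeff_C_mul, ordq _ (by have := Tn_ge n; omega), mul_zero]

theorem hasSum_fS (a : ℂ) (N : ℕ) : HasSum (fS a (N + 1)) (SN a (N + 1)) :=
  (summable_ofOrd (ordfS a N)).hasSum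

theorem hasSum_fH (a : ℂ) (K : ℕ) : HasSum (fH a K) (Shat a K) :=
  (summable_ofOrd (ordfH a K)).hasSum

/-- Recursion for `S_N`. -/
theorem recS (a : ℂ) (N : ℕ) :
    q ^ (N + 1) * SN a (N + 1) =
      SN a (N + 1) - (1 + C a) * SN a (N + 2) + C a * SN a (N + 3) := by
  set M := N + 1 with hM
  -- telescoping family
  set t : ℕ → PowerSeries ℂ :=
    fun m => q ^ (M * m) * (((1 - q ^ m) * (1 - C a * q ^ m)) * Dn a m) with ht
  have ht0 : t 0 = 0 := by
    simp only [ht, pow_zero, sub_self, zero_mul, mul_zero, mul_one, Nat.mul_zero, one_mul]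
  have hordt : ∀ e n : ℕ, e < n → coeff e (t n) = 0 := by
    intro e n h
    exact ordq _ (by nlinarith)
  have hTel : HasSum (fun m => t (m + 1) - t m) 0 := hasSum_telescope hordt ht0
  -- identity 1 : q^M * fS M m = t (m+1)
  have hid1 : ∀ m, q ^ M * fS a M m = t (m + 1) := by
    intro m
    rw [ht]
    show q ^ M * fS a M m =
      q ^ (M * (m + 1)) * (((1 - q ^ (m + 1)) * (1 - C a * q ^ (m + 1))) * Dn a (m + 1))
    rw [← Drel a m]
    unfold fS
    rw [show M * (m + 1) = M + M * m by ring, pow_add]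
    ring
  -- identity 2 : fS M m - (1+Ca) fS (M+1) m + Ca fS (M+2) m = t m
  have hid2 : ∀ m, fS a M m - (1 + C a) * fS a (M + 1) m + C a * fS a (M + 2) m = t m := by
    intro m
    unfold fS
    rw [ht]
    rw [show (M + 1) * m = M * m + m by ring, show (M + 2) * m = M * m + m + m by ring,
      pow_add, pow_add]
    ring
  have h2 : HasSum (fun m => fS a M m - (1 + C a) * fS a (M + 1) m + C a * fS a (M + 2) m)
      (SN a M - (1 + C a) * SN a (M + 1) + C a * SN a (M + 2)) := by
    exact ((hasSum_fS a N).sub (hasSum_mulLeft _ (hasSum_fS a (N + 1)))).add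
      (hasSum_mulLeft _ (hasSum_fS a (N + 2)))
  have h3 : HasSum (fun m => t (m + 1))
      (SN a M - (1 + C a) * SN a (M + 1) + C a * SN a (M + 2) + 0) :=
    (h2.add hTel).congr_fun fun m => by rw [hid2 m]; ring
  have h1 : HasSum (fun m => t (m + 1)) (q ^ M * SN a M) :=
    (hasSum_mulLeft (q ^ M) (hasSum_fS a N)).congr_fun fun m => (hid1 m).symm
  rw [add_zero] at h3
  exact h1.unique h3

end Main

namespace Main2
open Aux Aux2 Aux3 Main Finset PowerSeries

noncomputable def fT (a : ℂ) (K m : ℕ) : PowerSeries ℂ :=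
  C ((-1) ^ m * a ^ m) * (q ^ (Tn m + K + 1) * ((1 - q ^ m) * poch (q ^ (m + 1)) q K))

theorem pochsucc (b : PowerSeries ℂ) (K : ℕ) :
    poch b q (K + 1) = poch b q K * (1 - b * q ^ K) := Finset.prod_range_succ _ _

theorem pochstep (m K : ℕ) :
    (1 - q ^ (m + 1)) * poch (q ^ (m + 2)) q K = poch (q ^ (m + 1)) q (K + 1) := by
  have h : poch (q ^ (m + 1)) q (K + 1) =
      (∏ i ∈ Finset.range K, (1 - q ^ (m + 1) * q ^ (i + 1))) * (1 - q ^ (m + 1) * q ^ 0) :=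
    Finset.prod_range_succ' _ _
  rw [h, pow_zero, mul_one]
  rw [show (∏ i ∈ Finset.range K, (1 - q ^ (m + 1) * q ^ (i + 1))) = poch (q ^ (m + 2)) q K by
    apply Finset.prod_congr rfl
    intro i _
    rw [pow_succ (q : PowerSeries ℂ) i, show (q : PowerSeries ℂ) ^ (m + 2) = q ^ (m + 1) * q from
      (qpow_succ m).symm]
    ring]
  ring

theorem hidH (a : ℂ) (K m : ℕ) :
    q ^ (K + 1) * fH a K m + (fT a K (m + 1) - fT a K m) =
      fH a K m - (1 + C a) * fH a (K + 1) m + C a * fH a (K + 2) m := by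
  unfold fH fT
  rw [Tn_succ]
  simp only [map_mul, map_pow, map_neg, map_one]
  rw [show poch (q ^ (m + 1 + 1)) q K = poch (q ^ (m + 2)) q K from rfl]
  rw [pochstep m K]
  rw [show K + 2 = (K + 1) + 1 from rfl, pochsucc (q ^ (m+1)) (K+1), pochsucc (q ^ (m+1)) K]
  have e4 : (q : PowerSeries ℂ) ^ (Tn m + (m + 1) + K + 1) = q ^ (Tn m) * (q ^ m * q) * q ^ K * q := by
    rw [show Tn m + (m + 1) + K + 1 = Tn m + ((m + 1) + (K + 1)) by ring, pow_add, pow_add,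
      pow_succ, pow_succ]
    ring
  have e3 : (q : PowerSeries ℂ) ^ (Tn m + K + 1) = q ^ (Tn m) * q ^ K * q := by
    rw [show Tn m + K + 1 = Tn m + (K + 1) by ring, pow_add, pow_succ]
    ring
  have e2 : (q : PowerSeries ℂ) ^ (K + 1) = q ^ K * q := pow_succ q K
  have e1 : (q : PowerSeries ℂ) ^ (m + 1) = q ^ m * q := pow_succ q m
  rw [e4, e3, e2, e1]
  ring

theorem ordfT (a : ℂ) (K : ℕ) : ∀ e n : ℕ, e < n → coeff e (fT a K n) = 0 := by
  intro e n h
  unfold fT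
  rw [PowerSeries.coeff_C_mul, ordq _ (by have := Tn_ge n; omega), mul_zero]

/-- Recursion for `Ŝ`. -/
theorem recH (a : ℂ) (K : ℕ) :
    q ^ (K + 1) * Shat a K =
      Shat a K - (1 + C a) * Shat a (K + 1) + C a * Shat a (K + 2) := by
  have ht0 : fT a K 0 = 0 := by
    unfold fT
    simp only [pow_zero, sub_self, zero_mul, mul_zero]
  have hTel : HasSum (fun m => fT a K (m + 1) - fT a K m) 0 := hasSum_telescope (ordfT a K) ht0
  have hL : HasSum (fun m => q ^ (K + 1) * fH a K m + (fT a K (m + 1) - fT a K m))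
      (q ^ (K + 1) * Shat a K + 0) :=
    (hasSum_mulLeft _ (hasSum_fH a K)).add hTel
  have hR : HasSum (fun m => fH a K m - (1 + C a) * fH a (K + 1) m + C a * fH a (K + 2) m)
      (Shat a K - (1 + C a) * Shat a (K + 1) + C a * Shat a (K + 2)) :=
    ((hasSum_fH a K).sub (hasSum_mulLeft _ (hasSum_fH a (K + 1)))).add
      (hasSum_mulLeft _ (hasSum_fH a (K + 2)))
  have h2 := hL.congr_fun fun m => (hidH a K m).symm
  have := h2.unique hR
  rw [add_zero] at this
  exact this

end Main2

namespace Main3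
open Aux Aux2 Aux3 Main Main2 Finset PowerSeries

noncomputable def Am (m : ℕ) : PowerSeries ℂ := pochInf (q ^ (m + 1)) q

noncomputable def fW (a : ℂ) (j m : ℕ) : PowerSeries ℂ :=
  C ((-1) ^ m * a ^ m) * (q ^ (j * m + Tn m) * Am m)

noncomputable def Wj (a : ℂ) (j : ℕ) : PowerSeries ℂ := ∑' m, fW a j m

noncomputable def DW (a : ℂ) (j : ℕ) : PowerSeries ℂ :=
  pochInf q q * pochInf (C a * q ^ (j + 1)) q

theorem ordfW (a : ℂ) (j : ℕ) : ∀ e n : ℕ, e < n → coeff e (fW a j n) = 0 := by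
  intro e n h
  unfold fW
  rw [PowerSeries.coeff_C_mul, ordq _ (by have := Tn_ge n; omega), mul_zero]

theorem hasSum_fW (a : ℂ) (j : ℕ) : HasSum (fW a j) (Wj a j) :=
  (summable_ofOrd (ordfW a j)).hasSum

theorem Am_peel (m : ℕ) : Am m = (1 - q ^ (m + 1)) * Am (m + 1) := by
  unfold Am
  rw [pochInf_peel (ccq m), qpow_succ]

/-- Functional equation for `W`. -/
theorem W_feq (a : ℂ) (j : ℕ) :
    Wj a j = Wj a (j + 1) - (C a * q ^ (j + 1)) * Wj a (j + 1) := by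
  set X : PowerSeries ℂ := C a * q ^ (j + 1) with hX
  set t : ℕ → PowerSeries ℂ := fun n => match n with
    | 0 => 0
    | k + 1 => X * fW a (j + 1) k with ht
  have hordt : ∀ e n : ℕ, e < n → coeff e (t n) = 0 := by
    intro e n h
    match n, h with
    | k + 1, h =>
      show coeff e (X * fW a (j + 1) k) = 0
      have hz : coeff e (q ^ (j + 1) * fW a (j + 1) k) = 0 := by
        rw [mul_comm, coeff_mul_qpow]
        split_ifs with hle
        · exact ordfW a (j + 1) (e - (j + 1)) k (by omega)
        · rfl
      rw [hX, mul_assoc, PowerSeries.coeff_C_mul, hz, mul_zero]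
  have hTel : HasSum (fun m => t (m + 1) - t m) 0 := hasSum_telescope hordt rfl
  have hid : ∀ m, fW a j m = (fW a (j + 1) m - X * fW a (j + 1) m) + (t (m + 1) - t m) := by
    intro m
    match m with
    | 0 =>
      show fW a j 0 = (fW a (j + 1) 0 - X * fW a (j + 1) 0) + (X * fW a (j + 1) 0 - 0)
      rw [sub_zero]
      have : fW a j 0 = fW a (j + 1) 0 := by
        unfold fW
        rw [Nat.mul_zero, Nat.mul_zero]
      rw [this]; ring
    | m + 1 =>
      show fW a j (m + 1) =
        (fW a (j + 1) (m + 1) - X * fW a (j + 1) (m + 1)) +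
          (X * fW a (j + 1) (m + 1) - X * fW a (j + 1) m)
      have : fW a j (m + 1) = fW a (j + 1) (m + 1) - X * fW a (j + 1) m := by
        unfold fW
        rw [hX]
        simp only [map_mul, map_pow, map_neg, map_one]
        rw [Am_peel m, Tn_succ]
        have e1 : (q : PowerSeries ℂ) ^ (j * (m + 1) + (Tn m + (m + 1))) =
            q ^ (j * m) * q ^ j * q ^ (Tn m) * (q ^ m * q) := by
          rw [show j * (m + 1) + (Tn m + (m + 1)) = j * m + j + Tn m + (m + 1) by ring]
          rw [pow_add, pow_add, pow_add, pow_succ]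
        have e2 : (q : PowerSeries ℂ) ^ ((j + 1) * (m + 1) + (Tn m + (m + 1))) =
            q ^ (j * m) * q ^ j * q ^ (Tn m) * (q ^ m * q) * (q ^ m * q) := by
          rw [show (j + 1) * (m + 1) + (Tn m + (m + 1)) = j * m + j + Tn m + (m + 1) + (m + 1) by
            ring]
          rw [pow_add, pow_add, pow_add, pow_add, pow_succ]
        have e3 : (q : PowerSeries ℂ) ^ ((j + 1) * m + Tn m) =
            q ^ (j * m) * q ^ m * q ^ (Tn m) := by
          rw [show (j + 1) * m + Tn m = j * m + m + Tn m by ring, pow_add, pow_add]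
        have e4 : (q : PowerSeries ℂ) ^ (m + 1) = q ^ m * q := pow_succ q m
        have e5 : (q : PowerSeries ℂ) ^ (j + 1) = q ^ j * q := pow_succ q j
        rw [e1, e2, e3, e4, e5]
        ring
      rw [this]; ring
  have hR : HasSum (fun m => (fW a (j + 1) m - X * fW a (j + 1) m) + (t (m + 1) - t m))
      ((Wj a (j + 1) - X * Wj a (j + 1)) + 0) :=
    ((hasSum_fW a (j + 1)).sub (hasSum_mulLeft X (hasSum_fW a (j + 1)))).add hTel
  have := hR.congr_fun hid
  have h2 := (hasSum_fW a j).unique this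
  rw [add_zero] at h2
  exact h2

theorem DW_feq (a : ℂ) (j : ℕ) :
    DW a j = DW a (j + 1) - (C a * q ^ (j + 1)) * DW a (j + 1) := by
  unfold DW
  rw [pochInf_peel (ccCq a j), mul_assoc (C a), qpow_succ]
  ring

theorem congOne_pochInf_high (c : ℂ) {e J : ℕ} (h : e < J + 1) :
    CongOne e (pochInf (C c * q ^ (J + 1)) q) := by
  intro k hk
  rw [coeff_pochInf (ccCq c J)]
  have : CongOne k (poch (C c * q ^ (J + 1)) q (k + 1)) := by
    apply congOne_prod
    intro i _
    apply congOne_one_sub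
    intro k' hk'
    rw [coeff_mul_qpow]
    split_ifs with hik
    · rw [PowerSeries.coeff_C_mul, show coeff (k' - i) ((q : PowerSeries ℂ) ^ (J + 1)) = 0 by
        rw [show (q : PowerSeries ℂ) = X from rfl, PowerSeries.coeff_X_pow, if_neg (by omega)],
        mul_zero]
    · rfl
  exact this k le_rfl

end Main3

namespace Main4
open Aux Aux2 Aux3 Main Main2 Main3 Finset PowerSeries

theorem coeff_Cq_mul (c : ℂ) (K e : ℕ) (Y : PowerSeries ℂ) :
    coeff e ((C c * q ^ K) * Y) = if K ≤ e then c * coeff (e - K) Y else 0 := by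
  rw [mul_assoc, PowerSeries.coeff_C_mul, mul_comm ((q : PowerSeries ℂ) ^ K) Y,
    coeff_mul_qpow]
  split_ifs with h
  · rfl
  · rw [mul_zero]

theorem DW_base (a : ℂ) {e j : ℕ} (h : e < j + 1) :
    coeff e (DW a j) = coeff e (Wj a j) := by
  have hL : coeff e (DW a j) = coeff e (pochInf q q) :=
    coeff_mul_congOne (congOne_pochInf_high a h)
  have hR : coeff e (Wj a j) = coeff e (pochInf q q) := by
    unfold Wj
    rw [coeff_tsum (ordfW a j)]
    rw [Finset.sum_eq_single 0]
    · unfold fW Am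
      rw [Nat.mul_zero]
      norm_num [Tn]
    · intro n _ h0
      unfold fW
      have hn1 : 1 ≤ n := Nat.one_le_iff_ne_zero.2 h0
      rw [PowerSeries.coeff_C_mul, ordq _ ?_, mul_zero]
      have h1 : j * 1 ≤ j * n := Nat.mul_le_mul_left j hn1
      have := Tn_ge n
      omega
    · intro hmem
      exact absurd (Finset.mem_range.2 (by omega)) hmem
  rw [hL, hR]

theorem euler_coeff (a : ℂ) (e : ℕ) : ∀ j, coeff e (DW a j) = coeff e (Wj a j) := by
  induction e using Nat.strong_induction_on with
  | _ e IH =>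
    have step : ∀ j, coeff e (DW a j) - coeff e (Wj a j) =
        coeff e (DW a (j + 1)) - coeff e (Wj a (j + 1)) := by
      intro j
      have h1 := congrArg (coeff e) (DW_feq a j)
      have h2 := congrArg (coeff e) (W_feq a j)
      rw [map_sub, coeff_Cq_mul] at h1 h2
      split_ifs at h1 h2 with hle
      · rw [h1, h2, IH (e - (j + 1)) (by omega) (j + 1)]
        ring
      · rw [h1, h2]
        ring
    have iter : ∀ k j, coeff e (DW a j) - coeff e (Wj a j) =
        coeff e (DW a (j + k)) - coeff e (Wj a (j + k)) := by
      intro k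
      induction k with
      | zero => intro j; rfl
      | succ k ihk =>
        intro j
        rw [step j, ihk (j + 1), show j + 1 + k = j + (k + 1) by omega]
    intro j
    have h0 := iter (e + 1) j
    rw [DW_base a (show e < (j + (e + 1)) + 1 by omega), sub_self] at h0
    exact sub_eq_zero.1 h0

theorem base_SN_Shat (a : ℂ) {e K : ℕ} (h : e < K + 1) :
    coeff e (SN a (K + 1)) = coeff e (Shat a K) := by
  have hS : coeff e (SN a (K + 1)) = coeff e (Dn a 0) := by
    unfold SN
    rw [coeff_tsum (ordfS a K)]
    rw [Finset.sum_eq_single 0]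
    · unfold fS
      rw [Nat.mul_zero, pow_zero, one_mul]
    · intro n _ h0
      have hn1 : 1 ≤ n := Nat.one_le_iff_ne_zero.2 h0
      unfold fS
      refine ordq _ ?_
      have h1 : (K + 1) * 1 ≤ (K + 1) * n := Nat.mul_le_mul_left (K + 1) hn1
      omega
    · intro hmem
      exact absurd (Finset.mem_range.2 (by omega)) hmem
  have hD : coeff e (Dn a 0) = coeff e (DW a 0) := by
    unfold Dn DW
    norm_num
  have hW : coeff e (Shat a K) = coeff e (Wj a 0) := by
    unfold Shat Wj
    rw [coeff_tsum (ordfH a K), coeff_tsum (ordfW a 0)]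
    apply Finset.sum_congr rfl
    intro n _
    unfold fH fW
    rw [Nat.zero_mul, Nat.zero_add]
    rw [PowerSeries.coeff_C_mul, PowerSeries.coeff_C_mul]
    congr 1
    rw [mul_comm ((q : PowerSeries ℂ) ^ (Tn n)) (poch (q ^ (n + 1)) q K),
      mul_comm ((q : PowerSeries ℂ) ^ (Tn n)) (Am n), coeff_mul_qpow, coeff_mul_qpow]
    split_ifs with hT
    · unfold Am
      exact (coeff_pochInf' (ccq n) (show e - Tn n ≤ K by omega)).symm
    · rfl
  rw [hS, hD, euler_coeff a e 0, ← hW]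

theorem expand_rec {Y Y1 Y2 : PowerSeries ℂ} {a : ℂ} {K e : ℕ} (hKe : K + 1 ≤ e)
    (hyp : q ^ (K + 1) * Y = Y - (1 + C a) * Y1 + C a * Y2) :
    coeff e Y = coeff (e - (K + 1)) Y +
      (coeff e Y1 + a * coeff e Y1) - a * coeff e Y2 := by
  have h := congrArg (coeff e) hyp
  rw [mul_comm, coeff_mul_qpow, if_pos hKe, map_add, map_sub,
    show (1 + C a) * Y1 = Y1 + C a * Y1 by ring, map_add,
    PowerSeries.coeff_C_mul, PowerSeries.coeff_C_mul] at h
  linear_combination -h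

theorem SN_eq_Shat_coeff (a : ℂ) (e : ℕ) : ∀ K, coeff e (SN a (K + 1)) = coeff e (Shat a K) := by
  induction e using Nat.strong_induction_on with
  | _ e IH =>
    have inner : ∀ d K, e < K + 1 + d →
        coeff e (SN a (K + 1)) = coeff e (Shat a K) := by
      intro d
      induction d with
      | zero => intro K h; exact base_SN_Shat a (by omega)
      | succ d ihd =>
        intro K h
        rcases lt_or_ge e (K + 1) with hlt | hge
        · exact base_SN_Shat a hlt
        · have e1 := expand_rec hge (recS a K)
          have e2 := expand_rec hge (recH a K)
          rw [show K + 3 = (K + 2) + 1 from rfl] at e1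
          rw [e1, e2, IH (e - (K + 1)) (by omega) K, ihd (K + 1) (by omega),
            ihd (K + 2) (by omega)]
    intro K
    exact inner (e + 1) K (by omega)

theorem SN_eq_Shat (a : ℂ) (K : ℕ) : SN a (K + 1) = Shat a K := by
  ext e
  exact SN_eq_Shat_coeff a e K

end Main4

namespace Final
open Aux Aux2 Aux3 Main Main2 Main3 Main4 Finset PowerSeries

noncomputable def ω : ℂ := Complex.exp (2 * Real.pi * Complex.I / 3)

theorem hω3 : ω ^ 3 = 1 := by
  rw [ω, ← Complex.exp_nat_mul]
  rw [show ((3 : ℕ) : ℂ) * (2 * Real.pi * Complex.I / 3) = 2 * Real.pi * Complex.I by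
    push_cast; ring]
  exact Complex.exp_two_pi_mul_I

theorem hωne : ω ≠ 1 := by
  intro h
  rw [ω, Complex.exp_eq_one_iff] at h
  obtain ⟨n, hn⟩ := h
  have hπ : (Real.pi : ℝ) ≠ 0 := Real.pi_ne_zero
  have h2 : (2 * (Real.pi : ℂ) * Complex.I : ℂ) ≠ 0 :=
    mul_ne_zero (mul_ne_zero two_ne_zero (Complex.ofReal_ne_zero.2 hπ)) Complex.I_ne_zero
  have e : (2 * (Real.pi : ℂ) * Complex.I) * 1 = (2 * (Real.pi : ℂ) * Complex.I) * (3 * n) := by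
    linear_combination (3 : ℂ) * hn
  have h3 : (1 : ℂ) = 3 * n := mul_left_cancel₀ h2 e
  have h4 : ((1 : ℤ) : ℂ) = ((3 * n : ℤ) : ℂ) := by push_cast; linear_combination h3
  have h5 : (1 : ℤ) = 3 * n := Int.cast_injective h4
  omega

theorem hsum : 1 + ω + ω ^ 2 = 0 := by
  have hfac : (ω - 1) * (1 + ω + ω ^ 2) = ω ^ 3 - 1 := by ring
  have h0 : (ω - 1) * (1 + ω + ω ^ 2) = 0 := by rw [hfac, hω3, sub_self]
  rcases mul_eq_zero.1 h0 with h1 | h2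
  · exact absurd (sub_eq_zero.1 h1) hωne
  · exact h2

theorem chi3key (m : ℕ) : ω ^ m + (ω⁻¹) ^ m = chi3 m := by
  have hinv : ω⁻¹ = ω ^ 2 :=
    inv_eq_of_mul_eq_one_right (by rw [← pow_succ']; exact hω3)
  have hm : ∀ k : ℕ, ω ^ k = ω ^ (k % 3) := by
    intro k
    conv_lhs => rw [← Nat.div_add_mod k 3]
    rw [pow_add, pow_mul, hω3, one_pow, one_mul]
  have hdvd : (3 ∣ m) ↔ m % 3 = 0 := by omega
  rw [inv_pow, hm m]
  unfold chi3
  have h3 : m % 3 = 0 ∨ m % 3 = 1 ∨ m % 3 = 2 := by omega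
  rcases h3 with h | h | h
  · rw [h, if_pos (hdvd.2 h)]
    norm_num
  · rw [h, if_neg (fun hd => by omega), pow_one]
    rw [show ω⁻¹ = ω ^ 2 from hinv]
    linear_combination hsum
  · rw [h, if_neg (fun hd => by omega)]
    have : (ω ^ 2)⁻¹ = ω := inv_eq_of_mul_eq_one_right (by rw [← pow_succ]; exact hω3)
    rw [this]
    linear_combination hsum

theorem chi3_rec (m : ℕ) : chi3 (m + 2) + chi3 (m + 1) + chi3 m = 0 := by
  unfold chi3
  have h3 : m % 3 = 0 ∨ m % 3 = 1 ∨ m % 3 = 2 := by omega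
  rcases h3 with h | h | h <;>
    [ (rw [if_pos (by omega : (3:ℕ) ∣ m), if_neg (by omega : ¬ (3:ℕ) ∣ m + 1),
        if_neg (by omega : ¬ (3:ℕ) ∣ m + 2)]);
      (rw [if_neg (by omega : ¬ (3:ℕ) ∣ m), if_neg (by omega : ¬ (3:ℕ) ∣ m + 1),
        if_pos (by omega : (3:ℕ) ∣ m + 2)]);
      (rw [if_neg (by omega : ¬ (3:ℕ) ∣ m), if_pos (by omega : (3:ℕ) ∣ m + 1),
        if_neg (by omega : ¬ (3:ℕ) ∣ m + 2)])] <;> ring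

noncomputable def dd (m : ℕ) : ℂ := (-1) ^ m * chi3 m

noncomputable def fM (c : ℕ → ℂ) (E : ℕ → ℕ) (m : ℕ) : PowerSeries ℂ := C (c m) * q ^ (E m)

theorem ordM (c : ℕ → ℂ) (E : ℕ → ℕ) (hE : ∀ n, n ≤ E n) :
    ∀ e n : ℕ, e < n → coeff e (fM c E n) = 0 := by
  intro e n h
  unfold fM
  rw [PowerSeries.coeff_C_mul, show (q : PowerSeries ℂ) = X from rfl, PowerSeries.coeff_X_pow,
    if_neg (by have := hE n; omega), mul_zero]

noncomputable def E1 : ℕ → ℕ := fun m => Tn m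
noncomputable def E2 : ℕ → ℕ := fun m => Tn (m + 1)
noncomputable def E3 : ℕ → ℕ := fun m => Tn (m + 1) + 1
noncomputable def E4 : ℕ → ℕ := fun m => Tn (m + 2)

theorem hE1 : ∀ n, n ≤ E1 n := fun n => Tn_ge n
theorem hE2 : ∀ n, n ≤ E2 n := fun n => by
  unfold E2; rw [Tn_succ]; have := Tn_ge n; omega
theorem hE3 : ∀ n, n ≤ E3 n := fun n => by
  unfold E3; rw [Tn_succ]; have := Tn_ge n; omega
theorem hE4 : ∀ n, n ≤ E4 n := fun n => by
  unfold E4; rw [show n + 2 = (n + 1) + 1 from rfl, Tn_succ, Tn_succ]; have := Tn_ge n; omega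

noncomputable def Θ1 : PowerSeries ℂ := ∑' m, fM dd E1 m
noncomputable def Θ2 : PowerSeries ℂ := ∑' m, fM dd E2 m
noncomputable def Θ3 : PowerSeries ℂ := ∑' m, fM dd E3 m
noncomputable def Θ4 : PowerSeries ℂ := ∑' m, fM dd E4 m

theorem hasSum_M1 : HasSum (fM dd E1) Θ1 := (summable_ofOrd (ordM dd E1 hE1)).hasSum
theorem hasSum_M2 : HasSum (fM dd E2) Θ2 := (summable_ofOrd (ordM dd E2 hE2)).hasSum
theorem hasSum_M3 : HasSum (fM dd E3) Θ3 := (summable_ofOrd (ordM dd E3 hE3)).hasSum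
theorem hasSum_M4 : HasSum (fM dd E4) Θ4 := (summable_ofOrd (ordM dd E4 hE4)).hasSum

theorem poch_two (b : PowerSeries ℂ) : poch b q 2 = (1 - b) * (1 - b * q) := by
  unfold poch
  rw [Finset.prod_range_succ, Finset.prod_range_one, pow_zero, mul_one, pow_one]

/-- Per-term expansion of the combined `fH` terms. -/
theorem termwise (m : ℕ) :
    fH ω 2 m + fH ω⁻¹ 2 m = fM dd E1 m - fM dd E2 m - fM dd E3 m + fM dd E4 m := by
  have hsum2 : C ((-1) ^ m * ω ^ m) + C ((-1) ^ m * (ω⁻¹) ^ m) =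
      C ((-1) ^ m * chi3 m) := by
    rw [← map_add]
    congr 1
    rw [← chi3key m]
    ring
  have hexp : fH ω 2 m + fH ω⁻¹ 2 m =
      C ((-1) ^ m * chi3 m) * (q ^ (Tn m) * poch (q ^ (m + 1)) q 2) := by
    unfold fH
    rw [← hsum2]
    ring
  rw [hexp]
  unfold fM dd E1 E2 E3 E4
  rw [poch_two]
  rw [show m + 2 = (m + 1) + 1 from rfl, Tn_succ (m + 1), Tn_succ m]
  have ea : (q : PowerSeries ℂ) ^ (Tn m + (m + 1)) = q ^ (Tn m) * q ^ (m + 1) := pow_add _ _ _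
  have eb : (q : PowerSeries ℂ) ^ (Tn m + (m + 1) + 1) = q ^ (Tn m) * q ^ (m + 1) * q := by
    rw [pow_succ, ea]
  have ec : (q : PowerSeries ℂ) ^ (Tn m + (m + 1) + (m + 1 + 1)) =
      q ^ (Tn m) * q ^ (m + 1) * (q ^ (m + 1) * q) := by
    rw [pow_add, pow_add, pow_succ (q : PowerSeries ℂ) (m + 1)]
  rw [ea, eb, ec]
  ring

theorem combined_eq : Shat ω 2 + Shat ω⁻¹ 2 = Θ1 - Θ2 - Θ3 + Θ4 := by
  have hL : HasSum (fun m => fH ω 2 m + fH ω⁻¹ 2 m) (Shat ω 2 + Shat ω⁻¹ 2) :=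
    (hasSum_fH ω 2).add (hasSum_fH ω⁻¹ 2)
  have hR : HasSum (fun m => fM dd E1 m - fM dd E2 m - fM dd E3 m + fM dd E4 m)
      (Θ1 - Θ2 - Θ3 + Θ4) := ((hasSum_M1.sub hasSum_M2).sub hasSum_M3).add hasSum_M4
  exact hL.unique (hR.congr_fun termwise)

theorem chi3_0 : chi3 0 = 2 := by unfold chi3; norm_num
theorem chi3_1 : chi3 1 = -1 := by unfold chi3; norm_num

theorem theta_part1 : Θ1 - Θ2 + Θ4 = 2 - q := by
  have t2 : HasSum (fun m => fM dd E1 (m + 2)) (Θ1 - (fM dd E1 0 + fM dd E1 1)) := by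
    apply (hasSum_nat_add_iff (f := fM dd E1) 2).2
    rw [show (∑ i ∈ Finset.range 2, fM dd E1 i) = fM dd E1 0 + fM dd E1 1 by
      rw [Finset.sum_range_succ, Finset.sum_range_one]]
    rw [sub_add_cancel]
    exact hasSum_M1
  have t1 : HasSum (fun m => fM dd E2 (m + 1)) (Θ2 - fM dd E2 0) := by
    apply (hasSum_nat_add_iff (f := fM dd E2) 1).2
    rw [Finset.sum_range_one, sub_add_cancel]
    exact hasSum_M2
  have hcomb : HasSum (fun m => fM dd E1 (m + 2) - fM dd E2 (m + 1) + fM dd E4 m)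
      ((Θ1 - (fM dd E1 0 + fM dd E1 1)) - (Θ2 - fM dd E2 0) + Θ4) :=
    (t2.sub t1).add hasSum_M4
  have hzero : ∀ m : ℕ, fM dd E1 (m + 2) - fM dd E2 (m + 1) + fM dd E4 m = 0 := by
    intro m
    unfold fM dd E1 E2 E4
    have hch := chi3_rec m
    have hc : ((-1:ℂ)) ^ (m + 2) * chi3 (m + 2) - (-1) ^ (m + 1) * chi3 (m + 1) +
        (-1) ^ m * chi3 m = 0 := by
      have e1 : ((-1:ℂ)) ^ (m + 2) = (-1) ^ m := by rw [pow_add]; norm_num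
      have e2 : ((-1:ℂ)) ^ (m + 1) = -(-1) ^ m := by rw [pow_succ]; ring
      rw [e1, e2]
      linear_combination ((-1:ℂ)) ^ m * hch
    rw [show Tn (m + 1 + 1) = Tn (m + 2) from rfl]
    calc C ((-1) ^ (m+2) * chi3 (m+2)) * q ^ (Tn (m+2)) -
          C ((-1) ^ (m+1) * chi3 (m+1)) * q ^ (Tn (m+2)) +
          C ((-1) ^ m * chi3 m) * q ^ (Tn (m+2)) =
        C ((-1) ^ (m+2) * chi3 (m+2) - (-1) ^ (m+1) * chi3 (m+1) + (-1) ^ m * chi3 m) *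
          q ^ (Tn (m+2)) := by
          rw [map_add, map_sub]
          ring
      _ = 0 := by rw [hc, map_zero, zero_mul]
  have h0 : HasSum (fun _ : ℕ => (0 : PowerSeries ℂ)) 0 := hasSum_zero
  have h' : HasSum (fun m => fM dd E1 (m + 2) - fM dd E2 (m + 1) + fM dd E4 m) 0 :=
    h0.congr_fun hzero
  have hX := hcomb.unique h'
  have hdd0 : dd 0 = 2 := by unfold dd; rw [chi3_0]; norm_num
  have hdd1 : dd 1 = 1 := by unfold dd; rw [chi3_1]; norm_num
  have hf10 : fM dd E1 0 = 2 := by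
    unfold fM E1
    rw [hdd0, show Tn 0 = 0 from rfl, pow_zero, mul_one]
    exact map_ofNat _ 2
  have hf11 : fM dd E1 1 = q := by
    unfold fM E1
    rw [hdd1, show Tn 1 = 1 from rfl, pow_one, map_one, one_mul]
  have hf20 : fM dd E2 0 = 2 * q := by
    unfold fM E2
    rw [hdd0, show Tn (0 + 1) = 1 from rfl, pow_one,
      show C (2 : ℂ) = (2 : PowerSeries ℂ) from map_ofNat _ 2]
  rw [hf10, hf11, hf20] at hX
  linear_combination hX

end Final

open Aux Aux2 Aux3 Main Main2 Main3 Main4 Final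

/-- Theorem 1.5: `ε₃(q) = ∑_{n≥0} q^{3n}(q^{n+1};q)_∞ [(ωq^{n+1};q)_∞ + (ω⁻¹q^{n+1};q)_∞]
= 2 - q - 2q² + ∑_{n≥2} (-1)ⁿ χ₃(n-1) q^{n(n+1)/2 + 1}` (summing over `n = k + 2`). -/
theorem eps3_eval :
    (∑' n : ℕ, q ^ (3 * n) * pochInf (q ^ (n + 1)) q *
      (pochInf (PowerSeries.C (R := ℂ) (Complex.exp (2 * Real.pi * Complex.I / 3)) * q ^ (n + 1)) q +
       pochInf (PowerSeries.C (R := ℂ) (Complex.exp (2 * Real.pi * Complex.I / 3))⁻¹ * q ^ (n + 1)) q)) =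
    2 - q - 2 * q ^ 2 +
      ∑' k : ℕ, (-1 : PowerSeries ℂ) ^ (k + 2) * PowerSeries.C (R := ℂ) (chi3 (k + 1)) *
        q ^ ((k + 2) * (k + 3) / 2 + 1) := by
  have hωdef : Complex.exp (2 * Real.pi * Complex.I / 3) = Final.ω := rfl
  rw [hωdef]
  -- LHS as a sum of two `SN`'s
  have hS1 : HasSum (fS Final.ω 3) (SN Final.ω 3) := hasSum_fS Final.ω 2
  have hS2 : HasSum (fS (Final.ω)⁻¹ 3) (SN (Final.ω)⁻¹ 3) := hasSum_fS (Final.ω)⁻¹ 2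
  have hL : HasSum (fun n : ℕ => q ^ (3 * n) * pochInf (q ^ (n + 1)) q *
      (pochInf (C Final.ω * q ^ (n + 1)) q + pochInf (C (Final.ω)⁻¹ * q ^ (n + 1)) q))
      (SN Final.ω 3 + SN (Final.ω)⁻¹ 3) :=
    (hS1.add hS2).congr_fun fun n => by unfold fS Dn; ring
  rw [hL.tsum_eq]
  -- RHS theta series
  have hdd0 : dd 0 = 2 := by unfold dd; rw [chi3_0]; norm_num
  have t1 : HasSum (fun k => fM dd E3 (k + 1)) (Θ3 - fM dd E3 0) := by
    apply (hasSum_nat_add_iff (f := fM dd E3) 1).2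
    rw [Finset.sum_range_one, sub_add_cancel]
    exact hasSum_M3
  have hR : HasSum (fun k : ℕ => (-1 : PowerSeries ℂ) ^ (k + 2) * C (chi3 (k + 1)) *
      q ^ ((k + 2) * (k + 3) / 2 + 1)) (-(Θ3 - fM dd E3 0)) := by
    refine t1.neg.congr_fun fun k => ?_
    have hc : (C ((-1 : ℂ) ^ (k + 2))) * C (chi3 (k + 1)) = -C (dd (k + 1)) := by
      rw [← map_mul, ← map_neg]
      congr 1
      unfold dd
      ring
    rw [show (-1 : PowerSeries ℂ) ^ (k + 2) = C ((-1 : ℂ) ^ (k + 2)) by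
      rw [map_pow, map_neg, map_one]]
    rw [hc]
    unfold fM E3
    rw [show (k + 2) * (k + 3) / 2 + 1 = Tn (k + 1 + 1) + 1 from rfl]
    ring
  rw [hR.tsum_eq]
  -- final algebra
  have h1 : SN Final.ω 3 = Shat Final.ω 2 := SN_eq_Shat Final.ω 2
  have h2 : SN (Final.ω)⁻¹ 3 = Shat (Final.ω)⁻¹ 2 := SN_eq_Shat (Final.ω)⁻¹ 2
  have hf30 : fM dd E3 0 = 2 * q ^ 2 := by
    unfold fM E3
    rw [hdd0, show Tn (0 + 1) + 1 = 2 from rfl,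
      show C (2 : ℂ) = (2 : PowerSeries ℂ) from map_ofNat _ 2]
  rw [h1, h2, combined_eq, hf30]
  linear_combination theta_part1
end

section
/- For all integers m ≥ 2 and N ≥ 1, the finite q-series identity holds: 1 + ∑_{n=1}^{N} ∑_{j=1}^{m-1} q^{mn−j} / [ (∏_{r=1}^{m−j} (q^r; q^m)_n) · (∏_{r=m−j+1}^{m−1} (q^r; q^m)_{n−1}) ] = (q^m; q^m)_N / (q; q)_{mN}. -/
open PowerSeries

namespace FGAux

noncomputable def φ : PowerSeries ℂ →+* LaurentSeries ℂ := HahnSeries.ofPowerSeries ℤ ℂ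

lemma φ_inj : Function.Injective φ := HahnSeries.ofPowerSeries_injective

noncomputable def Q : LaurentSeries ℂ := φ PowerSeries.X

lemma φ_q : φ q = Q := rfl

lemma one_sub_Q_pow_ne {s : ℕ} (hs : 1 ≤ s) : (1 : LaurentSeries ℂ) - Q ^ s ≠ 0 := by
  have h : (1 : PowerSeries ℂ) - PowerSeries.X ^ s ≠ 0 := by
    intro h
    have := congrArg (PowerSeries.constantCoeff : PowerSeries ℂ →+* ℂ) h
    simp [zero_pow (by omega : s ≠ 0)] at this
  have he : (1 : LaurentSeries ℂ) - Q ^ s = φ (1 - PowerSeries.X ^ s) := by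
    simp [Q, map_sub, map_pow]
  rw [he]
  intro hc
  exact h (φ_inj (by simpa using hc))

noncomputable def B (m r n : ℕ) : LaurentSeries ℂ :=
  ∏ i ∈ Finset.range n, (1 - Q ^ (r + m * i))

lemma B_ne (m r n : ℕ) (hr : 1 ≤ r) : B m r n ≠ 0 :=
  Finset.prod_ne_zero_iff.mpr fun _ _ => one_sub_Q_pow_ne (by omega)

lemma B_succ (m r n : ℕ) : B m r (n + 1) = B m r n * (1 - Q ^ (r + m * n)) :=
  Finset.prod_range_succ _ _

lemma φ_poch (m r n : ℕ) : φ (poch (q ^ r) (q ^ m) n) = B m r n := by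
  unfold poch B
  rw [map_prod]
  refine Finset.prod_congr rfl fun i _ => ?_
  rw [map_sub, map_one, map_mul, map_pow, map_pow, map_pow, φ_q, ← pow_mul, ← pow_add]

lemma c_poch (m r n : ℕ) (hr : 1 ≤ r) :
    PowerSeries.constantCoeff (poch (q ^ r) (q ^ m) n) = 1 := by
  unfold poch q
  rw [map_prod]
  refine Finset.prod_eq_one fun i _ => ?_
  simp [zero_pow (by omega : r ≠ 0)]

lemma φ_inv (f : PowerSeries ℂ) (hf : PowerSeries.constantCoeff f ≠ 0) :
    φ f⁻¹ = (φ f)⁻¹ := by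
  refine eq_inv_of_mul_eq_one_left ?_
  rw [← map_mul, mul_comm, PowerSeries.mul_inv_cancel _ hf, map_one]

lemma φ_poch_inv (m r n : ℕ) (hr : 1 ≤ r) :
    φ ((poch (q ^ r) (q ^ m) n)⁻¹) = (B m r n)⁻¹ := by
  rw [φ_inv _ (by rw [c_poch m r n hr]; exact one_ne_zero), φ_poch]

lemma φ_prod_poch_inv (m n : ℕ) (s : Finset ℕ) (hs : ∀ r ∈ s, 1 ≤ r) :
    φ ((∏ r ∈ s, poch (q ^ r) (q ^ m) n)⁻¹) = (∏ r ∈ s, B m r n)⁻¹ := by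
  have hc : PowerSeries.constantCoeff (∏ r ∈ s, poch (q ^ r) (q ^ m) n) = 1 := by
    rw [map_prod]
    exact Finset.prod_eq_one fun r hr => c_poch m r n (hs r hr)
  rw [φ_inv _ (by rw [hc]; exact one_ne_zero), map_prod]
  congr 1
  exact Finset.prod_congr rfl fun r _ => φ_poch m r n

/-- Telescoping lemma in a field. -/
lemma telescope {K : Type*} [Field K] (x : ℕ → K) (hx : ∀ i, 1 ≤ i → 1 - x i ≠ 0) (M : ℕ) :
    ∑ k ∈ Finset.Icc 1 M, x k * (∏ r ∈ Finset.Icc 1 k, (1 - x r))⁻¹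
      = (∏ r ∈ Finset.Icc 1 M, (1 - x r))⁻¹ - 1 := by
  induction M with
  | zero => simp
  | succ M ih =>
    rw [Finset.sum_Icc_succ_top (by omega), ih, Finset.prod_Icc_succ_top (by omega)]
    have hP : (∏ r ∈ Finset.Icc 1 M, (1 - x r)) ≠ 0 :=
      Finset.prod_ne_zero_iff.mpr fun i hi => hx i (Finset.mem_Icc.mp hi).1
    have h1 : 1 - x (M + 1) ≠ 0 := hx (M + 1) (by omega)
    field_simp
    ring

noncomputable def A (m n : ℕ) : LaurentSeries ℂ := (∏ r ∈ Finset.Icc 1 (m - 1), B m r n)⁻¹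

lemma prod_Icc_split {K : Type*} [CommMonoid K] (f : ℕ → K) (m : ℕ) (hm : 1 ≤ m) :
    ∏ r ∈ Finset.Icc 1 m, f r = (∏ r ∈ Finset.Icc 1 (m - 1), f r) * f m := by
  obtain ⟨m', rfl⟩ : ∃ m', m = m' + 1 := ⟨m - 1, by omega⟩
  rw [Finset.prod_Icc_succ_top (by omega)]
  simp

lemma prod_Icc_consec {K : Type*} [CommMonoid K] (f : ℕ → K) {a b : ℕ} (hab : a ≤ b) :
    (∏ r ∈ Finset.Icc 1 a, f r) * ∏ r ∈ Finset.Icc (a + 1) b, f r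
      = ∏ r ∈ Finset.Icc 1 b, f r := by
  have h1 : Finset.Icc 1 a = Finset.Ioc 0 a := by ext x; simp [Finset.mem_Icc, Finset.mem_Ioc]; omega
  have h2 : Finset.Icc (a + 1) b = Finset.Ioc a b := by ext x; simp [Finset.mem_Icc, Finset.mem_Ioc]
  have h3 : Finset.Icc 1 b = Finset.Ioc 0 b := by ext x; simp [Finset.mem_Icc, Finset.mem_Ioc]; omega
  rw [h1, h2, h3]
  exact Finset.prod_Ioc_consecutive f (Nat.zero_le a) hab

lemma A_succ (m : ℕ) (hm : 2 ≤ m) (N : ℕ) :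
    A m (N + 1) = A m N * (∏ r ∈ Finset.Icc 1 (m - 1), (1 - Q ^ (r + m * N)))⁻¹ := by
  unfold A
  rw [show (∏ r ∈ Finset.Icc 1 (m - 1), B m r (N + 1))
        = (∏ r ∈ Finset.Icc 1 (m - 1), B m r N)
          * ∏ r ∈ Finset.Icc 1 (m - 1), (1 - Q ^ (r + m * N)) by
      rw [← Finset.prod_mul_distrib]
      exact Finset.prod_congr rfl fun r _ => B_succ m r N]
  rw [mul_inv]

lemma inner_sum (m : ℕ) (hm : 2 ≤ m) (N : ℕ) :
    ∑ j ∈ Finset.Icc 1 (m - 1),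
        Q ^ (m * (N + 1) - j) * (∏ r ∈ Finset.Icc 1 (m - j), B m r (N + 1))⁻¹ *
          (∏ r ∈ Finset.Icc (m - j + 1) (m - 1), B m r N)⁻¹
      = A m N * (∏ r ∈ Finset.Icc 1 (m - 1), (1 - Q ^ (r + m * N)))⁻¹ - A m N := by
  have hstep : ∀ j ∈ Finset.Icc 1 (m - 1),
      Q ^ (m * (N + 1) - j) * (∏ r ∈ Finset.Icc 1 (m - j), B m r (N + 1))⁻¹ *
          (∏ r ∈ Finset.Icc (m - j + 1) (m - 1), B m r N)⁻¹
        = A m N * (Q ^ ((m - j) + m * N)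
            * (∏ r ∈ Finset.Icc 1 (m - j), (1 - Q ^ (r + m * N)))⁻¹) := by
    intro j hj
    obtain ⟨hj1, hj2⟩ := Finset.mem_Icc.mp hj
    have e1 : ∏ r ∈ Finset.Icc 1 (m - j), B m r (N + 1)
        = (∏ r ∈ Finset.Icc 1 (m - j), B m r N)
          * ∏ r ∈ Finset.Icc 1 (m - j), (1 - Q ^ (r + m * N)) := by
      rw [← Finset.prod_mul_distrib]
      exact Finset.prod_congr rfl fun r _ => B_succ m r N
    have e2 : (∏ r ∈ Finset.Icc 1 (m - j), B m r N)
          * ∏ r ∈ Finset.Icc (m - j + 1) (m - 1), B m r N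
        = ∏ r ∈ Finset.Icc 1 (m - 1), B m r N :=
      prod_Icc_consec _ (by omega)
    have e3 : m * (N + 1) - j = (m - j) + m * N := by
      have hmn : m * (N + 1) = m * N + m := by ring
      omega
    rw [e1, e3, mul_inv, A, ← e2, mul_inv]
    ring
  rw [Finset.sum_congr rfl hstep, ← Finset.mul_sum]
  have hre : ∑ j ∈ Finset.Icc 1 (m - 1),
      Q ^ ((m - j) + m * N) * (∏ r ∈ Finset.Icc 1 (m - j), (1 - Q ^ (r + m * N)))⁻¹
        = ∑ k ∈ Finset.Icc 1 (m - 1),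
      Q ^ (k + m * N) * (∏ r ∈ Finset.Icc 1 k, (1 - Q ^ (r + m * N)))⁻¹ := by
    refine Finset.sum_nbij' (fun j => m - j) (fun k => m - k) ?_ ?_ ?_ ?_ ?_
    · intro a ha; rw [Finset.mem_Icc] at *; omega
    · intro a ha; rw [Finset.mem_Icc] at *; omega
    · intro a ha; rw [Finset.mem_Icc] at ha; omega
    · intro a ha; rw [Finset.mem_Icc] at ha; omega
    · intro a ha; rfl
  rw [hre, telescope (fun i => Q ^ (i + m * N)) (fun i hi => one_sub_Q_pow_ne (by omega)) (m - 1)]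
  ring

lemma key (m : ℕ) (hm : 2 ≤ m) (N : ℕ) :
    1 + ∑ n ∈ Finset.Icc 1 N, ∑ j ∈ Finset.Icc 1 (m - 1),
        Q ^ (m * n - j) * (∏ r ∈ Finset.Icc 1 (m - j), B m r n)⁻¹ *
          (∏ r ∈ Finset.Icc (m - j + 1) (m - 1), B m r (n - 1))⁻¹ = A m N := by
  induction N with
  | zero => simp [A, B]
  | succ N ih =>
    rw [Finset.sum_Icc_succ_top (by omega), ← add_assoc, ih]
    have : ∑ j ∈ Finset.Icc 1 (m - 1),
        Q ^ (m * (N + 1) - j) * (∏ r ∈ Finset.Icc 1 (m - j), B m r (N + 1))⁻¹ *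
          (∏ r ∈ Finset.Icc (m - j + 1) (m - 1), B m r (N + 1 - 1))⁻¹
        = A m N * (∏ r ∈ Finset.Icc 1 (m - 1), (1 - Q ^ (r + m * N)))⁻¹ - A m N := by
      simpa using inner_sum m hm N
    rw [this, A_succ m hm N]
    ring

lemma F2 (m : ℕ) (hm : 1 ≤ m) (N : ℕ) :
    B 1 1 (m * N) = ∏ r ∈ Finset.Icc 1 m, B m r N := by
  induction N with
  | zero => simp [B]
  | succ N ih =>
    have h1 : m * (N + 1) = m * N + m := by ring
    have hsplit : B 1 1 (m * N + m)
        = B 1 1 (m * N) * ∏ i ∈ Finset.range m, (1 - Q ^ (1 + 1 * (m * N + i))) := by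
      unfold B; rw [Finset.prod_range_add]
    rw [h1, hsplit, ih]
    rw [show (∏ r ∈ Finset.Icc 1 m, B m r (N + 1))
        = (∏ r ∈ Finset.Icc 1 m, B m r N) * ∏ r ∈ Finset.Icc 1 m, (1 - Q ^ (r + m * N)) by
      rw [← Finset.prod_mul_distrib]
      exact Finset.prod_congr rfl fun r _ => B_succ m r N]
    congr 1
    rw [show Finset.Icc 1 m = Finset.Ico 1 (m + 1) by ext x; simp only [Finset.mem_Icc, Finset.mem_Ico]; omega,
      Finset.prod_Ico_eq_prod_range]
    simp only [Nat.add_sub_cancel]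
    exact Finset.prod_congr rfl fun i _ => by
      rw [show 1 + 1 * (m * N + i) = 1 + i + m * N by omega]

lemma rhs_eq (m : ℕ) (hm : 2 ≤ m) (N : ℕ) :
    B m m N * (B 1 1 (m * N))⁻¹ = A m N := by
  rw [F2 m (by omega) N, prod_Icc_split (fun r => B m r N) m (by omega), mul_inv]
  have hBm : B m m N ≠ 0 := B_ne m m N (by omega)
  rw [A, mul_comm ((∏ r ∈ Finset.Icc 1 (m - 1), B m r N)⁻¹), ← mul_assoc,
    mul_inv_cancel₀ hBm, one_mul]

end FGAux

open FGAux in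
/-- Theorem 1.9: the finite q-series identity
`1 + ∑_{n=1}^{N} ∑_{j=1}^{m-1} q^{mn-j} / [(∏_{r=1}^{m-j}(q^r;q^m)_n)(∏_{r=m-j+1}^{m-1}(q^r;q^m)_{n-1})]
= (q^m;q^m)_N / (q;q)_{mN}`. -/
theorem finite_glaisher_series (m N : ℕ) (hm : 2 ≤ m) (hN : 1 ≤ N) :
    1 + ∑ n ∈ Finset.Icc 1 N, ∑ j ∈ Finset.Icc 1 (m - 1),
        q ^ (m * n - j) *
          (∏ r ∈ Finset.Icc 1 (m - j), poch (q ^ r) (q ^ m) n)⁻¹ *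
          (∏ r ∈ Finset.Icc (m - j + 1) (m - 1), poch (q ^ r) (q ^ m) (n - 1))⁻¹ =
      poch (q ^ m) (q ^ m) N * (poch q q (m * N))⁻¹ := by
  apply φ_inj
  have hL : φ (1 + ∑ n ∈ Finset.Icc 1 N, ∑ j ∈ Finset.Icc 1 (m - 1),
        q ^ (m * n - j) *
          (∏ r ∈ Finset.Icc 1 (m - j), poch (q ^ r) (q ^ m) n)⁻¹ *
          (∏ r ∈ Finset.Icc (m - j + 1) (m - 1), poch (q ^ r) (q ^ m) (n - 1))⁻¹)
      = 1 + ∑ n ∈ Finset.Icc 1 N, ∑ j ∈ Finset.Icc 1 (m - 1),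
        Q ^ (m * n - j) * (∏ r ∈ Finset.Icc 1 (m - j), B m r n)⁻¹ *
          (∏ r ∈ Finset.Icc (m - j + 1) (m - 1), B m r (n - 1))⁻¹ := by
    rw [map_add, map_one, map_sum]
    congr 1
    refine Finset.sum_congr rfl fun n _ => ?_
    rw [map_sum]
    refine Finset.sum_congr rfl fun j hj => ?_
    rw [map_mul, map_mul, map_pow, φ_q,
      φ_prod_poch_inv m n _ (fun r hr => (Finset.mem_Icc.mp hr).1),
      φ_prod_poch_inv m (n - 1) _ (fun r hr => by
        have := (Finset.mem_Icc.mp hr).1; omega)]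
  have hR : φ (poch (q ^ m) (q ^ m) N * (poch q q (m * N))⁻¹)
      = B m m N * (B 1 1 (m * N))⁻¹ := by
    rw [map_mul, φ_poch m m N]
    have hq : poch q q (m * N) = poch (q ^ 1) (q ^ 1) (m * N) := by rw [pow_one]
    rw [hq, φ_poch_inv 1 1 (m * N) le_rfl]
  rw [hL, hR, rhs_eq m hm N]
  exact key m hm N
end

section
/- For every integer m ≥ 2, as formal power series: 1 + ∑_{n=1}^{∞} ∑_{j=1}^{m-1} q^{mn−j} / [ (∏_{r=1}^{m−j} (q^r; q^m)_n) · (∏_{r=m−j+1}^{m−1} (q^r; q^m)_{n−1}) ] = (q^m; q^m)_∞ / (q; q)_∞. -/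
open PowerSeries

noncomputable instance : T2Space (PowerSeries ℂ) :=
  inferInstanceAs (T2Space ((Unit →₀ ℕ) → ℂ))

namespace GlaisherAux

open Finset Filter

/-! ### Coefficient-truncation machinery -/

/-- all coefficients up to `d` vanish -/
def Hi (d : ℕ) (φ : PowerSeries ℂ) : Prop := ∀ e ≤ d, PowerSeries.coeff e φ = 0

lemma Hi.mono {d d' : ℕ} {φ : PowerSeries ℂ} (h : Hi d' φ) (hd : d ≤ d') : Hi d φ :=
  fun e he => h e (he.trans hd)

lemma Hi.mul_left {d : ℕ} {ρ : PowerSeries ℂ} (h : Hi d ρ) (φ : PowerSeries ℂ) :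
    Hi d (φ * ρ) := by
  intro e he
  rw [PowerSeries.coeff_mul]
  refine Finset.sum_eq_zero fun p hp => ?_
  have h2 : p.1 + p.2 = e := Finset.HasAntidiagonal.mem_antidiagonal.mp hp
  rw [h p.2 (by omega), mul_zero]

lemma Hi.mul_right {d : ℕ} {ρ : PowerSeries ℂ} (h : Hi d ρ) (φ : PowerSeries ℂ) :
    Hi d (ρ * φ) := by
  rw [mul_comm]; exact h.mul_left φ

lemma Hi.neg {d : ℕ} {ρ : PowerSeries ℂ} (h : Hi d ρ) : Hi d (-ρ) := by
  intro e he; rw [map_neg, h e he, neg_zero]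

lemma Hi.add {d : ℕ} {ρ ψ : PowerSeries ℂ} (h : Hi d ρ) (h' : Hi d ψ) : Hi d (ρ + ψ) := by
  intro e he; rw [map_add, h e he, h' e he, add_zero]

lemma hi_q_pow {d c : ℕ} (h : d < c) : Hi d (q ^ c) := by
  intro e he
  rw [q, PowerSeries.coeff_X_pow, if_neg (by omega)]

/-- `φ = 1 + O(X^(d+1))` -/
def One' (d : ℕ) (φ : PowerSeries ℂ) : Prop := Hi d (φ - 1)

lemma One'.one (d : ℕ) : One' d (1 : PowerSeries ℂ) := by
  intro e he; simp

lemma One'.mul {d : ℕ} {φ ψ : PowerSeries ℂ} (h : One' d φ) (h' : One' d ψ) :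
    One' d (φ * ψ) := by
  have e1 : φ * ψ - 1 = φ * (ψ - 1) + (φ - 1) := by ring
  rw [One', e1]
  exact (h'.mul_left φ).add h

lemma One'.one_sub_q_pow {d c : ℕ} (h : d < c) : One' d (1 - q ^ c) := by
  have e1 : (1 - q ^ c) - 1 = -(q ^ c) := by ring
  rw [One', e1]
  exact (hi_q_pow h).neg

lemma One'.prod {d : ℕ} {ι : Type*} {s : Finset ι} {f : ι → PowerSeries ℂ}
    (h : ∀ i ∈ s, One' d (f i)) : One' d (∏ i ∈ s, f i) :=
  Finset.prod_induction f (One' d) (fun _ _ ha hb => ha.mul hb) (One'.one d) h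

lemma One'.constantCoeff {d : ℕ} {φ : PowerSeries ℂ} (h : One' d φ) :
    PowerSeries.constantCoeff φ = 1 := by
  have h0 := h 0 (Nat.zero_le d)
  rw [map_sub] at h0
  simp only [PowerSeries.coeff_zero_eq_constantCoeff, map_one] at h0
  linear_combination h0

lemma One'.inv {d : ℕ} {φ : PowerSeries ℂ} (h : One' d φ) : One' d φ⁻¹ := by
  have hc : PowerSeries.constantCoeff φ ≠ 0 := by rw [h.constantCoeff]; exact one_ne_zero
  have e1 : φ⁻¹ - 1 = φ⁻¹ * (1 - φ) := by
    rw [mul_sub, mul_one, PowerSeries.inv_mul_cancel φ hc]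
  rw [One', e1]
  have h2 : Hi d (1 - φ) := by
    have e2 : (1 : PowerSeries ℂ) - φ = -(φ - 1) := by ring
    rw [e2]; exact h.neg
  exact h2.mul_left _

/-- equality of coefficients up to degree `d` -/
def Eqd (d : ℕ) (φ ψ : PowerSeries ℂ) : Prop := Hi d (φ - ψ)

lemma Eqd.coeff {d : ℕ} {φ ψ : PowerSeries ℂ} (h : Eqd d φ ψ) {e : ℕ} (he : e ≤ d) :
    PowerSeries.coeff e φ = PowerSeries.coeff e ψ := by
  have h0 := h e he
  rw [map_sub, sub_eq_zero] at h0
  exact h0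

lemma Eqd.mul {d : ℕ} {φ φ' ψ ψ' : PowerSeries ℂ} (h : Eqd d φ φ') (h' : Eqd d ψ ψ') :
    Eqd d (φ * ψ) (φ' * ψ') := by
  have e1 : φ * ψ - φ' * ψ' = φ * (ψ - ψ') + (φ - φ') * ψ' := by ring
  rw [Eqd, e1]
  exact (h'.mul_left φ).add (h.mul_right ψ')

lemma Eqd.inv {d : ℕ} {φ ψ : PowerSeries ℂ} (h : Eqd d φ ψ)
    (hφ : PowerSeries.constantCoeff φ ≠ 0) (hψ : PowerSeries.constantCoeff ψ ≠ 0) :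
    Eqd d φ⁻¹ ψ⁻¹ := by
  have e1 : φ⁻¹ - ψ⁻¹ = φ⁻¹ * (ψ - φ) * ψ⁻¹ := by
    rw [mul_sub, sub_mul, mul_assoc, PowerSeries.mul_inv_cancel ψ hψ, mul_one,
      PowerSeries.inv_mul_cancel φ hφ, one_mul]
  rw [Eqd, e1]
  have h2 : Hi d (ψ - φ) := by
    have e2 : ψ - φ = -(φ - ψ) := by ring
    rw [e2]; exact h.neg
  exact (h2.mul_left _).mul_right _

lemma Eqd.mul_one' {d : ℕ} {φ ψ : PowerSeries ℂ} (h : One' d ψ) : Eqd d (φ * ψ) φ := by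
  have e1 : φ * ψ - φ = φ * (ψ - 1) := by ring
  rw [Eqd, e1]
  exact h.mul_left φ

/-! ### Infinite products of the form `∏ (1 - q^(c i))` -/

lemma apply_eq_coeff (φ : PowerSeries ℂ) (σ : Unit →₀ ℕ) :
    φ σ = PowerSeries.coeff (σ ()) φ := by
  have h : σ = Finsupp.single () (σ ()) := Finsupp.unique_single σ
  conv_lhs => rw [h]
  rfl

/-- the value of the infinite product `∏ (1 - q^(c i))` -/
noncomputable def limProd (c : ℕ → ℕ) : PowerSeries ℂ :=
  fun σ => PowerSeries.coeff (σ ()) (∏ i ∈ range (σ ()), (1 - q ^ c i))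

lemma coeff_limProd (c : ℕ → ℕ) (d : ℕ) :
    PowerSeries.coeff d (limProd c) =
      PowerSeries.coeff d (∏ i ∈ range d, (1 - q ^ c i)) := by
  rw [show PowerSeries.coeff d (limProd c) = limProd c (Finsupp.single () d) from rfl]
  rw [limProd]
  simp

lemma prod_stable (c : ℕ → ℕ) (hc : ∀ i, i < c i) {d : ℕ} {s : Finset ℕ}
    (hs : range d ⊆ s) :
    Eqd d (∏ i ∈ s, (1 - q ^ c i)) (∏ i ∈ range d, (1 - q ^ c i)) := by
  rw [← Finset.prod_sdiff hs, mul_comm]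
  refine Eqd.mul_one' (One'.prod fun i hi => ?_)
  refine One'.one_sub_q_pow ?_
  have hd : d ≤ i := by
    by_contra hlt
    exact (Finset.mem_sdiff.mp hi).2 (Finset.mem_range.mpr (by omega))
  exact lt_of_le_of_lt hd (hc i)

lemma limProd_eqd (c : ℕ → ℕ) (hc : ∀ i, i < c i) {d N : ℕ} (hN : d ≤ N) :
    Eqd d (limProd c) (∏ i ∈ range N, (1 - q ^ c i)) := by
  intro e he
  rw [map_sub, coeff_limProd, sub_eq_zero]
  exact ((prod_stable c hc (s := range N) (d := e)
    (Finset.range_subset_range.mpr (he.trans hN))).coeff (le_refl e)).symm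

lemma cst_limProd (c : ℕ → ℕ) : PowerSeries.constantCoeff (limProd c) = 1 := by
  rw [← PowerSeries.coeff_zero_eq_constantCoeff_apply, coeff_limProd]
  simp

lemma hasProd_limProd (c : ℕ → ℕ) (hc : ∀ i, i < c i) :
    HasProd (fun i => 1 - q ^ c i) (limProd c) := by
  rw [HasProd]
  refine tendsto_pi_nhds.mpr fun σ => ?_
  set d := σ () with hd
  have hconst : ∀ s : Finset ℕ, range d ⊆ s →
      (∏ i ∈ s, (1 - q ^ c i)) σ = limProd c σ := by
    intro s hs
    rw [apply_eq_coeff (∏ i ∈ s, (1 - q ^ c i)) σ, apply_eq_coeff (limProd c) σ, ← hd,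
      coeff_limProd]
    exact (prod_stable c hc hs).coeff (le_refl d)
  refine Tendsto.congr' ?_ tendsto_const_nhds
  filter_upwards [Filter.eventually_atTop.mpr ⟨range d, fun s hs => hs⟩] with s hs
  exact (hconst s hs).symm

lemma pochInf_eq (s t : ℕ) (hs : 1 ≤ s) (ht : 1 ≤ t) :
    pochInf (q ^ s) (q ^ t) = limProd (fun i => s + t * i) := by
  have hc : ∀ i, i < s + t * i := by
    intro i
    have h1 : i ≤ t * i := Nat.le_mul_of_pos_left i (by omega)
    omega
  have h := hasProd_limProd (fun i => s + t * i) hc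
  have he : ∀ i : ℕ, (1 : PowerSeries ℂ) - q ^ s * (q ^ t) ^ i = 1 - q ^ (s + t * i) := by
    intro i; rw [← pow_mul, ← pow_add]
  rw [pochInf, tprod_congr he]
  exact h.tprod_eq

/-! ### The `m`-specific finite products -/

noncomputable def T (m r n : ℕ) : PowerSeries ℂ := ∏ i ∈ range n, (1 - q ^ (r + m * i))

noncomputable def A (m n : ℕ) : PowerSeries ℂ := ∏ r ∈ Icc 1 (m - 1), T m r n

noncomputable def U (m n : ℕ) : PowerSeries ℂ :=
  ∏ r ∈ Icc 1 (m - 1), (1 - q ^ (r + m * n))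

lemma poch_eq (m r n : ℕ) : poch (q ^ r) (q ^ m) n = T m r n := by
  refine Finset.prod_congr rfl fun i _ => ?_
  rw [← pow_mul, ← pow_add]

lemma cst_one_sub {c : ℕ} (hc : 1 ≤ c) :
    PowerSeries.constantCoeff (1 - q ^ c) = 1 :=
  (One'.one_sub_q_pow (d := 0) hc).constantCoeff

lemma cst_T (m r n : ℕ) (hr : 1 ≤ r) : PowerSeries.constantCoeff (T m r n) = 1 := by
  rw [T, map_prod]
  exact Finset.prod_eq_one fun i _ => cst_one_sub (by omega)

lemma cst_A (m n : ℕ) : PowerSeries.constantCoeff (A m n) = 1 := by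
  rw [A, map_prod]
  exact Finset.prod_eq_one fun r hr =>
    cst_T m r n (by simp only [Finset.mem_Icc] at hr; omega)

lemma inv_one' : (1 : PowerSeries ℂ)⁻¹ = 1 := by
  rw [PowerSeries.inv_eq_iff_mul_eq_one (by simp), one_mul]

lemma T_succ (m r n : ℕ) : T m r (n + 1) = T m r n * (1 - q ^ (r + m * n)) :=
  Finset.prod_range_succ _ n

lemma A_succ (m n : ℕ) : A m (n + 1) = A m n * U m n := by
  rw [A, A, U, ← Finset.prod_mul_distrib]
  exact Finset.prod_congr rfl fun r _ => T_succ m r n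

lemma A_zero (m : ℕ) : A m 0 = 1 := by
  rw [A]
  exact Finset.prod_eq_one fun r _ => Finset.prod_range_zero _

lemma Icc_eq_Ico (m x : ℕ) (hm : 1 ≤ m) : Icc x (m - 1) = Ico x m := by
  rw [← Finset.Ico_add_one_right_eq_Icc]
  congr 1
  omega

lemma hiF (m : ℕ) (hm : 2 ≤ m) {d k : ℕ} (hdk : d ≤ m * k) :
    Hi d ((A m (k + 1))⁻¹ - (A m k)⁻¹) := by
  have hU : One' (m * k) (U m k) :=
    One'.prod fun r hr =>
      One'.one_sub_q_pow (by simp only [Finset.mem_Icc] at hr; omega)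
  have hcU : PowerSeries.constantCoeff (U m k) ≠ 0 := by
    rw [hU.constantCoeff]; exact one_ne_zero
  have e1 : (A m (k + 1))⁻¹ - (A m k)⁻¹ = (A m k)⁻¹ * ((U m k)⁻¹ - 1) := by
    rw [A_succ, PowerSeries.mul_inv_rev]; ring
  rw [e1]
  exact (Hi.mono hU.inv hdk).mul_left _

/-! ### The telescoping identity for the inner sum -/

lemma inner_sum (m : ℕ) (hm : 2 ≤ m) (k : ℕ) :
    ∑ j ∈ Icc 1 (m - 1),
        q ^ (m * (k + 1) - j) * (∏ r ∈ Icc 1 (m - j), T m r (k + 1))⁻¹ *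
          (∏ r ∈ Icc (m - j + 1) (m - 1), T m r k)⁻¹ =
      (A m (k + 1))⁻¹ - (A m k)⁻¹ := by
  set G : ℕ → PowerSeries ℂ := fun i =>
    (∏ r ∈ Icc 1 i, T m r (k + 1))⁻¹ * (∏ r ∈ Ico (i + 1) m, T m r k)⁻¹ with hG
  have hgstep : ∀ i, i + 1 ≤ m - 1 →
      G (i + 1) - G i = q ^ (m * k + (i + 1)) * G (i + 1) := by
    intro i hi
    set P := ∏ r ∈ Icc 1 i, T m r (k + 1) with hP
    set Q := ∏ r ∈ Ico (i + 2) m, T m r k with hQ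
    set t := T m (i + 1) k with ht
    set u := (1 : PowerSeries ℂ) - q ^ (i + 1 + m * k) with hu
    have hPsucc : ∏ r ∈ Icc 1 (i + 1), T m r (k + 1) = P * (t * u) := by
      rw [Finset.prod_Icc_succ_top (by omega), hP, ht, hu, ← T_succ]
    have hQsucc : ∏ r ∈ Ico (i + 1) m, T m r k = t * Q := by
      rw [Finset.prod_eq_prod_Ico_succ_bot (by omega)]
    have hG1 : G (i + 1) = (u⁻¹ * t⁻¹ * P⁻¹) * Q⁻¹ := by
      rw [hG]
      simp only []
      rw [hPsucc, PowerSeries.mul_inv_rev, PowerSeries.mul_inv_rev]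
    have hG0 : G i = P⁻¹ * (t⁻¹ * Q⁻¹) := by
      rw [hG]
      simp only []
      rw [hQsucc, PowerSeries.mul_inv_rev]
      ring
    have hucancel : u * u⁻¹ = 1 :=
      PowerSeries.mul_inv_cancel u (by rw [hu, cst_one_sub (by omega)]; exact one_ne_zero)
    have hq : (q : PowerSeries ℂ) ^ (m * k + (i + 1)) = 1 - u := by
      rw [show m * k + (i + 1) = i + 1 + m * k from by omega, hu]
      ring
    rw [hG1, hG0, hq]
    linear_combination (t⁻¹ * P⁻¹ * Q⁻¹) * hucancel
  have hterm : ∀ j ∈ Icc 1 (m - 1),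
      q ^ (m * (k + 1) - j) * (∏ r ∈ Icc 1 (m - j), T m r (k + 1))⁻¹ *
          (∏ r ∈ Icc (m - j + 1) (m - 1), T m r k)⁻¹ =
        q ^ (m * k + (m - j)) * G (m - j) := by
    intro j hj
    rw [Finset.mem_Icc] at hj
    rw [Icc_eq_Ico m (m - j + 1) (by omega), hG]
    have he : m * (k + 1) - j = m * k + (m - j) := by
      have h2 : m * (k + 1) = m * k + m := by ring
      omega
    rw [he, mul_assoc]
  rw [Finset.sum_congr rfl hterm]
  have hre : ∑ j ∈ Icc 1 (m - 1), q ^ (m * k + (m - j)) * G (m - j) =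
      ∑ j ∈ Icc 1 (m - 1), q ^ (m * k + j) * G j := by
    refine Finset.sum_nbij' (fun j => m - j) (fun j => m - j) ?_ ?_ ?_ ?_ ?_
    · intro a ha; simp only [Finset.mem_Icc] at ha ⊢; omega
    · intro a ha; simp only [Finset.mem_Icc] at ha ⊢; omega
    · intro a ha; simp only [Finset.mem_Icc] at ha; show m - (m - a) = a; omega
    · intro a ha; simp only [Finset.mem_Icc] at ha; show m - (m - a) = a; omega
    · intro a ha; rfl
  rw [hre]
  rw [Icc_eq_Ico m 1 (by omega), Finset.sum_Ico_eq_sum_range]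
  have hstep2 : ∀ i ∈ range (m - 1),
      q ^ (m * k + (1 + i)) * G (1 + i) = G (i + 1) - G i := by
    intro i hi
    rw [Finset.mem_range] at hi
    rw [show 1 + i = i + 1 from by omega]
    exact (hgstep i (by omega)).symm
  rw [Finset.sum_congr rfl hstep2, Finset.sum_range_sub]
  have hGtop : G (m - 1) = (A m (k + 1))⁻¹ := by
    rw [hG]
    simp only []
    rw [show m - 1 + 1 = m from by omega, Finset.Ico_self, Finset.prod_empty, inv_one',
      mul_one, A]
  have hGbot : G 0 = (A m k)⁻¹ := by
    rw [hG]
    simp only []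
    rw [show Icc 1 0 = (∅ : Finset ℕ) from rfl, Finset.prod_empty, inv_one', one_mul, A,
      Icc_eq_Ico m 1 (by omega)]
  rw [hGtop, hGbot]

/-! ### The product splitting identity -/

lemma prod_split (m : ℕ) (hm : 2 ≤ m) (D : ℕ) :
    ∏ i ∈ range (m * D), (1 - q ^ (1 + 1 * i)) = A m D * T m m D := by
  induction D with
  | zero => simp [A_zero, T]
  | succ D ih =>
    rw [show m * (D + 1) = m * D + m from by ring, Finset.prod_range_add, ih]
    have h2 : ∏ i ∈ range m, (1 - q ^ (1 + 1 * (m * D + i))) =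
        U m D * (1 - q ^ (m + m * D)) := by
      obtain ⟨w, hw⟩ : ∃ w, m = w + 1 := ⟨m - 1, by omega⟩
      rw [show range m = range (w + 1) from by rw [hw], Finset.prod_range_succ]
      congr 1
      · rw [U, Icc_eq_Ico m 1 (by omega), Finset.prod_Ico_eq_prod_range,
          show m - 1 = w from by omega]
        refine Finset.prod_congr rfl fun i _ => ?_
        rw [show 1 + 1 * (m * D + i) = 1 + i + m * D from by omega]
      · rw [show 1 + 1 * (m * D + w) = m + m * D from by omega]
    rw [h2, A_succ, T_succ]
    ring

/-! ### The infinite sum -/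

lemma coeff_RHS (m : ℕ) (hm : 2 ≤ m) (d : ℕ) :
    PowerSeries.coeff d (pochInf (q ^ m) (q ^ m) * (pochInf q q)⁻¹) =
      PowerSeries.coeff d (A m (d + 1))⁻¹ := by
  have hc1 : ∀ i, i < m + m * i := by
    intro i
    have h1 : i ≤ m * i := Nat.le_mul_of_pos_left i (by omega)
    omega
  have hc2 : ∀ i : ℕ, i < 1 + 1 * i := by intro i; omega
  have hA : pochInf (q ^ m) (q ^ m) = limProd (fun i => m + m * i) :=
    pochInf_eq m m (by omega) (by omega)
  have hB : pochInf q q = limProd (fun i => 1 + 1 * i) := by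
    have h := pochInf_eq 1 1 (le_refl 1) (le_refl 1)
    rwa [pow_one] at h
  have e1 : Eqd d (limProd fun i => m + m * i) (T m m (d + 1)) :=
    limProd_eqd _ hc1 (d := d) (N := d + 1) (by omega)
  have e2 : Eqd d (limProd fun i => 1 + 1 * i) (A m (d + 1) * T m m (d + 1)) := by
    have hle : d ≤ m * (d + 1) := by
      have h1 : d + 1 ≤ m * (d + 1) := Nat.le_mul_of_pos_left (d + 1) (by omega)
      omega
    have h := limProd_eqd (fun i => 1 + 1 * i) hc2 (d := d) (N := m * (d + 1)) hle
    rwa [prod_split m hm (d + 1)] at h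
  have cstAT : PowerSeries.constantCoeff (A m (d + 1) * T m m (d + 1)) = 1 := by
    rw [map_mul, cst_A, cst_T m m _ (by omega), mul_one]
  have e3 : Eqd d (pochInf (q ^ m) (q ^ m) * (pochInf q q)⁻¹)
      (T m m (d + 1) * (A m (d + 1) * T m m (d + 1))⁻¹) := by
    rw [hA, hB]
    exact e1.mul (e2.inv (by rw [cst_limProd]; exact one_ne_zero)
      (by rw [cstAT]; exact one_ne_zero))
  have e4 : T m m (d + 1) * (A m (d + 1) * T m m (d + 1))⁻¹ = (A m (d + 1))⁻¹ := by
    rw [PowerSeries.mul_inv_rev]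
    have e5 : T m m (d + 1) * ((T m m (d + 1))⁻¹ * (A m (d + 1))⁻¹) =
        (T m m (d + 1) * (T m m (d + 1))⁻¹) * (A m (d + 1))⁻¹ := by ring
    rw [e5, PowerSeries.mul_inv_cancel _
      (by rw [cst_T m m _ (by omega)]; exact one_ne_zero), one_mul]
  rw [e3.coeff (le_refl d), e4]

lemma hasSum_F (m : ℕ) (hm : 2 ≤ m) :
    HasSum (fun k => (A m (k + 1))⁻¹ - (A m k)⁻¹)
      (pochInf (q ^ m) (q ^ m) * (pochInf q q)⁻¹ - 1) := by
  rw [HasSum]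
  refine tendsto_pi_nhds.mpr fun σ => ?_
  set d := σ () with hd
  have hconst : ∀ s : Finset ℕ, range (d + 1) ⊆ s →
      (∑ k ∈ s, ((A m (k + 1))⁻¹ - (A m k)⁻¹)) σ =
        (pochInf (q ^ m) (q ^ m) * (pochInf q q)⁻¹ - 1) σ := by
    intro s hs
    rw [apply_eq_coeff (∑ k ∈ s, ((A m (k + 1))⁻¹ - (A m k)⁻¹)) σ,
      apply_eq_coeff (pochInf (q ^ m) (q ^ m) * (pochInf q q)⁻¹ - 1) σ, ← hd]
    rw [map_sum]
    have hzero : ∀ k ∈ s, k ∉ range (d + 1) →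
        PowerSeries.coeff d ((A m (k + 1))⁻¹ - (A m k)⁻¹) = 0 := by
      intro k _ hk
      rw [Finset.mem_range] at hk
      have h1 : k ≤ m * k := Nat.le_mul_of_pos_left k (by omega)
      exact hiF m hm (by omega) d (le_refl d)
    rw [← Finset.sum_subset hs hzero]
    have hsum : ∑ k ∈ range (d + 1),
        PowerSeries.coeff d ((A m (k + 1))⁻¹ - (A m k)⁻¹) =
          PowerSeries.coeff d (A m (d + 1))⁻¹ - PowerSeries.coeff d (A m 0)⁻¹ := by
      simp only [map_sub]
      exact Finset.sum_range_sub (fun k => PowerSeries.coeff d (A m k)⁻¹) (d + 1)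
    rw [hsum, map_sub, coeff_RHS m hm d, A_zero, inv_one']
  refine Tendsto.congr' ?_ tendsto_const_nhds
  filter_upwards [Filter.eventually_atTop.mpr ⟨range (d + 1), fun s hs => hs⟩] with s hs
  exact (hconst s hs).symm

end GlaisherAux

open GlaisherAux in
/-- Corollary 1.10: the infinite version of the Glaisher series identity,
`1 + ∑_{n≥1} ∑_{j=1}^{m-1} q^{mn-j} / [(∏_{r=1}^{m-j}(q^r;q^m)_n)(∏_{r=m-j+1}^{m-1}(q^r;q^m)_{n-1})]
= (q^m;q^m)_∞ / (q;q)_∞` (summing over `n = k + 1`). -/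
theorem infinite_glaisher_series (m : ℕ) (hm : 2 ≤ m) :
    1 + ∑' k : ℕ, ∑ j ∈ Finset.Icc 1 (m - 1),
        q ^ (m * (k + 1) - j) *
          (∏ r ∈ Finset.Icc 1 (m - j), poch (q ^ r) (q ^ m) (k + 1))⁻¹ *
          (∏ r ∈ Finset.Icc (m - j + 1) (m - 1), poch (q ^ r) (q ^ m) k)⁻¹ =
      pochInf (q ^ m) (q ^ m) * (pochInf q q)⁻¹ := by
  have h1 : ∀ k : ℕ, ∑ j ∈ Finset.Icc 1 (m - 1),
      q ^ (m * (k + 1) - j) *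
        (∏ r ∈ Finset.Icc 1 (m - j), poch (q ^ r) (q ^ m) (k + 1))⁻¹ *
        (∏ r ∈ Finset.Icc (m - j + 1) (m - 1), poch (q ^ r) (q ^ m) k)⁻¹ =
      (A m (k + 1))⁻¹ - (A m k)⁻¹ := by
    intro k
    rw [← inner_sum m hm k]
    refine Finset.sum_congr rfl fun j _ => ?_
    simp only [poch_eq]
  rw [tsum_congr h1, (hasSum_F m hm).tsum_eq]
  ring
end

section
/- For every integer m ≥ 2, as formal power series: ∑_{n≥0} q^{mn} (q^{n+1}; q)_∞ ∑_{j=1}^{m−1} (ζ_m^j q^{n+1}; q)_∞ = ∑_{k≥0} (−1)^k χ_m(k) q^{k(k+1)/2} (q^{k+1}; q)_{m−1}, where ζ_m = e^{2πi/m} and χ_m(k) = m−1 if m | k and −1 otherwise. -/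
open PowerSeries

/-- `χₘ(k) = m - 1` if `m ∣ k`, and `-1` otherwise. -/
noncomputable def chim (m k : ℕ) : ℂ := if m ∣ k then (m : ℂ) - 1 else -1

namespace Aux

open Finset Filter

abbrev M := PowerSeries ℂ

lemma coeff_eq_of_dvd {A B : M} {N d : ℕ} (h : (X : M) ^ N ∣ A - B) (hd : d < N) :
    coeff d A = coeff d B := by
  have := (PowerSeries.X_pow_dvd_iff.mp h) d hd
  rw [map_sub, sub_eq_zero] at this
  exact this

lemma eq_of_forall_dvd {A B : M} (h : ∀ N, (X : M) ^ N ∣ A - B) : A = B := by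
  ext d
  exact coeff_eq_of_dvd (h (d + 1)) (Nat.lt_succ_self d)

lemma dvd_mul_cong {N : ℕ} {a b c d : M} (h1 : (X : M) ^ N ∣ a - b) (h2 : (X : M) ^ N ∣ c - d) :
    (X : M) ^ N ∣ a * c - b * d := by
  have : a * c - b * d = a * (c - d) + (a - b) * d := by ring
  rw [this]
  exact dvd_add (h2.mul_left a) (h1.mul_right d)

lemma dvd_sum_cong {ι : Type*} {N : ℕ} {s : Finset ι} {f g : ι → M}
    (h : ∀ i ∈ s, (X : M) ^ N ∣ f i - g i) :
    (X : M) ^ N ∣ (∑ i ∈ s, f i) - ∑ i ∈ s, g i := by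
  rw [← Finset.sum_sub_distrib]
  exact Finset.dvd_sum h

lemma dvd_prod_one {ι : Type*} {N : ℕ} {s : Finset ι} {f : ι → M}
    (h : ∀ i ∈ s, (X : M) ^ N ∣ f i - 1) :
    (X : M) ^ N ∣ (∏ i ∈ s, f i) - 1 := by
  classical
  induction s using Finset.induction with
  | empty => simp
  | insert a s hx ih =>
    rw [Finset.prod_insert hx]
    have := dvd_mul_cong (h a (Finset.mem_insert_self a s))
      (ih fun i hi => h i (Finset.mem_insert_of_mem hi))
    simpa using this

/-- coefficientwise convergence criterion for the product topology. -/
lemma tendsto_of_coeff {ι : Type*} {F : ι → M} {l : Filter ι} {L : M}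
    (h : ∀ d : ℕ, Tendsto (fun i => coeff d (F i)) l (nhds (coeff d L))) :
    Tendsto F l (nhds L) := by
  refine tendsto_pi_nhds.mpr fun σ => ?_
  obtain ⟨d, rfl⟩ : ∃ d, σ = Finsupp.single () d := ⟨σ (), Finsupp.unique_single σ⟩
  have := h d
  simp only [PowerSeries.coeff, MvPowerSeries.coeff_apply] at this
  exact this

lemma hasSum_of_dvd (f : ℕ → M) (hf : ∀ n, (X : M) ^ n ∣ f n) :
    HasSum f (PowerSeries.mk fun d => ∑ n ∈ range (d + 1), coeff d (f n)) := by
  apply tendsto_of_coeff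
  intro d
  rw [PowerSeries.coeff_mk]
  apply Tendsto.congr' _ tendsto_const_nhds
  filter_upwards [eventually_ge_atTop (range (d + 1))] with s hs
  rw [map_sum]
  apply Finset.sum_subset hs
  intro x _ hx
  have hxd : d < x := by
    by_contra hc
    exact hx (Finset.mem_range.mpr (by omega))
  exact PowerSeries.X_pow_dvd_iff.mp (hf x) d hxd

lemma tsum_cong {f : ℕ → M} (hf : ∀ n, (X : M) ^ n ∣ f n) (N : ℕ) :
    (X : M) ^ N ∣ (∑' n, f n) - ∑ n ∈ range N, f n := by
  rw [(hasSum_of_dvd f hf).tsum_eq]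
  rw [PowerSeries.X_pow_dvd_iff]
  intro d hd
  rw [map_sub, PowerSeries.coeff_mk, map_sum, sub_eq_zero]
  apply Finset.sum_subset
  · intro x hx
    exact Finset.mem_range.mpr (by have := Finset.mem_range.mp hx; omega)
  · intro x _ hx
    have hxd : d < x := by
      by_contra hc
      exact hx (Finset.mem_range.mpr (by omega))
    exact PowerSeries.X_pow_dvd_iff.mp (hf x) d hxd

lemma summable_of_dvd {f : ℕ → M} (hf : ∀ n, (X : M) ^ n ∣ f n) : Summable f :=
  ⟨_, hasSum_of_dvd f hf⟩

lemma hasProd_of_dvd (f : ℕ → M) (hf : ∀ n, (X : M) ^ n ∣ f n - 1) :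
    HasProd f (PowerSeries.mk fun d => coeff d (∏ n ∈ range (d + 1), f n)) := by
  apply tendsto_of_coeff
  intro d
  rw [PowerSeries.coeff_mk]
  apply Tendsto.congr' _ tendsto_const_nhds
  filter_upwards [eventually_ge_atTop (range (d + 1))] with s hs
  have key : (X : M) ^ (d + 1) ∣ (∏ n ∈ s, f n) - ∏ n ∈ range (d + 1), f n := by
    rw [← Finset.prod_sdiff hs]
    have h1 : (X : M) ^ (d + 1) ∣ (∏ n ∈ s \ range (d + 1), f n) - 1 := by
      apply dvd_prod_one
      intro i hi
      have : d + 1 ≤ i := by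
        rcases Finset.mem_sdiff.mp hi with ⟨_, h2⟩
        by_contra hc
        exact h2 (Finset.mem_range.mpr (by omega))
      exact (pow_dvd_pow (X : M) this).trans (hf i)
    have h2 := dvd_mul_cong h1 (dvd_sub_comm.mp (sub_self (∏ n ∈ range (d + 1), f n) ▸ dvd_zero _))
    simpa [mul_comm] using h2
  exact coeff_eq_of_dvd (dvd_sub_comm.mp key) (Nat.lt_succ_self d)


lemma prod_range_cong {f : ℕ → M} (hf : ∀ n, (X : M) ^ n ∣ f n - 1) {A B : ℕ} (hAB : A ≤ B) :
    (X : M) ^ A ∣ (∏ n ∈ range B, f n) - ∏ n ∈ range A, f n := by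
  rw [← Finset.prod_sdiff (Finset.range_subset_range.mpr hAB)]
  have h1 : (X : M) ^ A ∣ (∏ n ∈ range B \ range A, f n) - 1 := by
    apply dvd_prod_one
    intro i hi
    have : A ≤ i := by
      rcases Finset.mem_sdiff.mp hi with ⟨_, h2⟩
      by_contra hc
      exact h2 (Finset.mem_range.mpr (by omega))
    exact (pow_dvd_pow (X : M) this).trans (hf i)
  have h2 := dvd_mul_cong h1 (dvd_sub_comm.mp (sub_self (∏ n ∈ range A, f n) ▸ dvd_zero _))
  simpa [mul_comm] using h2

lemma tprod_cong {f : ℕ → M} (hf : ∀ n, (X : M) ^ n ∣ f n - 1) (N : ℕ) :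
    (X : M) ^ N ∣ (∏' n, f n) - ∏ n ∈ range N, f n := by
  rw [(hasProd_of_dvd f hf).tprod_eq, PowerSeries.X_pow_dvd_iff]
  intro d hd
  rw [map_sub, PowerSeries.coeff_mk, sub_eq_zero]
  rcases le_or_gt (d + 1) N with h | h
  · exact (coeff_eq_of_dvd (prod_range_cong hf h) (Nat.lt_succ_self d)).symm
  · exact coeff_eq_of_dvd (prod_range_cong hf h.le) hd

lemma q_X : q = (X : M) := rfl

lemma pochInf_cong (a : M) (N : ℕ) :
    (X : M) ^ N ∣ pochInf a q - ∏ i ∈ range N, (1 - a * q ^ i) :=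
  tprod_cong (fun n => by
    have h : (1 - a * q ^ n) - 1 = -(a * (X : M) ^ n) := by rw [← q_X]; ring
    rw [h]
    exact ((dvd_mul_left ((X:M)^n) a).mul_left 1 |> fun h => by simpa using (dvd_mul_left ((X:M)^n) a).neg_right)) N

lemma pochInf_one {a : M} {s : ℕ} (ha : (X : M) ^ s ∣ a) :
    (X : M) ^ s ∣ pochInf a q - 1 := by
  have h1 := pochInf_cong a s
  have h2 : (X : M) ^ s ∣ (∏ i ∈ range s, (1 - a * q ^ i)) - 1 := by
    apply dvd_prod_one
    intro i _
    have : (1 - a * q ^ i) - 1 = -(a * q ^ i) := by ring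
    rw [this]
    exact ((ha.mul_right (q ^ i))).neg_right
  simpa using dvd_add h1 h2

lemma pochInf_funEq (a : M) : pochInf a q = (1 - a) * pochInf (a * q) q := by
  apply eq_of_forall_dvd
  intro N
  have h1 := (pow_dvd_pow (X : M) (Nat.le_succ N)).trans (pochInf_cong a (N + 1))
  have h2 : (∏ i ∈ range (N + 1), (1 - a * q ^ i))
      = (1 - a) * ∏ i ∈ range N, (1 - (a * q) * q ^ i) := by
    rw [Finset.prod_range_succ']
    simp only [pow_zero, mul_one, pow_succ]
    rw [mul_comm]
    congr 1
    apply Finset.prod_congr rfl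
    intro i _
    ring_nf
  have h3 := dvd_mul_cong (dvd_sub_comm.mp (sub_self (1 - a) ▸ dvd_zero ((X:M)^N)))
    (pochInf_cong (a * q) N)
  calc (X : M) ^ N ∣ _ := by
        have := dvd_add h1 (dvd_sub_comm.mp h3)
        rw [h2] at this
        simpa using this

noncomputable def Pq (k : ℕ) : M := poch q q k

noncomputable def Ps (s : ℕ) : M := pochInf (q ^ s) q

lemma Pq_succ (k : ℕ) : Pq (k + 1) = Pq k * (1 - q ^ (k + 1)) := by
  unfold Pq poch
  rw [Finset.prod_range_succ, pow_succ, mul_comm (q^k) q]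

lemma Pq_const (k : ℕ) : constantCoeff (Pq k) = 1 := by
  unfold Pq poch
  rw [map_prod]
  apply Finset.prod_eq_one
  intro i _
  rw [map_sub, map_one, map_mul, q_X, constantCoeff_X]
  simp

lemma Pq_ne (k : ℕ) : Pq k ≠ 0 := fun h => by simpa [h] using Pq_const k

lemma Pq_inv_mul (k : ℕ) : (Pq k)⁻¹ * Pq k = 1 :=
  PowerSeries.inv_mul_cancel _ (by rw [Pq_const]; exact one_ne_zero)

lemma Ps_funEq (s : ℕ) : Ps s = (1 - q ^ s) * Ps (s + 1) := by
  have := pochInf_funEq (q ^ s)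
  rw [← pow_succ] at this
  exact this

lemma Ps_one (s : ℕ) : (X : M) ^ s ∣ Ps s - 1 :=
  pochInf_one (by rw [q_X])

def tri (k : ℕ) : ℕ := k * (k + 1) / 2

lemma tri_succ (k : ℕ) : tri (k + 1) = tri k + (k + 1) := by
  unfold tri
  have : (k+1)*(k+2) = k*(k+1) + (k+1)*2 := by ring
  rw [this, Nat.add_mul_div_right _ _ (by norm_num : 0 < 2)]

lemma tri_ge (k : ℕ) : k ≤ tri k := by
  induction k with
  | zero => simp [tri]
  | succ n ih => rw [tri_succ]; omega


lemma Ssum_dvd (t : ℕ) : ∀ n, (X : M) ^ n ∣ q ^ ((t + 1) * n) * Ps (n + 1) := by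
  intro n
  apply dvd_mul_of_dvd_left
  rw [q_X]
  exact pow_dvd_pow _ (Nat.le_mul_of_pos_left n (Nat.succ_pos t))

lemma FIN1 (N : ℕ) : ∑ n ∈ range (N + 1), q ^ n * Ps (n + 1) = Ps (N + 1) := by
  induction N with
  | zero => simp
  | succ N ih =>
    rw [Finset.sum_range_succ, ih, Ps_funEq (N + 1)]
    ring

lemma Ssum_eq (t : ℕ) : (∑' n, q ^ ((t + 1) * n) * Ps (n + 1)) = Pq t := by
  induction t with
  | zero =>
    apply eq_of_forall_dvd
    intro N
    have hPq : Pq 0 = 1 := by simp [Pq, poch]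
    rw [hPq]
    cases N with
    | zero => simp
    | succ N' =>
      have h1 := tsum_cong (Ssum_dvd 0) (N' + 1)
      have h2 : ∑ n ∈ range (N' + 1), q ^ ((0 + 1) * n) * Ps (n + 1) = Ps (N' + 1) := by
        simpa using FIN1 N'
      have h3 := Ps_one (N' + 1)
      rw [h2] at h1
      simpa using dvd_add h1 h3
  | succ t ih =>
    have hterm : ∀ n : ℕ, q ^ ((t + 1) * (n + 1)) * Ps (n + 1 + 1)
        - q ^ ((t + 1 + 1) * (n + 1)) * Ps (n + 1 + 1)
        = q ^ (t + 1) * (q ^ ((t + 1) * n) * Ps (n + 1)) := by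
      intro n
      have h1 : (t + 1 + 1) * (n + 1) = (t + 1) * (n + 1) + (n + 1) := by ring
      have h2 : (t + 1) * (n + 1) = (t + 1) + (t + 1) * n := by ring
      rw [h1, h2, Ps_funEq (n + 1)]
      rw [pow_add, pow_add, pow_add]
      ring
    have key : (∑' n, q ^ ((t + 1 + 1) * n) * Ps (n + 1))
        = (1 - q ^ (t + 1)) * ∑' n, q ^ ((t + 1) * n) * Ps (n + 1) := by
      apply eq_of_forall_dvd
      intro N
      cases N with
      | zero => simp
      | succ N' =>
        set Tt := ∑' n, q ^ ((t + 1) * n) * Ps (n + 1) with hTt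
        set Ts := ∑' n, q ^ ((t + 1 + 1) * n) * Ps (n + 1) with hTs
        set A := ∑ n ∈ range (N' + 1), q ^ ((t + 1) * n) * Ps (n + 1) with hA0
        set B := ∑ n ∈ range (N' + 1), q ^ ((t + 1 + 1) * n) * Ps (n + 1) with hB0
        set A' := ∑ n ∈ range N', q ^ ((t + 1) * n) * Ps (n + 1) with hA'0
        have hA := tsum_cong (Ssum_dvd t) (N' + 1)
        have hA' := tsum_cong (Ssum_dvd t) N'
        have hB := tsum_cong (Ssum_dvd (t + 1)) (N' + 1)
        have fin : A - B = q ^ (t + 1) * A' := by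
          rw [hA0, hB0, ← Finset.sum_sub_distrib, Finset.sum_range_succ']
          simp only [mul_zero, pow_zero, one_mul, sub_self, add_zero]
          rw [hA'0, Finset.mul_sum]
          exact Finset.sum_congr rfl fun n _ => hterm n
        have hfin0 : B - A + q ^ (t + 1) * A' = 0 := by
          rw [← fin]; ring
        have expand : Ts - (1 - q ^ (t + 1)) * Tt
            = ((Ts - B) - (Tt - A)) + q ^ (t + 1) * (Tt - A') + (B - A + q ^ (t + 1) * A') := by
          ring
        rw [expand, hfin0, add_zero]
        apply dvd_add (dvd_sub hB hA)
        have hx : (X : M) ^ (N' + 1) = X ^ 1 * X ^ N' := by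
          rw [← pow_add]; ring_nf
        rw [hx, q_X]
        exact mul_dvd_mul (pow_dvd_pow _ (Nat.succ_le_succ (Nat.zero_le t))) hA'
    rw [key, ih, Pq_succ, mul_comm]


/-- Euler expansion term: `(-1)^k c^k q^{(t+1)k + k(k-1)/2} / (q;q)_k`. -/
noncomputable def eu (c : ℂ) (t k : ℕ) : M :=
  (-1) ^ k * C (c ^ k) * q ^ (t * k + tri k) * (Pq k)⁻¹

lemma eu_dvd (c : ℂ) (t : ℕ) : ∀ k, (X : M) ^ k ∣ eu c t k := by
  intro k
  unfold eu
  have h : (X : M) ^ k ∣ q ^ (t * k + tri k) := by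
    rw [q_X]
    exact pow_dvd_pow _ (le_trans (tri_ge k) (Nat.le_add_left _ _))
  exact (h.mul_left _).mul_right _

lemma eu_dvd' (c : ℂ) (s k : ℕ) : (X : M) ^ (s + 1) ∣ eu c s (k + 1) := by
  unfold eu
  have h : (X : M) ^ (s + 1) ∣ q ^ (s * (k + 1) + tri (k + 1)) := by
    rw [q_X]
    apply pow_dvd_pow
    have h1 := tri_ge (k + 1)
    have h2 : s ≤ s * (k + 1) := Nat.le_mul_of_pos_right s (Nat.succ_pos k)
    omega
  exact (h.mul_left _).mul_right _

lemma Pq_zero : Pq 0 = 1 := by simp [Pq, poch]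

lemma eu_zero (c : ℂ) (t : ℕ) : eu c t 0 = 1 := by
  have hinv : (Pq 0)⁻¹ = 1 := by
    have := Pq_inv_mul 0
    rwa [Pq_zero, mul_one] at this
  simp [eu, tri, hinv]

lemma eu_mul_Pq (c : ℂ) (t k : ℕ) :
    eu c t k * Pq k = (-1) ^ k * C (c ^ k) * q ^ (t * k + tri k) := by
  unfold eu
  rw [mul_assoc, Pq_inv_mul, mul_one]

lemma eu_term (c : ℂ) (t k : ℕ) :
    eu c t (k + 1) - eu c (t + 1) (k + 1) = -(C c * q ^ (t + 1)) * eu c (t + 1) k := by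
  apply mul_right_cancel₀ (Pq_ne (k + 1))
  have h3 : eu c (t + 1) k * Pq (k + 1)
      = (-1) ^ k * C (c ^ k) * q ^ ((t + 1) * k + tri k) * (1 - q ^ (k + 1)) := by
    rw [Pq_succ, ← mul_assoc, eu_mul_Pq]
  have h4 : -(C c * q ^ (t + 1)) * eu c (t + 1) k * Pq (k + 1)
      = -(C c * q ^ (t + 1)) *
        ((-1) ^ k * C (c ^ k) * q ^ ((t + 1) * k + tri k) * (1 - q ^ (k + 1))) := by
    rw [mul_assoc, h3]
  rw [sub_mul, eu_mul_Pq, eu_mul_Pq, h4]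
  have hE1 : t * (k + 1) + tri (k + 1) = (t + 1) + ((t + 1) * k + tri k) := by
    rw [tri_succ]; ring
  have hE2 : (t + 1) * (k + 1) + tri (k + 1) = (t + 1) + ((t + 1) * k + tri k) + (k + 1) := by
    rw [tri_succ]; ring
  rw [hE1, hE2]
  simp only [pow_add, pow_succ, map_mul]
  ring

lemma Hfe (c : ℂ) (s : ℕ) :
    (∑' k, eu c s k) = (1 - C c * q ^ (s + 1)) * ∑' k, eu c (s + 1) k := by
  apply eq_of_forall_dvd
  intro N
  cases N with
  | zero => simp
  | succ N' =>
    have hA := tsum_cong (eu_dvd c s) (N' + 1)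
    have hB := tsum_cong (eu_dvd c (s + 1)) (N' + 1)
    have hB' := tsum_cong (eu_dvd c (s + 1)) N'
    have fin : (∑ k ∈ range (N' + 1), eu c s k) - (∑ k ∈ range (N' + 1), eu c (s + 1) k)
        = -(C c * q ^ (s + 1)) * ∑ k ∈ range N', eu c (s + 1) k := by
      rw [← Finset.sum_sub_distrib, Finset.sum_range_succ']
      rw [eu_zero, eu_zero, sub_self, add_zero, Finset.mul_sum]
      exact Finset.sum_congr rfl fun k _ => eu_term c s k
    have comb : (∑' k, eu c s k) - (1 - C c * q ^ (s + 1)) * ∑' k, eu c (s + 1) k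
        = (((∑' k, eu c s k) - ∑ k ∈ range (N' + 1), eu c s k)
            - ((∑' k, eu c (s + 1) k) - ∑ k ∈ range (N' + 1), eu c (s + 1) k))
          + (C c * q ^ (s + 1)) *
            ((∑' k, eu c (s + 1) k) - ∑ k ∈ range N', eu c (s + 1) k) := by
      linear_combination fin
    rw [comb]
    apply dvd_add (dvd_sub hA hB)
    have hx : (X : M) ^ (N' + 1) = X ^ 1 * X ^ N' := by rw [← pow_add]; ring_nf
    rw [hx]
    apply mul_dvd_mul _ hB'
    rw [q_X]
    exact (pow_dvd_pow _ (Nat.succ_le_succ (Nat.zero_le s))).mul_left _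

lemma Gfe (c : ℂ) (s : ℕ) :
    pochInf (C c * q ^ (s + 1)) q
      = (1 - C c * q ^ (s + 1)) * pochInf (C c * q ^ (s + 1 + 1)) q := by
  have := pochInf_funEq (C c * q ^ (s + 1))
  rw [mul_assoc, ← pow_succ] at this
  exact this

lemma H_one (c : ℂ) (s : ℕ) : (X : M) ^ (s + 1) ∣ (∑' k, eu c s k) - 1 := by
  have h1 := tsum_cong (eu_dvd c s) (s + 1)
  have h2 : (X : M) ^ (s + 1) ∣ (∑ k ∈ range (s + 1), eu c s k) - 1 := by
    rw [Finset.sum_range_succ', eu_zero, add_sub_cancel_right]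
    exact Finset.dvd_sum fun k _ => eu_dvd' c s k
  simpa using dvd_add h1 h2

lemma G_one (c : ℂ) (s : ℕ) : (X : M) ^ (s + 1) ∣ pochInf (C c * q ^ (s + 1)) q - 1 :=
  pochInf_one (by rw [q_X]; exact (pow_dvd_pow _ le_rfl).mul_left _)

lemma euler (c : ℂ) (t : ℕ) : pochInf (C c * q ^ (t + 1)) q = ∑' k, eu c t k := by
  apply eq_of_forall_dvd
  intro N
  have iter : ∀ (F : ℕ → M), (∀ s, F s = (1 - C c * q ^ (s + 1)) * F (s + 1)) →
      F t = (∏ i ∈ range N, (1 - C c * q ^ (t + 1 + i))) * F (t + N) := by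
    intro F hF
    induction N with
    | zero => simp
    | succ N ih =>
      rw [ih, hF (t + N), Finset.prod_range_succ,
        show t + 1 + N = t + N + 1 from by omega, show t + (N + 1) = t + N + 1 from by omega]
      ring
  have hG := iter (fun s => pochInf (C c * q ^ (s + 1)) q) (fun s => Gfe c s)
  have hH := iter (fun s => ∑' k, eu c s k) (fun s => Hfe c s)
  rw [hG, hH, ← mul_sub]
  apply Dvd.dvd.mul_left
  have h1 := G_one c (t + N)
  have h2 := H_one c (t + N)
  have h3 : (X : M) ^ N ∣ (pochInf (C c * q ^ (t + N + 1)) q - 1) := 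
    (pow_dvd_pow _ (by omega)).trans h1
  have h4 : (X : M) ^ N ∣ ((∑' k, eu c (t + N) k) - 1) :=
    (pow_dvd_pow _ (by omega)).trans h2
  have := dvd_sub h3 h4
  simpa using this


lemma main_c (m : ℕ) (hm : 2 ≤ m) (c : ℂ) :
    (∑' n, q ^ (m * n) * Ps (n + 1) * pochInf (C c * q ^ (n + 1)) q)
      = ∑' k, (-1 : M) ^ k * C (c ^ k) * q ^ tri k * poch (q ^ (k + 1)) q (m - 1) := by
  have hL : ∀ n, (X : M) ^ n ∣ q ^ (m * n) * Ps (n + 1) * pochInf (C c * q ^ (n + 1)) q := by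
    intro n
    apply dvd_mul_of_dvd_left
    apply dvd_mul_of_dvd_left
    rw [q_X]
    exact pow_dvd_pow _ (Nat.le_mul_of_pos_left n (by omega))
  have hR : ∀ k, (X : M) ^ k ∣
      (-1 : M) ^ k * C (c ^ k) * q ^ tri k * poch (q ^ (k + 1)) q (m - 1) := by
    intro k
    apply dvd_mul_of_dvd_left
    apply dvd_mul_of_dvd_right
    rw [q_X]
    exact pow_dvd_pow _ (tri_ge k)
  have hterm : ∀ n k : ℕ, q ^ (m * n) * Ps (n + 1) * eu c n k
      = ((-1 : M) ^ k * C (c ^ k) * q ^ tri k * (Pq k)⁻¹) * (q ^ ((m + k) * n) * Ps (n + 1)) := by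
    intro n k
    unfold eu
    have e1 : (m + k) * n = m * n + n * k := by ring
    rw [e1]
    simp only [pow_add]
    ring
  have hsplit : ∀ k, Pq (m - 1 + k) = Pq k * poch (q ^ (k + 1)) q (m - 1) := by
    intro k
    unfold Pq poch
    rw [show m - 1 + k = k + (m - 1) from by omega, Finset.prod_range_add]
    congr 1
    apply Finset.prod_congr rfl
    intro i _
    congr 1
    ring
  have hcancel : ∀ (k : ℕ) (R : M),
      ((-1 : M) ^ k * C (c ^ k) * q ^ tri k * (Pq k)⁻¹) * (Pq k * R)
        = (-1 : M) ^ k * C (c ^ k) * q ^ tri k * R := by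
    intro k R
    rw [mul_assoc, ← mul_assoc ((Pq k)⁻¹), Pq_inv_mul, one_mul]
  apply eq_of_forall_dvd
  intro N
  have h1 := tsum_cong hL N
  have h2 : (X : M) ^ N ∣ (∑ n ∈ range N, q ^ (m * n) * Ps (n + 1) * pochInf (C c * q ^ (n + 1)) q)
      - ∑ n ∈ range N, (q ^ (m * n) * Ps (n + 1)) * ∑ k ∈ range N, eu c n k := by
    apply dvd_sum_cong
    intro n _
    rw [euler c n, ← mul_sub]
    exact (tsum_cong (eu_dvd c n) N).mul_left _
  have h3 : (∑ n ∈ range N, (q ^ (m * n) * Ps (n + 1)) * ∑ k ∈ range N, eu c n k)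
      = ∑ k ∈ range N, ((-1 : M) ^ k * C (c ^ k) * q ^ tri k * (Pq k)⁻¹) *
          ∑ n ∈ range N, q ^ ((m + k) * n) * Ps (n + 1) := by
    simp only [Finset.mul_sum]
    rw [Finset.sum_comm]
    apply Finset.sum_congr rfl
    intro k _
    apply Finset.sum_congr rfl
    intro n _
    exact hterm n k
  have h4 : (X : M) ^ N ∣ (∑ k ∈ range N, ((-1 : M) ^ k * C (c ^ k) * q ^ tri k * (Pq k)⁻¹) *
          ∑ n ∈ range N, q ^ ((m + k) * n) * Ps (n + 1))
      - ∑ k ∈ range N, ((-1 : M) ^ k * C (c ^ k) * q ^ tri k * (Pq k)⁻¹) * Pq (m - 1 + k) := by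
    apply dvd_sum_cong
    intro k _
    rw [← mul_sub]
    apply Dvd.dvd.mul_left
    have hS := tsum_cong (Ssum_dvd (m - 1 + k)) N
    rw [Ssum_eq, show m - 1 + k + 1 = m + k from by omega] at hS
    exact dvd_sub_comm.mp hS
  have h5 : (∑ k ∈ range N, ((-1 : M) ^ k * C (c ^ k) * q ^ tri k * (Pq k)⁻¹) * Pq (m - 1 + k))
      = ∑ k ∈ range N, (-1 : M) ^ k * C (c ^ k) * q ^ tri k * poch (q ^ (k + 1)) q (m - 1) := by
    apply Finset.sum_congr rfl
    intro k _
    rw [hsplit k, hcancel]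
  have h6 := tsum_cong hR N
  have hTL := dvd_add h1 h2
  rw [sub_add_sub_cancel] at hTL
  rw [h3] at hTL
  have hTL2 := dvd_add hTL h4
  rw [sub_add_sub_cancel] at hTL2
  rw [h5] at hTL2
  have := dvd_sub hTL2 h6
  rwa [sub_sub_sub_cancel_right] at this


lemma termL_dvd (m : ℕ) (hm : 2 ≤ m) (c : ℂ) :
    ∀ n, (X : M) ^ n ∣ q ^ (m * n) * Ps (n + 1) * pochInf (C c * q ^ (n + 1)) q := by
  intro n
  apply dvd_mul_of_dvd_left
  apply dvd_mul_of_dvd_left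
  rw [q_X]
  exact pow_dvd_pow _ (Nat.le_mul_of_pos_left n (by omega))

lemma termR_dvd (m : ℕ) (c : ℂ) :
    ∀ k, (X : M) ^ k ∣ (-1 : M) ^ k * C (c ^ k) * q ^ tri k * poch (q ^ (k + 1)) q (m - 1) := by
  intro k
  apply dvd_mul_of_dvd_left
  apply dvd_mul_of_dvd_right
  rw [q_X]
  exact pow_dvd_pow _ (tri_ge k)

lemma zeta_pow_sum (m : ℕ) (hm : 2 ≤ m) (k : ℕ) :
    ∑ j ∈ Finset.Icc 1 (m - 1), (Complex.exp (2 * Real.pi * Complex.I / m) ^ j) ^ k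
      = chim m k := by
  set z : ℂ := Complex.exp (2 * Real.pi * Complex.I / m) with hz
  have hm0 : (m : ℂ) ≠ 0 := Nat.cast_ne_zero.mpr (by omega)
  have hzm : z ^ m = 1 := by
    rw [hz, ← Complex.exp_nat_mul]
    have h : (m : ℂ) * (2 * Real.pi * Complex.I / m) = 2 * Real.pi * Complex.I := by
      field_simp
    rw [h, Complex.exp_two_pi_mul_I]
  have hpi : (2 * (Real.pi : ℂ) * Complex.I : ℂ) ≠ 0 := by
    simp [Complex.I_ne_zero, Real.pi_ne_zero, Complex.ofReal_ne_zero]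
  have hzk : z ^ k = 1 ↔ m ∣ k := by
    constructor
    · intro h
      rw [hz, ← Complex.exp_nat_mul, Complex.exp_eq_one_iff] at h
      obtain ⟨n, hn⟩ := h
      have h2 : (k : ℂ) * (2 * Real.pi * Complex.I) = (n * m) * (2 * Real.pi * Complex.I) := by
        field_simp at hn
        linear_combination (2 * (Real.pi : ℂ) * Complex.I) * hn
      have hk : (k : ℂ) = n * m := mul_right_cancel₀ hpi h2
      have hkz : (k : ℤ) = n * m := by exact_mod_cast hk
      have hdvd : (m : ℤ) ∣ (k : ℤ) := ⟨n, by linear_combination hkz⟩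
      exact_mod_cast hdvd
    · rintro ⟨a, rfl⟩
      rw [pow_mul, hzm, one_pow]
  have hswap : ∀ j, (z ^ j) ^ k = (z ^ k) ^ j := fun j => by
    rw [← pow_mul, mul_comm, pow_mul]
  rw [Finset.sum_congr rfl fun j _ => hswap j]
  by_cases hdvd : m ∣ k
  · rw [hzk.mpr hdvd]
    simp only [one_pow]
    rw [Finset.sum_const, Nat.card_Icc]
    unfold chim
    rw [if_pos hdvd, show m - 1 + 1 - 1 = m - 1 from by omega, nsmul_eq_mul, mul_one,
      Nat.cast_sub (by omega), Nat.cast_one]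
  · have hw : z ^ k ≠ 1 := fun h => hdvd (hzk.mp h)
    have hwm : (z ^ k) ^ m = 1 := by rw [← pow_mul, mul_comm, pow_mul, hzm, one_pow]
    have hgeom : ∑ j ∈ Finset.range m, (z ^ k) ^ j = 0 := by
      rw [geom_sum_eq hw, hwm]
      simp
    have hIco : Finset.Ico 1 m = Finset.Icc 1 (m - 1) := by
      rw [← Finset.Ico_add_one_right_eq_Icc]
      congr 1
      omega
    rw [Finset.range_eq_Ico, Finset.sum_eq_sum_Ico_succ_bot (by omega : 0 < m), hIco] at hgeom
    simp only [pow_zero] at hgeom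
    unfold chim
    rw [if_neg hdvd]
    linear_combination hgeom


lemma final (m : ℕ) (hm : 2 ≤ m) :
    (∑' n : ℕ, q ^ (m * n) * pochInf (q ^ (n + 1)) q *
      ∑ j ∈ Finset.Icc 1 (m - 1),
        pochInf (C (Complex.exp (2 * Real.pi * Complex.I / m) ^ j) * q ^ (n + 1)) q) =
    ∑' k : ℕ, (-1 : M) ^ k * C (chim m k) * q ^ tri k * poch (q ^ (k + 1)) q (m - 1) := by
  set z : ℂ := Complex.exp (2 * Real.pi * Complex.I / m) with hz
  apply eq_of_forall_dvd
  intro N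
  have hLd : ∀ n, (X : M) ^ n ∣ q ^ (m * n) * pochInf (q ^ (n + 1)) q *
      ∑ j ∈ Finset.Icc 1 (m - 1), pochInf (C (z ^ j) * q ^ (n + 1)) q := by
    intro n
    apply dvd_mul_of_dvd_left
    apply dvd_mul_of_dvd_left
    rw [q_X]
    exact pow_dvd_pow _ (Nat.le_mul_of_pos_left n (by omega))
  have hRd : ∀ k, (X : M) ^ k ∣
      (-1 : M) ^ k * C (chim m k) * q ^ tri k * poch (q ^ (k + 1)) q (m - 1) := by
    intro k
    apply dvd_mul_of_dvd_left
    apply dvd_mul_of_dvd_right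
    rw [q_X]
    exact pow_dvd_pow _ (tri_ge k)
  have h1 := tsum_cong hLd N
  have h2 : (∑ n ∈ range N, (q ^ (m * n) * pochInf (q ^ (n + 1)) q *
        ∑ j ∈ Finset.Icc 1 (m - 1), pochInf (C (z ^ j) * q ^ (n + 1)) q))
      = ∑ j ∈ Finset.Icc 1 (m - 1), ∑ n ∈ range N,
          q ^ (m * n) * Ps (n + 1) * pochInf (C (z ^ j) * q ^ (n + 1)) q := by
    simp only [Finset.mul_sum, Ps]
    rw [Finset.sum_comm]
  have h3 : (X : M) ^ N ∣ (∑ j ∈ Finset.Icc 1 (m - 1), ∑ n ∈ range N,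
        q ^ (m * n) * Ps (n + 1) * pochInf (C (z ^ j) * q ^ (n + 1)) q)
      - ∑ j ∈ Finset.Icc 1 (m - 1), ∑' n, q ^ (m * n) * Ps (n + 1) *
          pochInf (C (z ^ j) * q ^ (n + 1)) q := by
    apply dvd_sum_cong
    intro j _
    exact dvd_sub_comm.mp (tsum_cong (termL_dvd m hm (z ^ j)) N)
  have h4 : (∑ j ∈ Finset.Icc 1 (m - 1), ∑' n, q ^ (m * n) * Ps (n + 1) *
        pochInf (C (z ^ j) * q ^ (n + 1)) q)
      = ∑ j ∈ Finset.Icc 1 (m - 1), ∑' k, (-1 : M) ^ k * C ((z ^ j) ^ k) * q ^ tri k *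
          poch (q ^ (k + 1)) q (m - 1) :=
    Finset.sum_congr rfl fun j _ => main_c m hm (z ^ j)
  have h5 : (X : M) ^ N ∣ (∑ j ∈ Finset.Icc 1 (m - 1), ∑' k, (-1 : M) ^ k * C ((z ^ j) ^ k) *
        q ^ tri k * poch (q ^ (k + 1)) q (m - 1))
      - ∑ j ∈ Finset.Icc 1 (m - 1), ∑ k ∈ range N, (-1 : M) ^ k * C ((z ^ j) ^ k) *
          q ^ tri k * poch (q ^ (k + 1)) q (m - 1) := by
    apply dvd_sum_cong
    intro j _
    exact tsum_cong (termR_dvd m (z ^ j)) N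
  have h6 : (∑ j ∈ Finset.Icc 1 (m - 1), ∑ k ∈ range N, (-1 : M) ^ k * C ((z ^ j) ^ k) *
        q ^ tri k * poch (q ^ (k + 1)) q (m - 1))
      = ∑ k ∈ range N, (-1 : M) ^ k * C (chim m k) * q ^ tri k *
          poch (q ^ (k + 1)) q (m - 1) := by
    rw [Finset.sum_comm]
    apply Finset.sum_congr rfl
    intro k _
    rw [← Finset.sum_mul, ← Finset.sum_mul, ← Finset.mul_sum, ← map_sum,
      zeta_pow_sum m hm k]
  have h7 := tsum_cong hRd N
  rw [h2] at h1
  have a1 := dvd_add h1 h3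
  rw [sub_add_sub_cancel, h4] at a1
  have a2 := dvd_add a1 h5
  rw [sub_add_sub_cancel, h6] at a2
  have a3 := dvd_sub a2 h7
  rwa [sub_sub_sub_cancel_right] at a3

end Aux

/-- Equation (4.2): `∑_{n≥0} q^{mn}(q^{n+1};q)_∞ ∑_{j=1}^{m-1}(ζₘʲq^{n+1};q)_∞
= ∑_{k≥0} (-1)ᵏ χₘ(k) q^{k(k+1)/2} (q^{k+1};q)_{m-1}`. -/
theorem eps_m_eval (m : ℕ) (hm : 2 ≤ m) :
    (∑' n : ℕ, q ^ (m * n) * pochInf (q ^ (n + 1)) q *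
      ∑ j ∈ Finset.Icc 1 (m - 1),
        pochInf (PowerSeries.C (Complex.exp (2 * Real.pi * Complex.I / m) ^ j) *
          q ^ (n + 1)) q) =
    ∑' k : ℕ, (-1 : PowerSeries ℂ) ^ k * PowerSeries.C (chim m k) *
      q ^ (k * (k + 1) / 2) * poch (q ^ (k + 1)) q (m - 1) := by
  have h := Aux.final m hm
  simp only [Aux.tri] at h
  exact h
end

section
/- For every integer m ≥ 2, the coefficient E_m(n) of q^n in ε_m(q) = ∑_{k≥0} (−1)^k χ_m(k) q^{k(k+1)/2} (q^{k+1}; q)_{m−1} is zero for all n outside a set of density zero; specifically the number of n < x with E_m(n) ≠ 0 is at most (2^{m−1} − m)(√(2x) + 1) plus a constant depending only on m. -/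
open PowerSeries

/-- `Em m n` is the coefficient of `qⁿ` in
`εₘ(q) = ∑_{k≥0} (-1)ᵏ χₘ(k) q^{k(k+1)/2} (q^{k+1};q)_{m-1}`. -/
noncomputable def Em (m n : ℕ) : ℂ :=
  PowerSeries.coeff n
    (∑' k : ℕ, (-1 : PowerSeries ℂ) ^ k * PowerSeries.C (chim m k) *
      q ^ (k * (k + 1) / 2) * poch (q ^ (k + 1)) q (m - 1))

def tri (k : ℕ) : ℕ := k * (k + 1) / 2
def ex (k : ℕ) (S : Finset ℕ) : ℕ := tri k + ∑ i ∈ S, (k + 1 + i)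

lemma tri_succ (n : ℕ) : tri (n + 1) = tri n + (n + 1) := by
  obtain ⟨c, hc⟩ := Nat.even_mul_succ_self n
  have h2 : (n+1) * (n+1+1) = n * (n+1) + 2*(n+1) := by ring
  simp only [tri]
  omega

lemma tri_strictMono : StrictMono tri :=
  strictMono_nat_of_lt_succ (fun n => by rw [tri_succ]; omega)

lemma le_tri (k : ℕ) : k ≤ tri k := by
  induction k with
  | zero => simp [tri]
  | succ n ih => rw [tri_succ]; omega

lemma two_tri (k : ℕ) : 2 * tri k = k * (k+1) := by
  obtain ⟨c, hc⟩ := Nat.even_mul_succ_self k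
  simp only [tri]; omega

lemma ex_range (k j : ℕ) : ex k (Finset.range j) = tri (k + j) := by
  induction j with
  | zero => simp [ex]
  | succ j ih =>
    rw [show k + (j+1) = (k+j) + 1 from rfl, tri_succ, ← ih]
    rw [ex, ex, Finset.sum_range_succ]
    omega

lemma prod_neg' (S : Finset ℕ) (f : ℕ → PowerSeries ℂ) :
    (∏ i ∈ S, -(f i)) = (-1)^S.card * ∏ i ∈ S, f i := by
  induction S using Finset.induction with
  | empty => simp
  | insert h ih => simp_all [Finset.prod_insert, pow_succ]; ring

lemma poch_eq (k t : ℕ) : poch (q ^ (k+1)) q t =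
    ∑ S ∈ (Finset.range t).powerset,
      (-1 : PowerSeries ℂ) ^ S.card * PowerSeries.X ^ (∑ i ∈ S, (k + 1 + i)) := by
  rw [poch]
  have h : ∀ i ∈ Finset.range t, (1 : PowerSeries ℂ) - q ^ (k+1) * q ^ i
      = -(PowerSeries.X ^ (k+1+i)) + 1 := by
    intro i _; rw [q, ← pow_add]; ring
  rw [Finset.prod_congr rfl h, Finset.prod_add]
  refine Finset.sum_congr rfl fun S hS => ?_
  rw [Finset.prod_const_one, mul_one, ← Finset.prod_pow_eq_pow_sum, prod_neg']

-- the k-th term of the series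
noncomputable def term (m k : ℕ) : PowerSeries ℂ :=
  (-1 : PowerSeries ℂ) ^ k * PowerSeries.C (chim m k) *
      q ^ (k * (k + 1) / 2) * poch (q ^ (k + 1)) q (m - 1)

lemma coeff_term (m k n : ℕ) :
    PowerSeries.coeff n (term m k) =
      ∑ S ∈ (Finset.range (m-1)).powerset,
        (if ex k S = n then (-1 : ℂ)^(k + S.card) * chim m k else 0) := by
  rw [term, poch_eq, Finset.mul_sum, map_sum]
  refine Finset.sum_congr rfl fun S hS => ?_
  have : (-1 : PowerSeries ℂ) ^ k * PowerSeries.C (chim m k) * q ^ (k * (k + 1) / 2) *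
      ((-1 : PowerSeries ℂ) ^ S.card * PowerSeries.X ^ (∑ i ∈ S, (k + 1 + i)))
      = PowerSeries.C ((-1 : ℂ)^(k + S.card) * chim m k) *
        PowerSeries.X ^ (ex k S) := by
    rw [q, ex, pow_add, pow_add, map_mul, map_mul, map_pow, map_pow, map_neg, map_one]
    show _ = _ * (PowerSeries.X ^ tri k * PowerSeries.X ^ (∑ i ∈ S, (k+1+i)))
    rw [tri]
    ring
  rw [this, PowerSeries.coeff_C_mul, PowerSeries.coeff_X_pow]
  rcases eq_or_ne (ex k S) n with h | h
  · simp [h]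
  · simp [h, h.symm]

lemma coeff_term_zero (m k n : ℕ) (h : n < tri k) :
    PowerSeries.coeff n (term m k) = 0 := by
  rw [coeff_term]
  refine Finset.sum_eq_zero fun S hS => ?_
  have : ex k S ≠ n := fun he => absurd he.symm (by have := Nat.le_add_right (tri k) (∑ i ∈ S, (k+1+i)); rw [← ex] at this; omega)
  simp [this]

lemma summable_term (m : ℕ) : Summable (fun k => term m k) := by
  rw [show (fun k => term m k) = (fun k => (term m k : (Unit →₀ ℕ) → ℂ)) from rfl]
  refine Pi.summable.2 ?_
  intro d
  refine summable_of_ne_finset_zero (s := Finset.range (d () + 1)) fun k hk => ?_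
  simp only [Finset.mem_range, not_lt] at hk
  have h1 : d = Finsupp.single () (d ()) := Finsupp.ext fun a => by cases a; simp
  rw [h1]
  show PowerSeries.coeff (d ()) (term m k) = 0
  rw [coeff_term_zero]
  have := le_tri k
  omega

lemma Em_eq (m n : ℕ) : Em m n = ∑ k ∈ Finset.range (n+1),
    ∑ S ∈ (Finset.range (m-1)).powerset,
      (if ex k S = n then (-1 : ℂ)^(k + S.card) * chim m k else 0) := by
  have h0 : Em m n = PowerSeries.coeff n (∑' k, term m k) := rfl
  have h1 : PowerSeries.coeff n (∑' k, term m k)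
      = (∑' k, term m k) (Finsupp.single () n) := rfl
  have h2 : (∑' k, term m k) (Finsupp.single () n)
      = ∑' k, (term m k) (Finsupp.single () n) := tsum_apply (summable_term m)
  have h3 : ∀ k, (term m k) (Finsupp.single () n) = PowerSeries.coeff n (term m k) :=
    fun k => rfl
  rw [h0, h1, h2]
  simp_rw [h3]
  rw [tsum_eq_sum (s := Finset.range (n+1))]
  · exact Finset.sum_congr rfl fun k _ => coeff_term m k n
  · intro k hk
    simp only [Finset.mem_range, not_lt] at hk
    exact coeff_term_zero m k n (by have := le_tri k; omega)

lemma chim_window (m N : ℕ) (hm : 1 ≤ m) (hN : m - 1 ≤ N) :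
    ∑ j ∈ Finset.range m, chim m (N - j) = 0 := by
  have hrw : ∀ k : ℕ, chim m k = (if m ∣ k then (m:ℂ) else 0) - 1 := by
    intro k; rw [chim]; split <;> simp
  simp_rw [hrw, Finset.sum_sub_distrib, Finset.sum_const, Finset.card_range]
  have h1 : ∑ j ∈ Finset.range m, (if m ∣ (N - j) then (m:ℂ) else 0) = m := by
    rw [Finset.sum_eq_single (N % m)]
    · simp [Nat.dvd_sub_mod]
    · intro j hj hne
      rw [if_neg]
      rintro ⟨t, ht⟩
      simp only [Finset.mem_range] at hj
      have hjN : j ≤ N := by omega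
      have hNe : N = m * t + j := by omega
      exact hne (by rw [hNe, Nat.mul_add_mod, Nat.mod_eq_of_lt hj])
    · intro h
      exact absurd (Finset.mem_range.2 (Nat.mod_lt _ (by omega))) h
  rw [h1]
  simp

lemma Em_eq_zero (m n : ℕ) (hm : 2 ≤ m)
    (h1 : ∀ N, N < m - 1 → tri N ≠ n)
    (h2 : ∀ k S, S ⊆ Finset.range (m-1) → (∀ j, S ≠ Finset.range j) → ex k S ≠ n) :
    Em m n = 0 := by
  rw [Em_eq, ← Finset.sum_product']
  set f : ℕ × Finset ℕ → ℂ :=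
    fun p => if ex p.1 p.2 = n then (-1 : ℂ)^(p.1 + p.2.card) * chim m p.1 else 0 with hf
  show ∑ p ∈ Finset.range (n+1) ×ˢ (Finset.range (m-1)).powerset, f p = 0
  by_cases hT : ∃ N, tri N = n
  · obtain ⟨N, hN⟩ := hT
    have hNm : m - 1 ≤ N := by
      by_contra h
      exact h1 N (by omega) hN
    set P : Finset (ℕ × Finset ℕ) :=
      (Finset.range m).image (fun j => (N - j, Finset.range j)) with hP
    have hsub : P ⊆ Finset.range (n+1) ×ˢ (Finset.range (m-1)).powerset := by
      intro p hp
      simp only [hP, Finset.mem_image, Finset.mem_range] at hp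
      obtain ⟨j, hj, rfl⟩ := hp
      refine Finset.mem_product.2 ⟨Finset.mem_range.2 ?_, Finset.mem_powerset.2 ?_⟩
      · have := le_tri N; omega
      · exact Finset.range_subset_range.2 (by omega)
    have hzero : ∀ p ∈ Finset.range (n+1) ×ˢ (Finset.range (m-1)).powerset,
        p ∉ P → f p = 0 := by
      rintro ⟨k, S⟩ hpmem hpP
      by_cases he : ex k S = n
      · by_cases hpre : ∀ j, S ≠ Finset.range j
        · exact absurd he
            (h2 k S (Finset.mem_powerset.1 (Finset.mem_product.1 hpmem).2) hpre)
        · push_neg at hpre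
          obtain ⟨j, rfl⟩ := hpre
          exfalso
          apply hpP
          have hjm : j ≤ m - 1 :=
            Finset.range_subset_range.1 (Finset.mem_powerset.1 (Finset.mem_product.1 hpmem).2)
          have hkj : k + j = N := by
            apply tri_strictMono.injective
            rw [← ex_range, he, hN]
          simp only [hP, Finset.mem_image, Finset.mem_range]
          exact ⟨j, by omega, by simp [Prod.ext_iff]; omega⟩
      · simp [hf, he]
    rw [← Finset.sum_subset hsub hzero, hP, Finset.sum_image]
    · have hterm : ∀ j ∈ Finset.range m,
          f (N - j, Finset.range j) = (-1 : ℂ)^N * chim m (N - j) := by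
        intro j hj
        simp only [Finset.mem_range] at hj
        have hjN : j ≤ N := by omega
        have : ex (N - j) (Finset.range j) = n := by
          rw [ex_range, show N - j + j = N from by omega, hN]
        simp only [hf, this, if_pos, Finset.card_range]
        rw [show N - j + j = N from by omega]
      rw [Finset.sum_congr rfl hterm, ← Finset.mul_sum, chim_window m N (by omega) hNm,
        mul_zero]
    · intro a _ b _ hab
      have : Finset.range a = Finset.range b := congrArg Prod.snd hab
      have := congrArg Finset.card this
      simpa using this
  · push_neg at hT
    refine Finset.sum_eq_zero fun p hp => ?_
    by_cases he : ex p.1 p.2 = n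
    · by_cases hpre : ∀ j, p.2 ≠ Finset.range j
      · exact absurd he
          (h2 p.1 p.2 (Finset.mem_powerset.1 (Finset.mem_product.1 hp).2) hpre)
      · push_neg at hpre
        obtain ⟨j, hj⟩ := hpre
        exact absurd (by rw [← he, hj, ex_range]) (hT (p.1 + j)).symm
    · simp [hf, he]

open Classical in
noncomputable def badF (m x : ℕ) : Finset ℕ :=
  ((Finset.range (m-1)).image tri) ∪
  (((Finset.range (Nat.sqrt (2*x) + 1)) ×ˢ
    ((Finset.range (m-1)).powerset.filter (fun S => ∀ j, S ≠ Finset.range j))).image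
      (fun p => ex p.1 p.2))

lemma le_ex (k : ℕ) (S : Finset ℕ) : tri k ≤ ex k S := Nat.le_add_right _ _

lemma mem_badF (m x n : ℕ) (hm : 2 ≤ m) (hx : n < x) (hEm : Em m n ≠ 0) :
    n ∈ badF m x := by
  classical
  by_contra hbad
  apply hEm
  apply Em_eq_zero m n hm
  · intro N hN htri
    exact hbad (Finset.mem_union_left _ (Finset.mem_image.2 ⟨N, Finset.mem_range.2 hN, htri⟩))
  · intro k S hS hpre he
    apply hbad
    refine Finset.mem_union_right _ (Finset.mem_image.2 ⟨(k, S), ?_, he⟩)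
    refine Finset.mem_product.2 ⟨Finset.mem_range.2 ?_, Finset.mem_filter.2
      ⟨Finset.mem_powerset.2 hS, by convert hpre⟩⟩
    have hk : tri k ≤ n := le_trans (le_ex k S) (le_of_eq he)
    have h2t := two_tri k
    have hkk : k * k ≤ 2 * x := by nlinarith [Nat.mul_le_mul_left k (Nat.le_succ k)]
    have := Nat.le_sqrt.2 hkk
    omega

lemma succ_le_two_pow (n : ℕ) : n + 1 ≤ 2 ^ n := by
  induction n with
  | zero => simp
  | succ n ih => rw [pow_succ]; omega

lemma card_badF (m x : ℕ) (hm : 2 ≤ m) :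
    (badF m x).card ≤ (m - 1) + (Nat.sqrt (2*x) + 1) * (2^(m-1) - m) := by
  classical
  refine le_trans (Finset.card_union_le _ _) (Nat.add_le_add ?_ ?_)
  · exact le_trans (Finset.card_image_le) (by simp)
  · refine le_trans (Finset.card_image_le) ?_
    rw [Finset.card_product, Finset.card_range]
    refine Nat.mul_le_mul_left _ ?_
    have hkey : ((Finset.range (m-1)).powerset.filter
        (fun S => ¬ (∀ j, S ≠ Finset.range j))) = (Finset.range m).image Finset.range := by
      ext S
      simp only [Finset.mem_filter, Finset.mem_powerset, Finset.mem_image, Finset.mem_range,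
        not_forall, not_not]
      constructor
      · rintro ⟨hsub, j, rfl⟩
        exact ⟨j, by have := Finset.range_subset_range.1 hsub; omega, rfl⟩
      · rintro ⟨j, hj, rfl⟩
        exact ⟨Finset.range_subset_range.2 (by omega), j, rfl⟩
    have hcardim : ((Finset.range m).image Finset.range).card = m := by
      rw [Finset.card_image_of_injOn, Finset.card_range]
      intro a _ b _ hab
      have := congrArg Finset.card hab
      simpa using this
    have htot := Finset.card_filter_add_card_filter_not
      (s := (Finset.range (m-1)).powerset) (p := fun S => ∀ j, S ≠ Finset.range j)
    rw [hkey, hcardim, Finset.card_powerset, Finset.card_range] at htot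
    omega

/-- The nonzero coefficients of `εₘ(q)` have density zero: the number of `n < x` with
`Em m n ≠ 0` is at most `(2^{m-1} - m)(√(2x) + 1)` plus a constant depending only on `m`. -/
theorem Em_almost_always_zero (m : ℕ) (hm : 2 ≤ m) :
    ∃ c : ℝ, ∀ x : ℕ,
      (Nat.card {n : ℕ // n < x ∧ Em m n ≠ 0} : ℝ) ≤
        ((2 : ℝ) ^ (m - 1) - m) * (Real.sqrt (2 * x) + 1) + c := by
  refine ⟨(m : ℝ) - 1, fun x => ?_⟩
  set s := Nat.sqrt (2*x) with hs
  have hcard : Nat.card {n : ℕ // n < x ∧ Em m n ≠ 0}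
      ≤ (m - 1) + (s + 1) * (2^(m-1) - m) := by
    refine le_trans ?_ (card_badF m x hm)
    have h1 : Nat.card {n : ℕ // n < x ∧ Em m n ≠ 0}
        = Set.ncard {n : ℕ | n < x ∧ Em m n ≠ 0} := Nat.card_coe_set_eq _
    rw [h1, ← Set.ncard_coe_finset (badF m x)]
    exact Set.ncard_le_ncard (fun n hn => mem_badF m x n hm hn.1 hn.2)
      (Finset.finite_toSet _)
  have hm2 : m ≤ 2^(m-1) := by
    have := succ_le_two_pow (m-1)
    omega
  have hA : (0:ℝ) ≤ (2:ℝ)^(m-1) - m := by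
    have : ((m:ℝ)) ≤ ((2:ℝ))^(m-1) := by
      calc (m:ℝ) = ((m:ℕ):ℝ) := by norm_cast
      _ ≤ ((2^(m-1) : ℕ) : ℝ) := by exact_mod_cast hm2
      _ = (2:ℝ)^(m-1) := by push_cast; ring
    linarith
  have hsr : (s : ℝ) ≤ Real.sqrt (2*(x:ℝ)) := by
    refine (Real.le_sqrt (by positivity) (by positivity)).2 ?_
    calc (s:ℝ)^2 = ((s*s : ℕ) : ℝ) := by push_cast; ring
    _ ≤ ((2*x : ℕ) : ℝ) := by exact_mod_cast Nat.sqrt_le (2*x)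
    _ = (2:ℝ) * x := by push_cast; ring
  calc (Nat.card {n : ℕ // n < x ∧ Em m n ≠ 0} : ℝ)
      ≤ (((m - 1) + (s + 1) * (2^(m-1) - m) : ℕ) : ℝ) := by exact_mod_cast hcard
    _ = ((m:ℝ) - 1) + ((s:ℝ) + 1) * ((2:ℝ)^(m-1) - m) := by
        push_cast [Nat.cast_sub hm2, Nat.cast_sub (by omega : 1 ≤ m)]; ring
    _ ≤ ((2:ℝ)^(m-1) - m) * (Real.sqrt (2*x) + 1) + ((m:ℝ) - 1) := by nlinarith
end

section
/- For every integer m ≥ 2 and positive integer n: A_m(n) = ∑_{k=1}^{m−2} B_m^{(k)}(n) + C_m(n+1), where A_m(n) is the number of partitions of n with each part occurring fewer than m times, B_m^{(k)}(n) is the number of partitions of n into parts not divisible by m with largest part ≡ k (mod m), and C_m(n) is the number of partitions of n with largest part m·j and all parts ≤ j occurring fewer than m times. -/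
namespace GLZ
def ν (m b : ℕ) : ℕ := Nat.maxPowDiv m b
def cor (m b : ℕ) : ℕ := b / m ^ ν m b
lemma pow_nu_dvd (m b : ℕ) : m ^ ν m b ∣ b := pow_padicValNat_dvd
lemma cor_mul (m b : ℕ) : m ^ ν m b * cor m b = b := Nat.mul_div_cancel' (pow_nu_dvd m b)
lemma nu_eq_zero {m x : ℕ} (hx : ¬ m ∣ x) : ν m x = 0 := by
  by_contra h
  exact hx ((dvd_pow_self m h).trans (pow_nu_dvd m x))
lemma nu_mul_pow {m x : ℕ} (hm : 2 ≤ m) (hx : 0 < x) (hxd : ¬ m ∣ x) (i : ℕ) :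
    ν m (x * m ^ i) = i := by
  have h := padicValNat_base_pow_mul (p := m) (n := x) (k := i) (by omega) (by omega)
  rw [mul_comm] at h
  show padicValNat m (x * m ^ i) = i
  rw [h]
  have : padicValNat m x = ν m x := rfl
  rw [this, nu_eq_zero hxd, zero_add]
lemma cor_mul_pow {m x : ℕ} (hm : 2 ≤ m) (hx : 0 < x) (hxd : ¬ m ∣ x) (i : ℕ) :
    cor m (x * m ^ i) = x := by
  unfold cor
  rw [nu_mul_pow hm hx hxd i]
  exact Nat.mul_div_cancel x (by positivity)
lemma not_dvd_cor {m b : ℕ} (hm : 2 ≤ m) (hb : 0 < b) : ¬ m ∣ cor m b := by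
  intro h
  have h2 : m ^ (ν m b + 1) ∣ b := by
    rw [pow_succ]
    calc m ^ ν m b * m ∣ m ^ ν m b * cor m b := mul_dvd_mul_left _ h
    _ = b := cor_mul m b
  have : ν m b + 1 ≤ ν m b := (Nat.pow_dvd_iff_le_padicValNat (by omega) (by omega)).mp h2
  simp only [ν] at *
  omega
lemma cor_pos {m b : ℕ} (hm : 2 ≤ m) (hb : 0 < b) : 0 < cor m b :=
  Nat.div_pos (Nat.le_of_dvd hb (pow_nu_dvd m b)) (by positivity)
lemma cor_le (m b : ℕ) : cor m b ≤ b := Nat.div_le_self _ _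
lemma cor_spec (m b : ℕ) : b = cor m b * m ^ ν m b := by
  rw [mul_comm]; exact (cor_mul m b).symm

/-! ### psi -/

def psi (m : ℕ) (s : Multiset ℕ) : Multiset ℕ :=
  s.bind fun b => Multiset.replicate (m ^ ν m b) (cor m b)

lemma psi_sum (m : ℕ) (s : Multiset ℕ) : (psi m s).sum = s.sum := by
  unfold psi
  rw [Multiset.sum_bind]
  have : ∀ b : ℕ, (Multiset.replicate (m ^ ν m b) (cor m b)).sum = b := by
    intro b
    rw [Multiset.sum_replicate, smul_eq_mul, cor_mul]
  calc (s.map fun b => (Multiset.replicate (m ^ ν m b) (cor m b)).sum).sum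
      = (s.map id).sum := by
        congr 1
        exact Multiset.map_congr rfl fun b _ => this b
    _ = s.sum := by rw [Multiset.map_id]

lemma mem_psi {m : ℕ} (hm : 2 ≤ m) {s : Multiset ℕ} {b : ℕ} :
    b ∈ psi m s ↔ ∃ c ∈ s, b = cor m c := by
  unfold psi
  rw [Multiset.mem_bind]
  constructor
  · rintro ⟨c, hc, hb⟩
    exact ⟨c, hc, (Multiset.eq_of_mem_replicate hb)⟩
  · rintro ⟨c, hc, hb⟩
    refine ⟨c, hc, ?_⟩
    rw [Multiset.mem_replicate]
    exact ⟨by positivity, hb⟩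

lemma psi_pos {m : ℕ} (hm : 2 ≤ m) {s : Multiset ℕ} (hs : ∀ a ∈ s, 0 < a) :
    ∀ b ∈ psi m s, 0 < b := by
  intro b hb
  obtain ⟨c, hc, rfl⟩ := (mem_psi hm).mp hb
  exact cor_pos hm (hs c hc)

lemma psi_reg {m : ℕ} (hm : 2 ≤ m) {s : Multiset ℕ} (hs : ∀ a ∈ s, 0 < a) :
    ∀ b ∈ psi m s, ¬ m ∣ b := by
  intro b hb
  obtain ⟨c, hc, rfl⟩ := (mem_psi hm).mp hb
  exact not_dvd_cor hm (hs c hc)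

lemma psi_le {m c : ℕ} (hm : 2 ≤ m) {s : Multiset ℕ} (hs : ∀ a ∈ s, a ≤ c) :
    ∀ b ∈ psi m s, b ≤ c := by
  intro b hb
  obtain ⟨d, hd, rfl⟩ := (mem_psi hm).mp hb
  exact le_trans (cor_le m d) (hs d hd)

lemma psi_count {m : ℕ} (hm : 2 ≤ m) (s : Multiset ℕ) {x : ℕ} (hx : 0 < x) (hxd : ¬ m ∣ x)
    {K : ℕ} (hK : ∀ b ∈ s, b < x * m ^ K) :
    (psi m s).count x = ∑ i ∈ Finset.range K, m ^ i * s.count (x * m ^ i) := by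
  induction s using Multiset.induction_on with
  | empty => simp [psi]
  | cons c s ih =>
    have hK' : ∀ b ∈ s, b < x * m ^ K := fun b hb => hK b (Multiset.mem_cons_of_mem hb)
    unfold psi at *
    rw [Multiset.cons_bind, Multiset.count_add, ih hK']
    have hrep : Multiset.count x (Multiset.replicate (m ^ ν m c) (cor m c)) =
        ∑ i ∈ Finset.range K, m ^ i * (if c = x * m ^ i then 1 else 0) := by
      rw [Multiset.count_replicate]
      by_cases hxc : x = cor m c
      · have hc : c = x * m ^ ν m c := by rw [hxc]; exact cor_spec m c
        have hνK : ν m c < K := by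
          have := hK c (Multiset.mem_cons_self c s)
          rw [hc] at this
          have := Nat.lt_of_mul_lt_mul_left this
          exact (Nat.pow_lt_pow_iff_right (by omega)).mp this
        have hcond : ∀ i, (c = x * m ^ i) ↔ i = ν m c := by
          intro i
          constructor
          · intro h
            have := nu_mul_pow hm hx hxd i
            rw [← h] at this
            omega
          · intro h; rw [h, ← hc]
        rw [if_pos hxc.symm]
        have hterm : ∀ i ∈ Finset.range K, m ^ i * (if c = x * m ^ i then 1 else 0)
            = if i = ν m c then m ^ i else 0 := by
          intro i _
          by_cases h : i = ν m c
          · rw [if_pos h, if_pos ((hcond i).mpr h), mul_one]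
          · rw [if_neg h, if_neg (fun hh => h ((hcond i).mp hh)), mul_zero]
        rw [Finset.sum_congr rfl hterm,
          Finset.sum_ite_eq' (Finset.range K) (ν m c) (fun i => m ^ i),
          if_pos (Finset.mem_range.mpr hνK)]
      · rw [if_neg (fun h => hxc h.symm)]
        symm
        apply Finset.sum_eq_zero
        intro i _
        have : ¬ (c = x * m ^ i) := by
          intro h
          exact hxc (by rw [h, cor_mul_pow hm hx hxd])
        rw [if_neg this, mul_zero]
    rw [hrep]
    rw [← Finset.sum_add_distrib]
    apply Finset.sum_congr rfl
    intro i _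
    rw [Multiset.count_cons]
    by_cases h : x * m ^ i = c
    · rw [if_pos h, if_pos h.symm]; ring
    · rw [if_neg h, if_neg (fun hh => h hh.symm)]; ring

/-! ### digits -/

def dig (m T N i : ℕ) : ℕ := if i < T then N / m ^ i % m else N / m ^ T

lemma dig_zero (m T i : ℕ) : dig m T 0 i = 0 := by
  unfold dig; split <;> simp

lemma dig_lt {m : ℕ} (hm : 2 ≤ m) (T N i : ℕ) (h : i < T) : dig m T N i < m := by
  unfold dig
  rw [if_pos h]
  exact Nat.mod_lt _ (by omega)

/-- reconstruction of a number from its truncated digits -/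
lemma sum_dig {m : ℕ} (hm : 2 ≤ m) : ∀ T N, ∑ i ∈ Finset.range (T+1), m ^ i * dig m T N i = N := by
  intro T
  induction T with
  | zero => intro N; simp [dig]
  | succ T ih =>
    intro N
    rw [Finset.sum_range_succ']
    have h0 : m ^ 0 * dig m (T+1) N 0 = N % m := by
      simp [dig]
    have h1 : ∀ i ∈ Finset.range (T+1),
        m ^ (i+1) * dig m (T+1) N (i+1) = m * (m ^ i * dig m T (N / m) i) := by
      intro i hi
      have hi' : i ≤ T := by
        have := Finset.mem_range.mp hi; omega
      have hdd : N / m / m ^ i = N / m ^ (i+1) := by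
        rw [Nat.div_div_eq_div_mul, ← pow_succ']
      have hkey : dig m (T+1) N (i+1) = dig m T (N/m) i := by
        unfold dig
        by_cases h : i < T
        · rw [if_pos h, if_pos (by omega), hdd]
        · have hiT : i = T := by omega
          rw [if_neg h, if_neg (by omega), Nat.div_div_eq_div_mul, ← pow_succ']
      rw [hkey, pow_succ']
      ring
    rw [Finset.sum_congr rfl h1, h0, ← Finset.mul_sum, ih (N / m)]
    have := Nat.mod_add_div N m
    omega

lemma div_sum {m : ℕ} (hm : 2 ≤ m) :
    ∀ i T (e : ℕ → ℕ), (∀ k < T, e k < m) → i ≤ T →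
    (∑ k ∈ Finset.range (T+1), m ^ k * e k) / m ^ i
      = ∑ k ∈ Finset.range (T+1-i), m ^ k * e (k+i) := by
  intro i
  induction i with
  | zero => intro T e he hi; simp
  | succ i ih =>
    intro T e he hi
    have hiT : i ≤ T := by omega
    have h1 : (∑ k ∈ Finset.range (T+1), m ^ k * e k) / m ^ (i+1)
        = ((∑ k ∈ Finset.range (T+1), m ^ k * e k) / m ^ i) / m := by
      rw [Nat.div_div_eq_div_mul, ← pow_succ]
    rw [h1, ih T e he hiT]
    have hS : T + 1 - i = (T - i) + 1 := by omega
    rw [hS, Finset.sum_range_succ']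
    have h2 : ∀ k ∈ Finset.range (T - i), m ^ (k+1) * e (k+1+i) = m * (m ^ k * e (k+(i+1))) := by
      intro k _
      rw [pow_succ']
      have : k + 1 + i = k + (i+1) := by omega
      rw [this]; ring
    rw [Finset.sum_congr rfl h2, ← Finset.mul_sum]
    simp only [pow_zero, one_mul]
    rw [add_comm, Nat.add_mul_div_left _ _ (by omega : 0 < m)]
    rw [Nat.div_eq_of_lt (he (0+i) (by omega)), zero_add]
    have hT : T + 1 - (i+1) = T - i := by omega
    rw [hT]

/-- digit extraction -/
lemma dig_sum {m : ℕ} (hm : 2 ≤ m) (T : ℕ) (e : ℕ → ℕ) (he : ∀ k < T, e k < m) :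
    ∀ i ≤ T, dig m T (∑ k ∈ Finset.range (T+1), m ^ k * e k) i = e i := by
  intro i hi
  unfold dig
  by_cases h : i < T
  · rw [if_pos h, div_sum hm i T e he hi]
    have hS : T + 1 - i = (T - i - 1) + 1 + 1 := by omega
    rw [hS, Finset.sum_range_succ']
    simp only [pow_zero, one_mul, zero_add]
    rw [add_comm]
    have h2 : ∀ k ∈ Finset.range (T - i - 1 + 1), m ^ (k+1) * e (k+1+i) = m * (m ^ k * e (k+1+i)) := by
      intro k _
      rw [pow_succ']; ring
    rw [Finset.sum_congr rfl h2, ← Finset.mul_sum, Nat.add_mul_mod_self_left]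
    exact Nat.mod_eq_of_lt (he i h)
  · have hiT : i = T := by omega
    rw [if_neg h, div_sum hm T T e he le_rfl]
    simp [hiT]

/-! ### tA and phi -/

def tA (m j a : ℕ) : ℕ := Nat.log m (m * j / a)

lemma le_tA_iff {m j a : ℕ} (hm : 2 ≤ m) (ha : 0 < a) (haj : a ≤ m * j) (i : ℕ) :
    a * m ^ i ≤ m * j ↔ i ≤ tA m j a := by
  have hdiv : m * j / a ≠ 0 := by
    have : 0 < m * j / a := Nat.div_pos haj ha
    omega
  unfold tA
  rw [Nat.le_log_iff_pow_le (by omega) hdiv, Nat.le_div_iff_mul_le ha, mul_comm]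

lemma tA_big {m j a : ℕ} (hm : 2 ≤ m) (haj : m * j < a) : tA m j a = 0 := by
  unfold tA
  rw [Nat.div_eq_of_lt haj, Nat.log_zero_right]

def phi (m j : ℕ) (t : Multiset ℕ) : Multiset ℕ :=
  ∑ a ∈ t.toFinset, ∑ i ∈ Finset.range (tA m j a + 1),
    Multiset.replicate (dig m (tA m j a) (t.count a) i) (a * m ^ i)

lemma mem_phi {m j : ℕ} {t : Multiset ℕ} {b : ℕ} (hb : b ∈ phi m j t) :
    ∃ a ∈ t, ∃ i ≤ tA m j a, b = a * m ^ i := by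
  unfold phi at hb
  rw [Multiset.mem_sum] at hb
  obtain ⟨a, ha, hb⟩ := hb
  rw [Multiset.mem_sum] at hb
  obtain ⟨i, hi, hb⟩ := hb
  rw [Multiset.mem_replicate] at hb
  exact ⟨a, Multiset.mem_toFinset.mp ha, i, by
    have := Finset.mem_range.mp hi; omega, hb.2⟩

lemma phi_pos {m j : ℕ} (hm : 2 ≤ m) {t : Multiset ℕ} (ht : ∀ a ∈ t, 0 < a) :
    ∀ b ∈ phi m j t, 0 < b := by
  intro b hb
  obtain ⟨a, ha, i, _, rfl⟩ := mem_phi hb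
  have := ht a ha
  positivity

lemma phi_le {m j : ℕ} (hm : 2 ≤ m) {t : Multiset ℕ} (ht : ∀ a ∈ t, 0 < a)
    (hle : ∀ a ∈ t, a ≤ m * j) : ∀ b ∈ phi m j t, b ≤ m * j := by
  intro b hb
  obtain ⟨a, ha, i, hi, rfl⟩ := mem_phi hb
  exact (le_tA_iff hm (ht a ha) (hle a ha) i).mpr hi

lemma phi_count {m j : ℕ} (hm : 2 ≤ m) {t : Multiset ℕ} (hpos : ∀ a ∈ t, 0 < a)
    (hreg : ∀ a ∈ t, ¬ m ∣ a) {x : ℕ} (hx : 0 < x) (hxd : ¬ m ∣ x) (i : ℕ) :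
    (phi m j t).count (x * m ^ i) =
      if i ≤ tA m j x then dig m (tA m j x) (t.count x) i else 0 := by
  classical
  unfold phi
  rw [Multiset.count_sum']
  have hinner : ∀ a : ℕ, (Multiset.count (x * m ^ i) (∑ i' ∈ Finset.range (tA m j a + 1),
      Multiset.replicate (dig m (tA m j a) (t.count a) i') (a * m ^ i')))
      = ∑ i' ∈ Finset.range (tA m j a + 1),
        (if a * m ^ i' = x * m ^ i then dig m (tA m j a) (t.count a) i' else 0) := by
    intro a
    rw [Multiset.count_sum']
    apply Finset.sum_congr rfl
    intro i' _
    rw [Multiset.count_replicate]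
  rw [Finset.sum_congr rfl fun a _ => hinner a]
  rw [Finset.sum_eq_single x]
  · -- inner sum at x
    have hcond : ∀ i', (x * m ^ i' = x * m ^ i) ↔ i' = i := by
      intro i'
      constructor
      · intro h
        have := Nat.eq_of_mul_eq_mul_left hx h
        exact Nat.pow_right_injective hm this
      · intro h; rw [h]
    calc ∑ i' ∈ Finset.range (tA m j x + 1),
          (if x * m ^ i' = x * m ^ i then dig m (tA m j x) (t.count x) i' else 0)
        = ∑ i' ∈ Finset.range (tA m j x + 1),
          (if i' = i then dig m (tA m j x) (t.count x) i' else 0) := by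
          apply Finset.sum_congr rfl
          intro i' _
          by_cases h : i' = i
          · rw [if_pos h, if_pos ((hcond i').mpr h)]
          · rw [if_neg h, if_neg (fun hh => h ((hcond i').mp hh))]
      _ = if i ∈ Finset.range (tA m j x + 1) then dig m (tA m j x) (t.count x) i else 0 :=
          Finset.sum_ite_eq' _ _ _
      _ = if i ≤ tA m j x then dig m (tA m j x) (t.count x) i else 0 := by
          by_cases h : i ≤ tA m j x
          · rw [if_pos (Finset.mem_range.mpr (by omega)), if_pos h]
          · rw [if_neg (fun hh => h (by have := Finset.mem_range.mp hh; omega)), if_neg h]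
  · -- other a's give zero
    intro a ha hax
    apply Finset.sum_eq_zero
    intro i' _
    have hat : a ∈ t := Multiset.mem_toFinset.mp ha
    have : ¬ (a * m ^ i' = x * m ^ i) := by
      intro h
      have h1 : cor m (x * m ^ i) = x := cor_mul_pow hm hx hxd i
      have h2 : cor m (a * m ^ i') = a := cor_mul_pow hm (hpos a hat) (hreg a hat) i'
      rw [h] at h2
      exact hax (by rw [← h2, h1])
    rw [if_neg this]
  · -- x not in toFinset
    intro hx'
    have : t.count x = 0 :=
      Multiset.count_eq_zero.mpr (fun h => hx' (Multiset.mem_toFinset.mpr h))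
    rw [this]
    apply Finset.sum_eq_zero
    intro i' _
    rw [dig_zero]
    split <;> rfl

lemma phi_mult {m j : ℕ} (hm : 2 ≤ m) {t : Multiset ℕ} (hpos : ∀ a ∈ t, 0 < a)
    (hreg : ∀ a ∈ t, ¬ m ∣ a) : ∀ b ≤ j, (phi m j t).count b < m := by
  intro b hbj
  rcases Nat.eq_zero_or_pos b with hb | hb
  · have : b ∉ phi m j t := fun h => by have := phi_pos hm hpos b h; omega
    rw [Multiset.count_eq_zero.mpr this]
    omega
  · have hx : 0 < cor m b := cor_pos hm hb
    have hxd : ¬ m ∣ cor m b := not_dvd_cor hm hb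
    have hbe : b = cor m b * m ^ ν m b := cor_spec m b
    rw [hbe, phi_count hm hpos hreg hx hxd]
    by_cases hi : ν m b ≤ tA m j (cor m b)
    · rw [if_pos hi]
      have hxj : cor m b ≤ m * j := by
        calc cor m b ≤ b := cor_le m b
        _ ≤ j := hbj
        _ ≤ m * j := Nat.le_mul_of_pos_left j (by omega)
      have h1 : cor m b * m ^ (ν m b + 1) ≤ m * j := by
        rw [pow_succ, ← mul_assoc]
        calc cor m b * m ^ ν m b * m = b * m := by rw [← hbe]
        _ ≤ j * m := Nat.mul_le_mul_right m hbj
        _ = m * j := mul_comm _ _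
      have h2 : ν m b + 1 ≤ tA m j (cor m b) := (le_tA_iff hm hx hxj _).mp h1
      exact dig_lt hm _ _ _ (by omega)
    · rw [if_neg hi]; omega

lemma comp1 {m j : ℕ} (hm : 2 ≤ m) {s : Multiset ℕ} (hpos : ∀ a ∈ s, 0 < a)
    (hle : ∀ a ∈ s, a ≤ m * j) (hcnt : ∀ b ≤ j, s.count b < m) :
    phi m j (psi m s) = s := by
  ext b
  rcases Nat.eq_zero_or_pos b with hb | hb
  · subst hb
    rw [Multiset.count_eq_zero.mpr (fun h => by have := phi_pos hm (psi_pos hm hpos) 0 h; omega),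
      Multiset.count_eq_zero.mpr (fun h => by have := hpos 0 h; omega)]
  · set x := cor m b with hxdef
    set i := ν m b with hidef
    have hx : 0 < x := cor_pos hm hb
    have hxd : ¬ m ∣ x := not_dvd_cor hm hb
    have hbe : b = x * m ^ i := cor_spec m b
    rw [hbe, phi_count hm (psi_pos hm hpos) (psi_reg hm hpos) hx hxd]
    by_cases hxj : x ≤ m * j
    · have hmj0 : 0 < m * j := by omega
      have hlt : m * j < x * m ^ (tA m j x + 1) := by
        have h1 : m * j / x < m ^ (tA m j x + 1) := Nat.lt_pow_succ_log_self (by omega) _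
        have h2 := (Nat.div_lt_iff_lt_mul hx).mp h1
        calc m * j < m ^ (tA m j x + 1) * x := h2
        _ = x * m ^ (tA m j x + 1) := mul_comm _ _
      have hK : ∀ c ∈ s, c < x * m ^ (tA m j x + 1) := fun c hc =>
        lt_of_le_of_lt (hle c hc) hlt
      have hN := psi_count hm s hx hxd hK
      by_cases hi : i ≤ tA m j x
      · rw [if_pos hi, hN]
        have he : ∀ k < tA m j x, s.count (x * m ^ k) < m := by
          intro k hk
          have h1 : x * m ^ (k + 1) ≤ m * j := (le_tA_iff hm hx hxj _).mpr (by omega)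
          have h2 : x * m ^ k ≤ j := by
            have h3 : x * m ^ k * m ≤ j * m := by
              rw [mul_assoc, ← pow_succ]
              calc x * m ^ (k+1) ≤ m * j := h1
              _ = j * m := mul_comm _ _
            exact Nat.le_of_mul_le_mul_right h3 (by omega)
          exact hcnt _ h2
        exact dig_sum hm _ _ he i hi
      · rw [if_neg hi]
        symm
        rw [Multiset.count_eq_zero]
        intro hmem
        have h1 : x * m ^ i ≤ m * j := hle _ hmem
        exact hi ((le_tA_iff hm hx hxj i).mp h1)
    · have htA : tA m j x = 0 := tA_big hm (by omega)
      rcases Nat.eq_zero_or_pos i with hi0 | hi0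
      · rw [if_pos (by omega)]
        have hK : ∀ c ∈ s, c < x * m ^ 1 := by
          intro c hc
          have := hle c hc
          have hxm : x ≤ x * m ^ 1 := Nat.le_mul_of_pos_right x (by positivity)
          omega
        have hN := psi_count hm s hx hxd hK
        rw [htA, hi0]
        unfold dig
        simp only [Nat.lt_irrefl, if_false, pow_zero, Nat.div_one]
        rw [hN]
        simp
      · rw [if_neg (by omega)]
        symm
        rw [Multiset.count_eq_zero]
        intro hmem
        have h1 := hle _ hmem
        have hxm : x ≤ x * m ^ i := Nat.le_mul_of_pos_right x (by positivity)
        omega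

lemma comp2 {m j : ℕ} (hm : 2 ≤ m) {t : Multiset ℕ} (hpos : ∀ a ∈ t, 0 < a)
    (hreg : ∀ a ∈ t, ¬ m ∣ a) (hle : ∀ a ∈ t, a ≤ m * j) :
    psi m (phi m j t) = t := by
  ext b
  rcases Nat.eq_zero_or_pos b with hb | hb
  · subst hb
    rw [Multiset.count_eq_zero.mpr (fun h => by
        have := psi_pos hm (phi_pos hm hpos) 0 h; omega),
      Multiset.count_eq_zero.mpr (fun h => by have := hpos 0 h; omega)]
  · by_cases hbd : m ∣ b
    · rw [Multiset.count_eq_zero.mpr (fun h => psi_reg hm (phi_pos hm hpos) b h hbd),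
        Multiset.count_eq_zero.mpr (fun h => hreg b h hbd)]
    · by_cases hbj : b ≤ m * j
      · have hlt : m * j < b * m ^ (tA m j b + 1) := by
          have h1 : m * j / b < m ^ (tA m j b + 1) := Nat.lt_pow_succ_log_self (by omega) _
          have h2 := (Nat.div_lt_iff_lt_mul hb).mp h1
          calc m * j < m ^ (tA m j b + 1) * b := h2
          _ = b * m ^ (tA m j b + 1) := mul_comm _ _
        have hK : ∀ c ∈ phi m j t, c < b * m ^ (tA m j b + 1) := fun c hc =>
          lt_of_le_of_lt (phi_le hm hpos hle c hc) hlt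
        rw [psi_count hm _ hb hbd hK]
        have hterm : ∀ k ∈ Finset.range (tA m j b + 1),
            m ^ k * (phi m j t).count (b * m ^ k) = m ^ k * dig m (tA m j b) (t.count b) k := by
          intro k hk
          rw [phi_count hm hpos hreg hb hbd, if_pos (by have := Finset.mem_range.mp hk; omega)]
        rw [Finset.sum_congr rfl hterm, sum_dig hm]
      · rw [Multiset.count_eq_zero.mpr (fun h => by
            have := psi_le hm (phi_le hm hpos hle) b h; omega),
          Multiset.count_eq_zero.mpr (fun h => by have := hle b h; omega)]

/-! ### finiteness, max -/

lemma finite_aux (N : ℕ) (P : Multiset ℕ → Prop) :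
    Finite {s : Multiset ℕ // s.sum = N ∧ (∀ a ∈ s, 0 < a) ∧ P s} := by
  apply Finite.of_injective (β := Nat.Partition N)
    (fun s => ⟨s.1, fun hi => s.2.2.1 _ hi, s.2.1⟩)
  intro s t h
  exact Subtype.ext (congrArg Nat.Partition.parts h)

noncomputable def mx (s : Multiset ℕ) : ℕ := WithBot.unbotD 0 (s.toFinset.max)

lemma mx_eq_max' {s : Multiset ℕ} (hs : s ≠ 0) :
    mx s = s.toFinset.max' (Multiset.toFinset_nonempty.mpr hs) := by
  unfold mx
  rw [← Finset.coe_max' (Multiset.toFinset_nonempty.mpr hs)]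
  rfl

lemma mx_mem {s : Multiset ℕ} (hs : s ≠ 0) : mx s ∈ s := by
  rw [mx_eq_max' hs]
  exact Multiset.mem_toFinset.mp (Finset.max'_mem _ _)

lemma mx_le {s : Multiset ℕ} (hs : s ≠ 0) : ∀ b ∈ s, b ≤ mx s := by
  intro b hb
  rw [mx_eq_max' hs]
  exact Finset.le_max' _ b (Multiset.mem_toFinset.mpr hb)

lemma mx_unique {s : Multiset ℕ} {L : ℕ} (hL : L ∈ s) (hmax : ∀ b ∈ s, b ≤ L) :
    mx s = L := by
  have hs : s ≠ 0 := fun h => by simp [h] at hL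
  exact le_antisymm (hmax _ (mx_mem hs)) (mx_le hs L hL)

lemma sum_ne_zero {s : Multiset ℕ} {n : ℕ} (hn : 0 < n) (hsum : s.sum = n) : s ≠ 0 := by
  intro h
  rw [h] at hsum
  simp at hsum
  omega

lemma mem_le_sum {s : Multiset ℕ} {a : ℕ} (ha : a ∈ s) : a ≤ s.sum :=
  Multiset.single_le_sum (fun x _ => Nat.zero_le x) a ha

/-! ### the core equivalence -/

noncomputable def coreEquiv (m j N : ℕ) (hm : 2 ≤ m) :
    {s : Multiset ℕ // s.sum = N ∧ (∀ a ∈ s, 0 < a) ∧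
      ((∀ a ∈ s, a ≤ m * j) ∧ ∀ b ≤ j, s.count b < m)} ≃
    {t : Multiset ℕ // t.sum = N ∧ (∀ a ∈ t, 0 < a) ∧
      ((∀ a ∈ t, a ≤ m * j) ∧ ∀ a ∈ t, ¬ m ∣ a)} where
  toFun s := ⟨psi m s.1, by
    obtain ⟨hsum, hpos, hle, hcnt⟩ := s.2
    exact ⟨by rw [psi_sum, hsum], psi_pos hm hpos, psi_le hm hle, psi_reg hm hpos⟩⟩
  invFun t := ⟨phi m j t.1, by
    obtain ⟨hsum, hpos, hle, hreg⟩ := t.2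
    refine ⟨?_, phi_pos hm hpos, phi_le hm hpos hle, fun b hb => phi_mult hm hpos hreg b hb⟩
    have h1 : (psi m (phi m j t.1)).sum = (phi m j t.1).sum := psi_sum m _
    rw [comp2 hm hpos hreg hle] at h1
    rw [← h1, hsum]⟩
  left_inv s := Subtype.ext (comp1 hm s.2.2.1 s.2.2.2.1 s.2.2.2.2)
  right_inv t := Subtype.ext (comp2 hm t.2.2.1 t.2.2.2.2 t.2.2.2.1)

/-! ### Glaisher -/

lemma glaisher {m : ℕ} (hm : 2 ≤ m) (n : ℕ) :
    Nat.card {s : Multiset ℕ // s.sum = n ∧ (∀ a ∈ s, 0 < a) ∧ ∀ a, s.count a < m} =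
    Nat.card {s : Multiset ℕ // s.sum = n ∧ (∀ a ∈ s, 0 < a) ∧ ∀ a ∈ s, ¬ m ∣ a} := by
  have e1 : {s : Multiset ℕ // s.sum = n ∧ (∀ a ∈ s, 0 < a) ∧ ∀ a, s.count a < m} ≃
      {s : Multiset ℕ // s.sum = n ∧ (∀ a ∈ s, 0 < a) ∧
        ((∀ a ∈ s, a ≤ m * n) ∧ ∀ b ≤ n, s.count b < m)} := by
    apply Equiv.subtypeEquivRight
    intro s
    constructor
    · rintro ⟨hsum, hpos, hcnt⟩
      refine ⟨hsum, hpos, fun a ha => ?_, fun b _ => hcnt b⟩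
      have := mem_le_sum ha
      have : a ≤ n := by omega
      calc a ≤ n := this
      _ ≤ m * n := Nat.le_mul_of_pos_left n (by omega)
    · rintro ⟨hsum, hpos, hle, hcnt⟩
      refine ⟨hsum, hpos, fun a => ?_⟩
      by_cases h : a ≤ n
      · exact hcnt a h
      · rw [Multiset.count_eq_zero.mpr (fun hmem => h (by have := mem_le_sum hmem; omega))]
        omega
  have e2 : {s : Multiset ℕ // s.sum = n ∧ (∀ a ∈ s, 0 < a) ∧
        ((∀ a ∈ s, a ≤ m * n) ∧ ∀ a ∈ s, ¬ m ∣ a)} ≃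
      {s : Multiset ℕ // s.sum = n ∧ (∀ a ∈ s, 0 < a) ∧ ∀ a ∈ s, ¬ m ∣ a} := by
    apply Equiv.subtypeEquivRight
    intro s
    constructor
    · rintro ⟨hsum, hpos, _, hreg⟩
      exact ⟨hsum, hpos, hreg⟩
    · rintro ⟨hsum, hpos, hreg⟩
      refine ⟨hsum, hpos, fun a ha => ?_, hreg⟩
      have := mem_le_sum ha
      calc a ≤ n := by omega
      _ ≤ m * n := Nat.le_mul_of_pos_left n (by omega)
  exact Nat.card_congr ((e1.trans (coreEquiv m n n hm)).trans e2)

/-! ### split by residue of max -/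

abbrev Bt (m n k : ℕ) := {s : Multiset ℕ // s.sum = n ∧ (∀ a ∈ s, 0 < a) ∧
    (∀ a ∈ s, ¬ m ∣ a) ∧ ∃ L ∈ s, (∀ b ∈ s, b ≤ L) ∧ L % m = k}

lemma split {m n : ℕ} (hm : 2 ≤ m) (hn : 0 < n) :
    Nat.card {s : Multiset ℕ // s.sum = n ∧ (∀ a ∈ s, 0 < a) ∧ ∀ a ∈ s, ¬ m ∣ a} =
    ∑ k ∈ Finset.Icc 1 (m - 1), Nat.card (Bt m n k) := by
  classical
  haveI : Finite {s : Multiset ℕ // s.sum = n ∧ (∀ a ∈ s, 0 < a) ∧ ∀ a ∈ s, ¬ m ∣ a} :=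
    finite_aux n _
  haveI : Fintype {s : Multiset ℕ // s.sum = n ∧ (∀ a ∈ s, 0 < a) ∧ ∀ a ∈ s, ¬ m ∣ a} :=
    Fintype.ofFinite _
  have hmem : ∀ s : {s : Multiset ℕ // s.sum = n ∧ (∀ a ∈ s, 0 < a) ∧ ∀ a ∈ s, ¬ m ∣ a},
      mx s.1 % m ∈ Finset.Icc 1 (m-1) := by
    intro s
    obtain ⟨hsum, hpos, hreg⟩ := s.2
    have hne : s.1 ≠ 0 := sum_ne_zero hn hsum
    refine Finset.mem_Icc.mpr ⟨?_, ?_⟩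
    · exact Nat.pos_of_ne_zero (fun h0 => hreg _ (mx_mem hne) (Nat.dvd_of_mod_eq_zero h0))
    · have := Nat.mod_lt (mx s.1) (show 0 < m by omega)
      omega
  let f : {s : Multiset ℕ // s.sum = n ∧ (∀ a ∈ s, 0 < a) ∧ ∀ a ∈ s, ¬ m ∣ a} →
      ↥(Finset.Icc 1 (m-1)) := fun s => ⟨mx s.1 % m, hmem s⟩
  have key := Nat.card_congr (Equiv.sigmaFiberEquiv f)
  rw [← key, Nat.card_eq_fintype_card, Fintype.card_sigma]
  have fiber : ∀ k : ↥(Finset.Icc 1 (m-1)),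
      Fintype.card {s : {s : Multiset ℕ // s.sum = n ∧ (∀ a ∈ s, 0 < a) ∧ ∀ a ∈ s, ¬ m ∣ a} //
        f s = k} = Nat.card (Bt m n (k : ℕ)) := by
    intro k
    rw [← Nat.card_eq_fintype_card]
    apply Nat.card_congr
    have e1 : {s : {s : Multiset ℕ // s.sum = n ∧ (∀ a ∈ s, 0 < a) ∧ ∀ a ∈ s, ¬ m ∣ a} //
        f s = k} ≃ {s : {s : Multiset ℕ // s.sum = n ∧ (∀ a ∈ s, 0 < a) ∧ ∀ a ∈ s, ¬ m ∣ a} //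
        mx s.1 % m = (k : ℕ)} :=
      Equiv.subtypeEquivRight (fun s => by
        constructor
        · intro h
          exact congrArg Subtype.val h
        · intro h
          exact Subtype.ext h)
    have e2 : {s : {s : Multiset ℕ // s.sum = n ∧ (∀ a ∈ s, 0 < a) ∧ ∀ a ∈ s, ¬ m ∣ a} //
        mx s.1 % m = (k : ℕ)} ≃
        {s : Multiset ℕ // (s.sum = n ∧ (∀ a ∈ s, 0 < a) ∧ ∀ a ∈ s, ¬ m ∣ a) ∧
          mx s % m = (k : ℕ)} :=
      Equiv.subtypeSubtypeEquivSubtypeInter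
        (fun s : Multiset ℕ => s.sum = n ∧ (∀ a ∈ s, 0 < a) ∧ ∀ a ∈ s, ¬ m ∣ a)
        (fun s : Multiset ℕ => mx s % m = (k : ℕ))
    have e3 : {s : Multiset ℕ // (s.sum = n ∧ (∀ a ∈ s, 0 < a) ∧ ∀ a ∈ s, ¬ m ∣ a) ∧
          mx s % m = (k : ℕ)} ≃ Bt m n (k : ℕ) := by
      apply Equiv.subtypeEquivRight
      intro s
      constructor
      · rintro ⟨⟨hsum, hpos, hreg⟩, hmx⟩
        have hne : s ≠ 0 := sum_ne_zero hn hsum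
        exact ⟨hsum, hpos, hreg, mx s, mx_mem hne, mx_le hne, hmx⟩
      · rintro ⟨hsum, hpos, hreg, L, hL, hLb, hLk⟩
        exact ⟨⟨hsum, hpos, hreg⟩, by rw [mx_unique hL hLb]; exact hLk⟩
    exact (e1.trans e2).trans e3
  rw [Finset.sum_congr rfl (fun k _ => fiber k)]
  exact Finset.sum_coe_sort (Finset.Icc 1 (m-1)) (fun k => Nat.card (Bt m n k))

/-! ### Lin-Zhang -/

abbrev Ct (m n : ℕ) := {s : Multiset ℕ // s.sum = n + 1 ∧ (∀ a ∈ s, 0 < a) ∧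
    ∃ j : ℕ, m * j ∈ s ∧ (∀ b ∈ s, b ≤ m * j) ∧ ∀ b ∈ s, b ≤ j → s.count b < m}

abbrev BJ (m n j : ℕ) := {s : Multiset ℕ // s.sum = n ∧ (∀ a ∈ s, 0 < a) ∧
    ((∀ a ∈ s, ¬ m ∣ a) ∧ (m*j-1) ∈ s ∧ ∀ b ∈ s, b ≤ m*j-1)}

abbrev CJ (m n j : ℕ) := {u : Multiset ℕ // u.sum = n+1 ∧ (∀ a ∈ u, 0 < a) ∧
    (m*j ∈ u ∧ (∀ b ∈ u, b ≤ m*j) ∧ ∀ b ≤ j, u.count b < m)}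

noncomputable def lzEquiv (m n j : ℕ) (hm : 2 ≤ m) (hj : 1 ≤ j) : CJ m n j ≃ BJ m n j where
  toFun u := ⟨(m*j-1) ::ₘ psi m (u.1.erase (m*j)), by
    obtain ⟨hsum, hpos, hmem, hle, hcnt⟩ := u.2
    have hpos' : ∀ a ∈ u.1.erase (m*j), 0 < a := fun a ha => hpos a (Multiset.mem_of_mem_erase ha)
    have hle' : ∀ a ∈ u.1.erase (m*j), a ≤ m*j := fun a ha => hle a (Multiset.mem_of_mem_erase ha)
    have hsum' : m*j + (u.1.erase (m*j)).sum = n + 1 := by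
      have := congrArg Multiset.sum (Multiset.cons_erase hmem)
      rw [Multiset.sum_cons] at this
      rw [this, hsum]
    have hmj : 2 ≤ m * j := le_trans hm (Nat.le_mul_of_pos_right m (by omega))
    refine ⟨?_, ?_, ?_, ?_, ?_⟩
    · rw [Multiset.sum_cons, psi_sum]
      omega
    · intro a ha
      rcases Multiset.mem_cons.mp ha with h | h
      · omega
      · exact psi_pos hm hpos' a h
    · intro a ha
      rcases Multiset.mem_cons.mp ha with h | h
      · subst h
        intro hdvd
        have h1 : m ∣ (m*j - (m*j-1)) := Nat.dvd_sub (dvd_mul_right m j) hdvd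
        have h2 : m*j - (m*j-1) = 1 := by omega
        rw [h2] at h1
        have := Nat.le_of_dvd (by omega) h1
        omega
      · exact psi_reg hm hpos' a h
    · exact Multiset.mem_cons_self _ _
    · intro b hb
      rcases Multiset.mem_cons.mp hb with h | h
      · omega
      · have h1 := psi_le hm hle' b h
        have h2 := psi_reg hm hpos' b h
        have h3 : b ≠ m * j := fun hh => h2 (hh ▸ dvd_mul_right m j)
        omega⟩
  invFun s := ⟨(m*j) ::ₘ phi m j (s.1.erase (m*j-1)), by
    obtain ⟨hsum, hpos, hreg, hmemB, hleB⟩ := s.2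
    have hpos' : ∀ a ∈ s.1.erase (m*j-1), 0 < a := fun a ha => hpos a (Multiset.mem_of_mem_erase ha)
    have hreg' : ∀ a ∈ s.1.erase (m*j-1), ¬ m ∣ a := fun a ha => hreg a (Multiset.mem_of_mem_erase ha)
    have hle' : ∀ a ∈ s.1.erase (m*j-1), a ≤ m*j := fun a ha =>
      le_trans (hleB a (Multiset.mem_of_mem_erase ha)) (by omega)
    have hmj : 2 ≤ m * j := le_trans hm (Nat.le_mul_of_pos_right m (by omega))
    have hsum' : (m*j-1) + (s.1.erase (m*j-1)).sum = n := by
      have := congrArg Multiset.sum (Multiset.cons_erase hmemB)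
      rw [Multiset.sum_cons] at this
      rw [this, hsum]
    have hphisum : (phi m j (s.1.erase (m*j-1))).sum = (s.1.erase (m*j-1)).sum := by
      have h1 := psi_sum m (phi m j (s.1.erase (m*j-1)))
      rw [comp2 hm hpos' hreg' hle'] at h1
      omega
    refine ⟨?_, ?_, ?_, ?_, ?_⟩
    · rw [Multiset.sum_cons, hphisum]
      omega
    · intro a ha
      rcases Multiset.mem_cons.mp ha with h | h
      · omega
      · exact phi_pos hm hpos' a h
    · exact Multiset.mem_cons_self _ _
    · intro b hb
      rcases Multiset.mem_cons.mp hb with h | h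
      · omega
      · exact phi_le hm hpos' hle' b h
    · intro b hb
      have hjlt : j < m*j := by
        calc j = 1*j := (one_mul j).symm
        _ < m*j := (Nat.mul_lt_mul_right (show 0 < j by omega)).mpr (by omega)
      have hbne : b ≠ m*j := by omega
      rw [Multiset.count_cons_of_ne hbne]
      exact phi_mult hm hpos' hreg' b hb⟩
  left_inv u := by
    apply Subtype.ext
    obtain ⟨hsum, hpos, hmem, hle, hcnt⟩ := u.2
    have hpos' : ∀ a ∈ u.1.erase (m*j), 0 < a := fun a ha => hpos a (Multiset.mem_of_mem_erase ha)
    have hle' : ∀ a ∈ u.1.erase (m*j), a ≤ m*j := fun a ha => hle a (Multiset.mem_of_mem_erase ha)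
    have hcnt' : ∀ b ≤ j, (u.1.erase (m*j)).count b < m := fun b hb =>
      lt_of_le_of_lt (Multiset.count_le_of_le b (Multiset.erase_le _ _)) (hcnt b hb)
    show (m*j) ::ₘ phi m j (((m*j-1) ::ₘ psi m (u.1.erase (m*j))).erase (m*j-1)) = u.1
    rw [Multiset.erase_cons_head, comp1 hm hpos' hle' hcnt', Multiset.cons_erase hmem]
  right_inv s := by
    apply Subtype.ext
    obtain ⟨hsum, hpos, hreg, hmemB, hleB⟩ := s.2
    have hpos' : ∀ a ∈ s.1.erase (m*j-1), 0 < a := fun a ha => hpos a (Multiset.mem_of_mem_erase ha)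
    have hreg' : ∀ a ∈ s.1.erase (m*j-1), ¬ m ∣ a := fun a ha => hreg a (Multiset.mem_of_mem_erase ha)
    have hle' : ∀ a ∈ s.1.erase (m*j-1), a ≤ m*j := fun a ha =>
      le_trans (hleB a (Multiset.mem_of_mem_erase ha)) (by omega)
    show (m*j-1) ::ₘ psi m (((m*j) ::ₘ phi m j (s.1.erase (m*j-1))).erase (m*j)) = s.1
    rw [Multiset.erase_cons_head, comp2 hm hpos' hreg' hle', Multiset.cons_erase hmemB]

lemma lzB {m n : ℕ} (hm : 2 ≤ m) (hn : 0 < n) :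
    Nat.card (Bt m n (m-1)) = ∑ j ∈ Finset.Icc 1 n, Nat.card (BJ m n j) := by
  classical
  haveI : Finite (Bt m n (m-1)) := finite_aux n _
  haveI : Fintype (Bt m n (m-1)) := Fintype.ofFinite _
  have hmem : ∀ s : Bt m n (m-1), mx s.1 / m + 1 ∈ Finset.Icc 1 n := by
    intro t
    obtain ⟨hsum, hpos, hreg, L, hL, hLb, hLk⟩ := t.2
    have hmx : mx t.1 = L := mx_unique hL hLb
    have hLn : L ≤ n := by have := mem_le_sum hL; omega
    have hsum' : t.1.sum = n := hsum
    have hdm := Nat.div_add_mod L m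
    have h2j : 2 * (L / m + 1) ≤ m * (L / m + 1) :=
      Nat.mul_le_mul_right _ hm
    refine Finset.mem_Icc.mpr ⟨Nat.le_add_left 1 _, ?_⟩
    rw [hmx]
    -- m * (L/m + 1) = L + 1 ≤ n + 1
    have hmj : m * (L / m + 1) = L + 1 := by
      rw [Nat.mul_add, mul_one]
      omega
    omega
  let f : Bt m n (m-1) → ↥(Finset.Icc 1 n) := fun s => ⟨mx s.1 / m + 1, hmem s⟩
  have key := Nat.card_congr (Equiv.sigmaFiberEquiv f)
  rw [← key, Nat.card_eq_fintype_card, Fintype.card_sigma]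
  have fiber : ∀ k : ↥(Finset.Icc 1 n),
      Fintype.card {s : Bt m n (m-1) // f s = k} = Nat.card (BJ m n (k : ℕ)) := by
    intro k
    have hk1 : 1 ≤ (k : ℕ) := (Finset.mem_Icc.mp k.2).1
    rw [← Nat.card_eq_fintype_card]
    apply Nat.card_congr
    have e1 : {s : Bt m n (m-1) // f s = k} ≃
        {s : Bt m n (m-1) // mx s.1 / m + 1 = (k : ℕ)} :=
      Equiv.subtypeEquivRight (fun s => by
        constructor
        · intro h; exact congrArg Subtype.val h
        · intro h; exact Subtype.ext h)
    have e2 : {s : Bt m n (m-1) // mx s.1 / m + 1 = (k : ℕ)} ≃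
        {s : Multiset ℕ // (s.sum = n ∧ (∀ a ∈ s, 0 < a) ∧
          (∀ a ∈ s, ¬ m ∣ a) ∧ ∃ L ∈ s, (∀ b ∈ s, b ≤ L) ∧ L % m = m-1) ∧
          mx s / m + 1 = (k : ℕ)} :=
      Equiv.subtypeSubtypeEquivSubtypeInter
        (fun s : Multiset ℕ => s.sum = n ∧ (∀ a ∈ s, 0 < a) ∧
          (∀ a ∈ s, ¬ m ∣ a) ∧ ∃ L ∈ s, (∀ b ∈ s, b ≤ L) ∧ L % m = m-1)
        (fun s : Multiset ℕ => mx s / m + 1 = (k : ℕ))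
    have e3 : {s : Multiset ℕ // (s.sum = n ∧ (∀ a ∈ s, 0 < a) ∧
          (∀ a ∈ s, ¬ m ∣ a) ∧ ∃ L ∈ s, (∀ b ∈ s, b ≤ L) ∧ L % m = m-1) ∧
          mx s / m + 1 = (k : ℕ)} ≃ BJ m n (k : ℕ) := by
      apply Equiv.subtypeEquivRight
      intro s
      constructor
      · rintro ⟨⟨hsum, hpos, hreg, L, hL, hLb, hLk⟩, hfk⟩
        have hmx : mx s = L := mx_unique hL hLb
        rw [hmx] at hfk
        have hdm := Nat.div_add_mod L m
        have hLeq : L = m * (k : ℕ) - 1 := by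
          have h1 : m * (L / m) = m * ((k:ℕ) - 1) := by rw [show L / m = (k:ℕ) - 1 by omega]
          have h2 : m * (k:ℕ) = m * (((k:ℕ)-1)+1) := by rw [Nat.sub_add_cancel hk1]
          rw [Nat.mul_add, mul_one] at h2
          omega
        refine ⟨hsum, hpos, hreg, by rw [← hLeq]; exact hL, by rw [← hLeq]; exact hLb⟩
      · rintro ⟨hsum, hpos, hreg, hmem', hle'⟩
        have hmj : 2 ≤ m * (k:ℕ) := le_trans hm (Nat.le_mul_of_pos_right m (by omega))
        have hmx : mx s = m * (k:ℕ) - 1 := mx_unique hmem' hle'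
        have hsplit : m * (k:ℕ) - 1 = (m-1) + m * ((k:ℕ) - 1) := by
          have : m * (k:ℕ) = m * (((k:ℕ) - 1) + 1) := by rw [Nat.sub_add_cancel hk1]
          rw [this, Nat.mul_add, mul_one]
          omega
        have hmod : (m * (k:ℕ) - 1) % m = m - 1 := by
          rw [hsplit, Nat.add_mul_mod_self_left, Nat.mod_eq_of_lt (by omega)]
        have hdiv : (m * (k:ℕ) - 1) / m + 1 = (k:ℕ) := by
          rw [hsplit, Nat.add_mul_div_left _ _ (show 0 < m by omega),
            Nat.div_eq_of_lt (by omega)]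
          omega
        exact ⟨⟨hsum, hpos, hreg, m * (k:ℕ) - 1, hmem', hle', hmod⟩, by rw [hmx]; exact hdiv⟩
    exact (e1.trans e2).trans e3
  rw [Finset.sum_congr rfl (fun k _ => fiber k)]
  exact Finset.sum_coe_sort (Finset.Icc 1 n) (fun j => Nat.card (BJ m n j))

lemma lzC {m n : ℕ} (hm : 2 ≤ m) (hn : 0 < n) :
    Nat.card (Ct m n) = ∑ j ∈ Finset.Icc 1 n, Nat.card (CJ m n j) := by
  classical
  haveI : Finite (Ct m n) := finite_aux (n+1) _
  haveI : Fintype (Ct m n) := Fintype.ofFinite _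
  have hj_facts : ∀ (u : Multiset ℕ), u.sum = n + 1 → (∀ a ∈ u, 0 < a) →
      ∀ j : ℕ, m * j ∈ u → (∀ b ∈ u, b ≤ m * j) → (1 ≤ j ∧ j ≤ n ∧ mx u = m * j) := by
    intro u hsum hpos j hjmem hjle
    have hmx : mx u = m * j := mx_unique hjmem hjle
    have hpos' : 0 < m * j := hpos _ hjmem
    have hj1 : 1 ≤ j := by
      rcases Nat.eq_zero_or_pos j with h | h
      · subst h; simp at hpos'
      · omega
    have hle : m * j ≤ n + 1 := by have := mem_le_sum hjmem; omega
    have h2j : 2 * j ≤ m * j := Nat.mul_le_mul_right _ hm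
    exact ⟨hj1, by omega, hmx⟩
  have hmem : ∀ u : Ct m n, mx u.1 / m ∈ Finset.Icc 1 n := by
    intro t
    obtain ⟨hsum, hpos, j, hjmem, hjle, hjcnt⟩ := t.2
    obtain ⟨hj1, hjn, hmx⟩ := hj_facts t.1 hsum hpos j hjmem hjle
    rw [hmx, Nat.mul_div_cancel_left j (show 0 < m by omega)]
    exact Finset.mem_Icc.mpr ⟨hj1, hjn⟩
  let f : Ct m n → ↥(Finset.Icc 1 n) := fun u => ⟨mx u.1 / m, hmem u⟩
  have key := Nat.card_congr (Equiv.sigmaFiberEquiv f)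
  rw [← key, Nat.card_eq_fintype_card, Fintype.card_sigma]
  have fiber : ∀ k : ↥(Finset.Icc 1 n),
      Fintype.card {u : Ct m n // f u = k} = Nat.card (CJ m n (k : ℕ)) := by
    intro k
    have hk1 : 1 ≤ (k : ℕ) := (Finset.mem_Icc.mp k.2).1
    rw [← Nat.card_eq_fintype_card]
    apply Nat.card_congr
    have e1 : {u : Ct m n // f u = k} ≃ {u : Ct m n // mx u.1 / m = (k : ℕ)} :=
      Equiv.subtypeEquivRight (fun u => by
        constructor
        · intro h; exact congrArg Subtype.val h
        · intro h; exact Subtype.ext h)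
    have e2 : {u : Ct m n // mx u.1 / m = (k : ℕ)} ≃
        {u : Multiset ℕ // (u.sum = n + 1 ∧ (∀ a ∈ u, 0 < a) ∧
          ∃ j : ℕ, m * j ∈ u ∧ (∀ b ∈ u, b ≤ m * j) ∧ ∀ b ∈ u, b ≤ j → u.count b < m) ∧
          mx u / m = (k : ℕ)} :=
      Equiv.subtypeSubtypeEquivSubtypeInter
        (fun u : Multiset ℕ => u.sum = n + 1 ∧ (∀ a ∈ u, 0 < a) ∧
          ∃ j : ℕ, m * j ∈ u ∧ (∀ b ∈ u, b ≤ m * j) ∧ ∀ b ∈ u, b ≤ j → u.count b < m)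
        (fun u : Multiset ℕ => mx u / m = (k : ℕ))
    have e3 : {u : Multiset ℕ // (u.sum = n + 1 ∧ (∀ a ∈ u, 0 < a) ∧
          ∃ j : ℕ, m * j ∈ u ∧ (∀ b ∈ u, b ≤ m * j) ∧ ∀ b ∈ u, b ≤ j → u.count b < m) ∧
          mx u / m = (k : ℕ)} ≃ CJ m n (k : ℕ) := by
      apply Equiv.subtypeEquivRight
      intro u
      constructor
      · rintro ⟨⟨hsum, hpos, j, hjmem, hjle, hjcnt⟩, hfk⟩
        obtain ⟨hj1, hjn, hmx⟩ := hj_facts u hsum hpos j hjmem hjle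
        have hjk : j = (k : ℕ) := by
          rw [hmx, Nat.mul_div_cancel_left j (show 0 < m by omega)] at hfk
          exact hfk
        subst hjk
        refine ⟨hsum, hpos, hjmem, hjle, ?_⟩
        intro b hb
        by_cases hbu : b ∈ u
        · exact hjcnt b hbu hb
        · rw [Multiset.count_eq_zero.mpr hbu]; omega
      · rintro ⟨hsum, hpos, hkmem, hkle, hkcnt⟩
        obtain ⟨hj1, hjn, hmx⟩ := hj_facts u hsum hpos (k : ℕ) hkmem hkle
        refine ⟨⟨hsum, hpos, (k : ℕ), hkmem, hkle, fun b _ hb => hkcnt b hb⟩, ?_⟩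
        rw [hmx, Nat.mul_div_cancel_left _ (show 0 < m by omega)]
    exact (e1.trans e2).trans e3
  rw [Finset.sum_congr rfl (fun k _ => fiber k)]
  exact Finset.sum_coe_sort (Finset.Icc 1 n) (fun j => Nat.card (CJ m n j))

lemma lz {m n : ℕ} (hm : 2 ≤ m) (hn : 0 < n) :
    Nat.card (Bt m n (m-1)) = Nat.card (Ct m n) := by
  rw [lzB hm hn, lzC hm hn]
  apply Finset.sum_congr rfl
  intro j hj
  haveI : Finite (BJ m n j) := finite_aux n _
  haveI : Finite (CJ m n j) := finite_aux (n+1) _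
  exact (Nat.card_congr (lzEquiv m n j hm (Finset.mem_Icc.mp hj).1)).symm
end GLZ

/-- Theorem 1.8: for `m ≥ 2` and `n ≥ 1`,
`Aₘ(n) = ∑_{k=1}^{m-2} Bₘ⁽ᵏ⁾(n) + Cₘ(n+1)`, where `Aₘ(n)` counts partitions of `n`
with each part occurring fewer than `m` times, `Bₘ⁽ᵏ⁾(n)` counts partitions of `n` into
parts not divisible by `m` with largest part `≡ k (mod m)`, and `Cₘ(n+1)` counts
partitions of `n+1` with largest part `m*j` and all parts `≤ j` occurring fewer than
`m` times. -/
theorem glaisher_lin_zhang_combined (m : ℕ) (hm : 2 ≤ m) (n : ℕ) (hn : 0 < n) :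
    Nat.card {s : Multiset ℕ // s.sum = n ∧ (∀ a ∈ s, 0 < a) ∧ ∀ a, s.count a < m} =
    (∑ k ∈ Finset.Icc 1 (m - 2),
      Nat.card {s : Multiset ℕ // s.sum = n ∧ (∀ a ∈ s, 0 < a) ∧ (∀ a ∈ s, ¬ m ∣ a) ∧
        ∃ L ∈ s, (∀ b ∈ s, b ≤ L) ∧ L % m = k}) +
    Nat.card {s : Multiset ℕ // s.sum = n + 1 ∧ (∀ a ∈ s, 0 < a) ∧
      ∃ j : ℕ, m * j ∈ s ∧ (∀ b ∈ s, b ≤ m * j) ∧ ∀ b ∈ s, b ≤ j → s.count b < m} := by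
  have h1 := GLZ.glaisher hm n
  have h2 := GLZ.split hm hn
  have h3 := GLZ.lz hm hn
  have hsplit : ∑ k ∈ Finset.Icc 1 (m-1), Nat.card (GLZ.Bt m n k)
      = (∑ k ∈ Finset.Icc 1 (m-2), Nat.card (GLZ.Bt m n k)) + Nat.card (GLZ.Bt m n (m-1)) := by
    have hm1 : m - 1 = (m - 2) + 1 := by omega
    rw [hm1, Finset.sum_Icc_succ_top (by omega : 1 ≤ (m-2)+1)]
  rw [h1, h2, hsplit, h3]
end
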